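/- arXiv:1601.01041 — 8 statements merged into one kernel-verified Lean document; each statement's English description precedes it below -/
import Mathlib

section
/- For two maximal forests F1, F2 of a graph G and a natural number l, if |E(F1) \ E(F2)| = l then |E(F2) \ E(F1)| = l. -/
open Cardinal

variable {V : Type*}

/-- `F` is a maximal forest of `G`: an acyclic subgraph of `G` maximal among
acyclic subgraphs of `G` under inclusion. -/
def IsMaximalForest (G F : SimpleGraph V) : Prop :=
  F ≤ G ∧ F.IsAcyclic ∧ ∀ F' : SimpleGraph V, F' ≤ G → F'.IsAcyclic → F ≤ F' → F' = F

/-- The forest graph of `G`: vertices are the maximal forests of `G`,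
two adjacent iff they differ by exactly one edge. -/
def forestGraph (G : SimpleGraph V) :
    SimpleGraph {F : SimpleGraph V // IsMaximalForest G F} where
  Adj F₁ F₂ := (F₁.1.edgeSet \ F₂.1.edgeSet).encard = 1 ∧
               (F₂.1.edgeSet \ F₁.1.edgeSet).encard = 1
  symm := ⟨fun F₁ F₂ h => ⟨h.2, h.1⟩⟩
  loopless := ⟨fun F h => by simp at h⟩

/-- The set of cycles of `G`, each cycle identified with its edge set. -/
def cycleSet (G : SimpleGraph V) : Set (Set (Sym2 V)) :=
  {s | ∃ (v : V) (c : G.Walk v v), c.IsCycle ∧ s = {e | e ∈ c.edges}}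

open SimpleGraph in
/-- Reachability transfers along a pointwise adjacency-to-reachability map. -/
lemma reach_of_adj_reach {H H' : SimpleGraph V}
    (h : ∀ ⦃a b : V⦄, H.Adj a b → H'.Reachable a b) {x y : V}
    (hxy : H.Reachable x y) : H'.Reachable x y := by
  obtain ⟨p⟩ := hxy
  induction p with
  | nil => exact Reachable.refl _
  | cons ha _ ih => exact (h ha).trans ih

open SimpleGraph in
/-- Characterization of maximal forests. -/
lemma isMaximalForest_iff {G F : SimpleGraph V} :
    IsMaximalForest G F ↔
      F ≤ G ∧ F.IsAcyclic ∧ ∀ a b : V, G.Adj a b → F.Reachable a b := by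
  constructor
  · rintro ⟨hle, hac, hmax⟩
    refine ⟨hle, hac, fun a b hab => ?_⟩
    by_contra hr
    set F' : SimpleGraph V := F ⊔ fromEdgeSet {s(a, b)} with hF'
    have hFadj : ¬F.Adj a b := fun h => hr h.reachable
    have hF'le : F' ≤ G := by
      refine sup_le hle ?_
      intro x y hxy
      rw [fromEdgeSet_adj, Set.mem_singleton_iff, Sym2.eq_iff] at hxy
      rcases hxy.1 with ⟨rfl, rfl⟩ | ⟨rfl, rfl⟩
      · exact hab
      · exact hab.symm
    have hF'ac : F'.IsAcyclic := by
      intro w c hc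
      by_cases hf : s(a, b) ∈ c.edges
      · have := adj_and_reachable_delete_edges_iff_exists_cycle.mpr ⟨w, c, hc, hf⟩
        refine hr (this.2.mono ?_)
        intro x y hxy
        rw [deleteEdges_adj, sup_adj] at hxy
        rcases hxy.1 with h' | h'
        · exact h'
        · exact absurd ((fromEdgeSet_adj _).mp h').1 hxy.2
      · have hsub : ∀ e ∈ c.edges, e ∈ F.edgeSet := by
          intro e hec
          have := c.edges_subset_edgeSet hec
          rw [hF', edgeSet_sup, edgeSet_fromEdgeSet] at this
          rcases this with h' | h'
          · exact h'
          · exact absurd (Set.mem_singleton_iff.mp h'.1 ▸ hec) hf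
        exact hac _ (hc.transfer hsub)
    have : F' = F := hmax F' hF'le hF'ac le_sup_left
    have : F'.Adj a b := (le_sup_right : fromEdgeSet {s(a,b)} ≤ F') ((fromEdgeSet_adj _).mpr ⟨rfl, hab.ne⟩)
    rw [‹F' = F›] at this
    exact hFadj this
  · rintro ⟨hle, hac, hreach⟩
    refine ⟨hle, hac, fun F' hF'G hF'ac hFF' => ?_⟩
    refine le_antisymm (fun a b hab => ?_) hFF'
    classical
    by_contra hnF
    obtain ⟨w⟩ := hreach a b (hF'G hab)
    let p : F.Path a b := w.toPath
    let q : F'.Walk a b := p.1.mapLe hFF'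
    have hq : q.IsPath := p.2.mapLe _
    have hedges : q.edges = p.1.edges := by
      simp [q, Walk.mapLe, Walk.edges_map, Sym2.map_id', List.map_id'']
    have hmem : s(b, a) ∉ q.edges := by
      rw [hedges]
      intro hm
      have := p.1.edges_subset_edgeSet hm
      rw [mem_edgeSet] at this
      exact hnF this.symm
    exact hF'ac _ (SimpleGraph.Path.cons_isCycle ⟨q, hq⟩ hab.symm hmem)

open SimpleGraph in
/-- Walking across a `D`-component boundary crosses along some edge. -/
lemma exists_crossing {H D : SimpleGraph V} {u : V} {x y : V} (p : H.Walk x y) :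
    D.Reachable u x → ¬D.Reachable u y →
    ∃ a b : V, H.Adj a b ∧ H.Reachable x a ∧ D.Reachable u a ∧ ¬D.Reachable u b := by
  induction p with
  | nil => exact fun hx hy => absurd hx hy
  | @cons x c y ha q ih =>
    intro hx hy
    by_cases hc : D.Reachable u c
    · obtain ⟨a, b, h1, h2, h3, h4⟩ := ih hc hy
      exact ⟨a, b, h1, ha.reachable.trans h2, h3, h4⟩
    · exact ⟨x, c, ha, Reachable.refl x, hx, hc⟩

open SimpleGraph in
/-- Splitting reachability after removing a single edge. -/
lemma reach_split {D F : SimpleGraph V} {u v : V}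
    (h : ∀ ⦃a b : V⦄, F.Adj a b → D.Adj a b ∨ s(a, b) = s(u, v)) {x y : V}
    (hxy : F.Reachable x y) :
    D.Reachable x y ∨ (D.Reachable x u ∧ D.Reachable v y) ∨
      (D.Reachable x v ∧ D.Reachable u y) := by
  obtain ⟨p⟩ := hxy
  induction p with
  | nil => exact Or.inl (Reachable.refl _)
  | @cons x c y ha q ih =>
    rcases h ha with hD | hE
    · rcases ih with h' | ⟨h1, h2⟩ | ⟨h1, h2⟩
      · exact Or.inl (hD.reachable.trans h')
      · exact Or.inr (Or.inl ⟨hD.reachable.trans h1, h2⟩)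
      · exact Or.inr (Or.inr ⟨hD.reachable.trans h1, h2⟩)
    · rw [Sym2.eq_iff] at hE
      rcases hE with ⟨rfl, rfl⟩ | ⟨rfl, rfl⟩
      · rcases ih with h' | ⟨h1, h2⟩ | ⟨h1, h2⟩
        · exact Or.inr (Or.inl ⟨Reachable.refl _, h'⟩)
        · exact Or.inr (Or.inl ⟨Reachable.refl _, h2⟩)
        · exact Or.inl h2
      · rcases ih with h' | ⟨h1, h2⟩ | ⟨h1, h2⟩
        · exact Or.inr (Or.inr ⟨Reachable.refl _, h'⟩)
        · exact Or.inl h2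
        · exact Or.inr (Or.inr ⟨Reachable.refl _, h2⟩)

open SimpleGraph in
/-- The exchange property for maximal forests. -/
lemma maximalForest_exchange {G F₁ F₂ : SimpleGraph V}
    (h₁ : IsMaximalForest G F₁) (h₂ : IsMaximalForest G F₂) {e : Sym2 V}
    (he : e ∈ F₁.edgeSet \ F₂.edgeSet) :
    ∃ f ∈ F₂.edgeSet \ F₁.edgeSet, ∃ F : SimpleGraph V,
      IsMaximalForest G F ∧ F.edgeSet = insert f (F₁.edgeSet \ {e}) := by
  obtain ⟨hle₁, hac₁, hG1⟩ := isMaximalForest_iff.mp h₁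
  obtain ⟨hle₂, hac₂, hG2⟩ := isMaximalForest_iff.mp h₂
  induction e with
  | _ u v =>
    have huv : F₁.Adj u v := he.1
    set D : SimpleGraph V := F₁ \ fromEdgeSet {s(u, v)} with hD
    have hDle : D ≤ F₁ := sdiff_le
    have hDuv : ¬D.Reachable u v := by
      intro hr
      obtain ⟨w, c, hc, -⟩ :=
        adj_and_reachable_delete_edges_iff_exists_cycle.mp ⟨huv, hr⟩
      exact hac₁ _ hc
    have hsplit : ∀ ⦃a b : V⦄, F₁.Adj a b → D.Adj a b ∨ s(a, b) = s(u, v) := by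
      intro a b hab
      by_cases hE : s(a, b) = s(u, v)
      · exact Or.inr hE
      · exact Or.inl (by rw [hD, sdiff_adj, fromEdgeSet_adj]; exact ⟨hab, fun h' => hE h'.1⟩)
    obtain ⟨p⟩ := hG2 u v (hle₁ huv)
    obtain ⟨a, b, hab, hF2ua, hDua, hDub⟩ :=
      exists_crossing p (Reachable.refl u) hDuv
    have hfF₂ : s(a, b) ∈ F₂.edgeSet := hab
    have hfF₁ : s(a, b) ∉ F₁.edgeSet := by
      intro hf
      rcases hsplit hf with hDab | hEab
      · exact hDub (hDua.trans hDab.reachable)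
      · exact he.2 (hEab ▸ hfF₂)
    have hF1ub : F₁.Reachable u b :=
      reach_of_adj_reach (fun c d h => hG1 c d h)
        ((hF2ua.trans hab.reachable).mono hle₂)
    have hDvb : D.Reachable v b := by
      rcases reach_split hsplit hF1ub with h' | ⟨h1, h2⟩ | ⟨h1, h2⟩
      · exact absurd h' hDub
      · exact h2
      · exact absurd h1 hDuv
    set F : SimpleGraph V := D ⊔ fromEdgeSet {s(a, b)} with hF
    have hFab : F.Adj a b := (le_sup_right : fromEdgeSet {s(a,b)} ≤ F) ((fromEdgeSet_adj _).mpr ⟨rfl, hab.ne⟩)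
    have hDleF : D ≤ F := le_sup_left
    have hFuv : F.Reachable u v :=
      ((hDua.mono hDleF).trans hFab.reachable).trans ((hDvb.mono hDleF)).symm
    have hE : F.edgeSet = insert s(a, b) (F₁.edgeSet \ {s(u, v)}) := by
      rw [hF, edgeSet_sup, hD, edgeSet_sdiff, edgeSet_fromEdgeSet, edgeSet_fromEdgeSet]
      ext f
      simp only [Set.mem_union, Set.mem_diff, Set.mem_singleton_iff, Set.mem_setOf_eq,
        Set.mem_insert_iff]
      constructor
      · rintro (⟨h1, h2⟩ | ⟨h1, -⟩)
        · exact Or.inr ⟨h1, fun hd => h2 ⟨hd, by simp [hd, Sym2.mk_isDiag_iff, huv.ne]⟩⟩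
        · exact Or.inl h1
      · rintro (rfl | ⟨h1, h2⟩)
        · exact Or.inr ⟨rfl, by simp [Sym2.mk_isDiag_iff, hab.ne]⟩
        · exact Or.inl ⟨h1, fun hd => h2 hd.1⟩
    have hFle : F ≤ G := by
      refine sup_le (hDle.trans hle₁) ?_
      intro x y hxy
      rw [fromEdgeSet_adj, Set.mem_singleton_iff, Sym2.eq_iff] at hxy
      rcases hxy.1 with ⟨rfl, rfl⟩ | ⟨rfl, rfl⟩
      · exact hle₂ hab
      · exact hle₂ hab.symm
    have hFac : F.IsAcyclic := by
      intro w c hc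
      by_cases hf : s(a, b) ∈ c.edges
      · have h' := adj_and_reachable_delete_edges_iff_exists_cycle.mpr ⟨w, c, hc, hf⟩
        have hDr : D.Reachable a b := by
          refine h'.2.mono ?_
          intro x y hxy
          rw [deleteEdges_adj, hF, sup_adj] at hxy
          rcases hxy.1 with h'' | h''
          · exact h''
          · exact absurd ((fromEdgeSet_adj _).mp h'').1 hxy.2
        exact hDub (hDua.trans hDr)
      · have hsub : ∀ e' ∈ c.edges, e' ∈ F₁.edgeSet := by
          intro e' hec
          have hm := c.edges_subset_edgeSet hec
          rw [hE] at hm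
          rcases hm with rfl | hm
          · exact absurd hec hf
          · exact hm.1
        exact hac₁ _ (hc.transfer hsub)
    refine ⟨s(a, b), ⟨hfF₂, hfF₁⟩, F, ?_, hE⟩
    rw [isMaximalForest_iff]
    refine ⟨hFle, hFac, fun x y hxy => ?_⟩
    refine reach_of_adj_reach (H := F₁) ?_ (hG1 x y hxy)
    intro c d hcd
    rcases hsplit hcd with hDcd | hEcd
    · exact (hDleF hDcd).reachable
    · rw [Sym2.eq_iff] at hEcd
      rcases hEcd with ⟨rfl, rfl⟩ | ⟨rfl, rfl⟩
      · exact hFuv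
      · exact hFuv.symm

/-- For maximal forests `F₁, F₂` of `G`, if `|E(F₁) \ E(F₂)| = l` then `|E(F₂) \ E(F₁)| = l`. -/
theorem maximalForest_diff_card_symm (G F₁ F₂ : SimpleGraph V)
    (h₁ : IsMaximalForest G F₁) (h₂ : IsMaximalForest G F₂) (l : ℕ)
    (h : (F₁.edgeSet \ F₂.edgeSet).encard = l) :
    (F₂.edgeSet \ F₁.edgeSet).encard = l := by
  have exch : Matroid.ExchangeProperty
      (fun B : Set (Sym2 V) => ∃ F : SimpleGraph V, IsMaximalForest G F ∧ F.edgeSet = B) := by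
    rintro X Y ⟨Fx, hFx, rfl⟩ ⟨Fy, hFy, rfl⟩ e he
    obtain ⟨f, hf, F, hF, hFE⟩ := maximalForest_exchange hFx hFy he
    exact ⟨f, hf, F, hF, hFE⟩
  rw [exch.encard_diff_eq ⟨F₂, h₂, rfl⟩ ⟨F₁, h₁, rfl⟩, h]
end

section
/- The forest graph F(G) of a graph G is connected if and only if any two maximal forests of G differ in only finitely many edges (i.e., |E(F1) \ E(F2)| is finite for all maximal forests F1, F2). -/
open Cardinal

variable {V : Type*}

namespace ForestGraphAux

open SimpleGraph

lemma edge_le {G : SimpleGraph V} {u v : V} (h : G.Adj u v) : edge u v ≤ G := by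
  intro a b hab
  rw [edge_adj] at hab
  rcases hab.1 with ⟨rfl, rfl⟩ | ⟨rfl, rfl⟩
  exacts [h, h.symm]

lemma isAcyclic_anti {H F : SimpleGraph V} (hle : H ≤ F) (hF : F.IsAcyclic) :
    H.IsAcyclic := by
  intro a c hc
  exact hF (c.transfer F fun e he => edgeSet_mono hle (c.edges_subset_edgeSet he))
    (hc.transfer _)

/-- Adding an edge between two non-reachable vertices of an acyclic graph keeps it acyclic. -/
lemma isAcyclic_sup_edge {H : SimpleGraph V} (hH : H.IsAcyclic) {u v : V}
    (hr : ¬ H.Reachable u v) : (H ⊔ edge u v).IsAcyclic := by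
  have hne : u ≠ v := fun h => hr (h ▸ Reachable.refl u)
  intro a c hc
  classical
  by_cases he : s(u, v) ∈ c.edges
  · have hkey := adj_and_reachable_delete_edges_iff_exists_cycle.mpr ⟨a, c, hc, he⟩
    apply hr
    refine hkey.2.mono ?_
    intro x y hxy
    rw [deleteEdges_adj, sup_adj, edge_adj, Set.mem_singleton_iff] at hxy
    obtain ⟨h1 | ⟨h2, _⟩, h3⟩ := hxy
    · exact h1
    · exfalso
      apply h3
      rcases h2 with ⟨rfl, rfl⟩ | ⟨rfl, rfl⟩
      · rfl
      · exact Sym2.eq_swap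
  · have hce : ∀ e ∈ c.edges, e ∈ H.edgeSet := by
      intro e hec
      have := c.edges_subset_edgeSet hec
      rw [edgeSet_sup] at this
      rcases this with h1 | h2
      · exact h1
      · exfalso
        rw [edge_edgeSet_of_ne hne] at h2
        rw [h2] at hec
        exact he hec
    exact hH (c.transfer H hce) (hc.transfer hce)

lemma reachable_of_adj_reachable {F F' : SimpleGraph V}
    (h : ∀ x y : V, F.Adj x y → F'.Reachable x y) {a b : V} (hr : F.Reachable a b) :
    F'.Reachable a b := by
  obtain ⟨w⟩ := hr
  induction w with
  | nil => exact Reachable.refl _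
  | cons ha _ ih => exact (h _ _ ha).trans ih

lemma maxForest_reachable {G F : SimpleGraph V} (h : IsMaximalForest G F)
    {u v : V} (huv : G.Adj u v) : F.Reachable u v := by
  by_contra hr
  have hne : u ≠ v := huv.ne
  have hle : F ⊔ edge u v ≤ G := sup_le h.1 (edge_le huv)
  have heq : F ⊔ edge u v = F := h.2.2 _ hle (isAcyclic_sup_edge h.2.1 hr) le_sup_left
  apply hr
  have hadj : F.Adj u v := by
    rw [← heq, sup_adj, edge_adj]
    exact Or.inr ⟨Or.inl ⟨rfl, rfl⟩, hne⟩
  exact hadj.reachable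

lemma isMaximalForest_of_reachable {G F : SimpleGraph V} (hFG : F ≤ G) (hac : F.IsAcyclic)
    (h : ∀ u v : V, G.Adj u v → F.Reachable u v) : IsMaximalForest G F := by
  classical
  refine ⟨hFG, hac, fun F' hF'G hF'ac hFF' => ?_⟩
  by_contra hne
  have hnotle : ¬ F'.edgeSet ⊆ F.edgeSet := by
    intro hle
    exact hne (le_antisymm (edgeSet_subset_edgeSet.mp hle) hFF')
  obtain ⟨e, heF', heF⟩ := Set.not_subset.mp hnotle
  induction e using Sym2.ind with
  | _ u v =>
  rw [mem_edgeSet] at heF'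
  have hG : G.Adj u v := hF'G heF'
  obtain ⟨w⟩ := h u v hG
  let p : F.Path u v := w.toPath
  have hpe : ∀ e ∈ (p : F.Walk u v).edges, e ∈ F'.edgeSet := fun e he =>
    edgeSet_mono hFF' ((p : F.Walk u v).edges_subset_edgeSet he)
  have hp' : ((p : F.Walk u v).transfer F' hpe).IsPath := p.2.transfer hpe
  have hcyc := SimpleGraph.Path.cons_isCycle
    ⟨((p : F.Walk u v).transfer F' hpe).reverse, hp'.reverse⟩ heF' ?_
  · exact hF'ac _ hcyc
  · simp only [Walk.edges_reverse, List.mem_reverse, Walk.edges_transfer]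
    intro hmem
    exact heF ((p : F.Walk u v).edges_subset_edgeSet hmem)

lemma exists_isMaximalForest (G : SimpleGraph V) : ∃ F, IsMaximalForest G F := by
  have hub : ∀ c ⊆ {F : SimpleGraph V | F ≤ G ∧ F.IsAcyclic}, IsChain (· ≤ ·) c →
      ∃ ub ∈ {F : SimpleGraph V | F ≤ G ∧ F.IsAcyclic}, ∀ z ∈ c, z ≤ ub := by
    intro c hc hchain
    rcases c.eq_empty_or_nonempty with rfl | hne
    · exact ⟨⊥, ⟨bot_le, isAcyclic_bot⟩, by simp⟩
    · refine ⟨sSup c, ⟨sSup_le fun z hz => (hc hz).1, ?_⟩, fun z hz => le_sSup hz⟩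
      intro a w hw
      have key : ∀ l : List (Sym2 V), (∀ e ∈ l, e ∈ (sSup c).edgeSet) →
          ∃ H ∈ c, ∀ e ∈ l, e ∈ H.edgeSet := by
        intro l
        induction l with
        | nil => exact fun _ => ⟨hne.choose, hne.choose_spec, by simp⟩
        | cons e l ih =>
          intro hl
          obtain ⟨H, hH, hHl⟩ := ih fun e' he' => hl e' (List.mem_cons_of_mem _ he')
          have he : e ∈ (sSup c).edgeSet := hl e List.mem_cons_self
          obtain ⟨H', hH', heH'⟩ : ∃ H' ∈ c, e ∈ H'.edgeSet := by
            induction e using Sym2.ind with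
            | _ x y =>
              rw [mem_edgeSet, sSup_adj] at he
              obtain ⟨H', hH', hadj⟩ := he
              exact ⟨H', hH', hadj⟩
          rcases hchain.total hH hH' with h1 | h1
          · refine ⟨H', hH', fun e'' he'' => ?_⟩
            rcases List.mem_cons.mp he'' with rfl | hm
            · exact heH'
            · exact edgeSet_mono h1 (hHl _ hm)
          · refine ⟨H, hH, fun e'' he'' => ?_⟩
            rcases List.mem_cons.mp he'' with rfl | hm
            · exact edgeSet_mono h1 heH'
            · exact hHl _ hm
      obtain ⟨H, hH, hall⟩ := key w.edges fun e he => w.edges_subset_edgeSet he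
      exact (hc hH).2 (w.transfer H hall) (hw.transfer hall)
  obtain ⟨F, hF⟩ := zorn_le₀ {F : SimpleGraph V | F ≤ G ∧ F.IsAcyclic} hub
  exact ⟨F, hF.prop.1, hF.prop.2, fun F' hF'G hF'ac hFF' =>
    le_antisymm (hF.le_of_ge ⟨hF'G, hF'ac⟩ hFF') hFF'⟩

/-- The exchange lemma. -/
lemma exchange {G F₁ F₂ : SimpleGraph V} (h₁ : IsMaximalForest G F₁)
    (h₂ : IsMaximalForest G F₂) {u v : V} (huv2 : F₂.Adj u v) (huv1 : ¬ F₁.Adj u v) :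
    ∃ (F₁' : SimpleGraph V) (e : Sym2 V), e ∈ F₁.edgeSet ∧ e ∉ F₂.edgeSet ∧
      IsMaximalForest G F₁' ∧ F₁'.edgeSet = insert s(u, v) (F₁.edgeSet \ {e}) := by
  classical
  have hne : u ≠ v := huv2.ne
  have hGuv : G.Adj u v := h₂.1 huv2
  have hsuv1 : s(u, v) ∉ F₁.edgeSet := huv1
  obtain ⟨w⟩ := maxForest_reachable h₁ hGuv
  set p : F₁.Path u v := w.toPath with hp_def
  -- find an edge of p not in F₂
  obtain ⟨e, hep, heF₂⟩ : ∃ e ∈ (p : F₁.Walk u v).edges, e ∉ F₂.edgeSet := by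
    by_contra hcon
    push_neg at hcon
    have hp2 : ((p : F₁.Walk u v).transfer F₂ hcon).IsPath := p.2.transfer hcon
    have hcyc := SimpleGraph.Path.cons_isCycle
      ⟨((p : F₁.Walk u v).transfer F₂ hcon).reverse, hp2.reverse⟩ huv2 ?_
    · exact h₂.2.1 _ hcyc
    · simp only [Walk.edges_reverse, List.mem_reverse, Walk.edges_transfer]
      intro hmem
      exact hsuv1 ((p : F₁.Walk u v).edges_subset_edgeSet hmem)
  have heF₁ : e ∈ F₁.edgeSet := (p : F₁.Walk u v).edges_subset_edgeSet hep
  set H : SimpleGraph V := F₁.deleteEdges {e} with hH_def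
  have hHle : H ≤ F₁ := deleteEdges_le _
  have hHedge : H.edgeSet = F₁.edgeSet \ {e} := edgeSet_deleteEdges _
  -- u, v not reachable in H
  have hHreach : ¬ H.Reachable u v := by
    rintro ⟨q⟩
    have hq : ∀ e' ∈ q.edges, e' ∈ F₁.edgeSet := fun e' he' =>
      edgeSet_mono hHle (q.edges_subset_edgeSet he')
    have huniq : (q.transfer F₁ hq).toPath = p := h₁.2.1.path_unique _ _
    have hmem : e ∈ (q.transfer F₁ hq).edges :=
      Walk.edges_toPath_subset _ (huniq ▸ hep)
    rw [Walk.edges_transfer] at hmem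
    have := q.edges_subset_edgeSet hmem
    rw [hHedge] at this
    exact this.2 rfl
  set F₁' : SimpleGraph V := H ⊔ edge u v with hF₁'_def
  have hF₁'ac : F₁'.IsAcyclic := isAcyclic_sup_edge (isAcyclic_anti hHle h₁.2.1) hHreach
  have hF₁'le : F₁' ≤ G := sup_le (hHle.trans h₁.1) (edge_le hGuv)
  have hF₁'edge : F₁'.edgeSet = insert s(u, v) (F₁.edgeSet \ {e}) := by
    rw [hF₁'_def, edgeSet_sup, hHedge, edge_edgeSet_of_ne hne]
    rw [Set.union_comm, Set.singleton_union]
  have hF₁'uv : F₁'.Adj u v := by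
    rw [hF₁'_def, sup_adj, edge_adj]
    exact Or.inr ⟨Or.inl ⟨rfl, rfl⟩, hne⟩
  -- every edge of F₁ has reachable endpoints in F₁'
  have hstep : ∀ x y : V, F₁.Adj x y → F₁'.Reachable x y := by
    intro x y hxy
    by_cases hxye : s(x, y) = e
    · -- both x and y lie on p's support; each support vertex is reachable from u in F₁'
      have hsupp : ∀ z ∈ (p : F₁.Walk u v).support, F₁'.Reachable u z := by
        intro z hz
        have hspec := Walk.take_spec (p : F₁.Walk u v) hz
        have hnodup : ((p : F₁.Walk u v).edges).Nodup := p.2.isTrail.edges_nodup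
        have hsplit : ((p : F₁.Walk u v).takeUntil z hz).edges ++
            ((p : F₁.Walk u v).dropUntil z hz).edges = (p : F₁.Walk u v).edges := by
          rw [← Walk.edges_append, hspec]
        by_cases hte : e ∈ ((p : F₁.Walk u v).takeUntil z hz).edges
        · -- then e not in dropUntil; go z → v → u  backwards
          have hnd : e ∉ ((p : F₁.Walk u v).dropUntil z hz).edges := by
            intro hde
            have := hsplit ▸ hnodup
            exact (List.disjoint_of_nodup_append this) hte hde
          have hd : ∀ e' ∈ ((p : F₁.Walk u v).dropUntil z hz).edges, e' ∈ F₁'.edgeSet := by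
            intro e' he'
            have h1 : e' ∈ (p : F₁.Walk u v).edges := by
              rw [← hsplit]; exact List.mem_append_right _ he'
            have h2 : e' ∈ F₁.edgeSet := (p : F₁.Walk u v).edges_subset_edgeSet h1
            rw [hF₁'edge]
            exact Or.inr ⟨h2, fun hee => hnd (hee ▸ he')⟩
          have hzv : F₁'.Reachable z v :=
            ⟨((p : F₁.Walk u v).dropUntil z hz).transfer F₁' hd⟩
          exact (hF₁'uv.reachable.trans hzv.symm)
        · have ht : ∀ e' ∈ ((p : F₁.Walk u v).takeUntil z hz).edges, e' ∈ F₁'.edgeSet := by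
            intro e' he'
            have h1 : e' ∈ (p : F₁.Walk u v).edges := by
              rw [← hsplit]; exact List.mem_append_left _ he'
            have h2 : e' ∈ F₁.edgeSet := (p : F₁.Walk u v).edges_subset_edgeSet h1
            rw [hF₁'edge]
            exact Or.inr ⟨h2, fun hee => hte (hee ▸ he')⟩
          exact ⟨((p : F₁.Walk u v).takeUntil z hz).transfer F₁' ht⟩
      have hxp : x ∈ (p : F₁.Walk u v).support :=
        Walk.fst_mem_support_of_mem_edges _ (hxye ▸ hep)
      have hyp : y ∈ (p : F₁.Walk u v).support := by
        apply Walk.snd_mem_support_of_mem_edges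
        exact hxye ▸ hep
      exact (hsupp x hxp).symm.trans (hsupp y hyp)
    · have : F₁'.Adj x y := by
        rw [hF₁'_def, sup_adj, hH_def, deleteEdges_adj]
        exact Or.inl ⟨hxy, by simpa using hxye⟩
      exact this.reachable
  have hF₁'max : IsMaximalForest G F₁' :=
    isMaximalForest_of_reachable hF₁'le hF₁'ac fun a b hab =>
      reachable_of_adj_reachable hstep (maxForest_reachable h₁ hab)
  exact ⟨F₁', e, heF₁, heF₂, hF₁'max, hF₁'edge⟩

end ForestGraphAux

open ForestGraphAux SimpleGraph in
/-- The forest graph of `G` is connected iff any two maximal forests of `G`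
differ in only finitely many edges. -/
theorem forestGraph_connected_iff (G : SimpleGraph V) :
    (forestGraph G).Connected ↔
      ∀ F₁ F₂ : {F : SimpleGraph V // IsMaximalForest G F},
        (F₁.1.edgeSet \ F₂.1.edgeSet).Finite := by
  constructor
  · intro h F₁ F₂
    obtain ⟨w⟩ := h.preconnected F₁ F₂
    induction w with
    | nil => simp
    | @cons A B C ha q ih =>
      have h1 : (A.1.edgeSet \ B.1.edgeSet).Finite := by
        obtain ⟨x, hx⟩ := Set.encard_eq_one.mp ha.1
        rw [hx]; exact Set.finite_singleton x
      refine ((h1.union ih).subset ?_)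
      intro x hx
      by_cases hxB : x ∈ B.1.edgeSet
      · exact Or.inr ⟨hxB, hx.2⟩
      · exact Or.inl ⟨hx.1, hxB⟩
  · intro h
    obtain ⟨F₀, hF₀⟩ := exists_isMaximalForest G
    have key : ∀ (n : ℕ) (F₁ F₂ : {F : SimpleGraph V // IsMaximalForest G F}),
        (F₂.1.edgeSet \ F₁.1.edgeSet).ncard = n → (forestGraph G).Reachable F₁ F₂ := by
      intro n
      induction n using Nat.strong_induction_on with
      | _ n ih =>
        intro F₁ F₂ hn
        by_cases hsub : F₂.1.edgeSet ⊆ F₁.1.edgeSet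
        · have heq : F₁.1 = F₂.1 :=
            F₂.2.2.2 F₁.1 F₁.2.1 F₁.2.2.1 (edgeSet_subset_edgeSet.mp hsub)
          have : F₁ = F₂ := Subtype.ext heq
          rw [this]
        · obtain ⟨f, hf2, hf1⟩ := Set.not_subset.mp hsub
          have hfin21 : (F₂.1.edgeSet \ F₁.1.edgeSet).Finite := h F₂ F₁
          obtain ⟨u, v, hadj2, hadj1⟩ : ∃ u v : V, F₂.1.Adj u v ∧ ¬ F₁.1.Adj u v ∧
              f = s(u, v) := by
            induction f using Sym2.ind with
            | _ x y => exact ⟨x, y, hf2, hf1, rfl⟩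
          obtain ⟨rfl⟩ : f = s(u, v) := hadj1.2
          have hadj1' : ¬ F₁.1.Adj u v := hadj1.1
          obtain ⟨F₁', e, heF₁, heF₂, hF₁'max, hE⟩ :=
            exchange F₁.2 F₂.2 hadj2 hadj1'
          have hef : e ≠ s(u, v) := fun hh => hf1 (hh ▸ heF₁)
          -- F₁ adjacent to F₁' in forestGraph
          have hd1 : F₁.1.edgeSet \ F₁'.edgeSet = {e} := by
            ext x
            simp only [hE, Set.mem_diff, Set.mem_insert_iff, Set.mem_singleton_iff,
              not_or, Set.mem_diff, not_and, not_not]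
            constructor
            · rintro ⟨hx1, hx2, hx3⟩
              exact hx3 hx1
            · rintro rfl
              exact ⟨heF₁, fun hh => hf1 (hh ▸ heF₁), fun _ => rfl⟩
          have hd2 : F₁'.edgeSet \ F₁.1.edgeSet = {s(u, v)} := by
            ext x
            simp only [hE, Set.mem_diff, Set.mem_insert_iff, Set.mem_singleton_iff]
            constructor
            · rintro ⟨hx1 | ⟨hx2, _⟩, hx3⟩
              · exact hx1
              · exact absurd hx2 hx3
            · rintro rfl
              exact ⟨Or.inl rfl, hf1⟩
          have hadjF : (forestGraph G).Adj F₁ ⟨F₁', hF₁'max⟩ := by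
            constructor
            · rw [hd1, Set.encard_singleton]
            · rw [hd2, Set.encard_singleton]
          -- measure decreases
          have hd3 : F₂.1.edgeSet \ F₁'.edgeSet =
              (F₂.1.edgeSet \ F₁.1.edgeSet) \ {s(u, v)} := by
            ext x
            simp only [hE, Set.mem_diff, Set.mem_insert_iff, Set.mem_singleton_iff,
              not_or, Set.mem_diff, not_and, not_not]
            constructor
            · rintro ⟨hx1, hx2, hx3⟩
              refine ⟨⟨hx1, fun hx1' => ?_⟩, hx2⟩
              have := hx3 hx1'
              exact heF₂ (this ▸ hx1)
            · rintro ⟨⟨hx1, hx2⟩, hx3⟩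
              exact ⟨hx1, hx3, fun hx1' => absurd hx1' hx2⟩
          have hlt : (F₂.1.edgeSet \ F₁'.edgeSet).ncard < n := by
            rw [hd3, ← hn]
            exact Set.ncard_diff_singleton_lt_of_mem ⟨hf2, hf1⟩ hfin21
          exact hadjF.reachable.trans (ih _ hlt ⟨F₁', hF₁'max⟩ F₂ rfl)
    haveI : Nonempty {F : SimpleGraph V // IsMaximalForest G F} := ⟨⟨F₀, hF₀⟩⟩
    exact Connected.mk fun F₁ F₂ => key _ F₁ F₂ rfl
end

section
/- If G is a complete graph of infinite order α, then the number of spanning trees of G equals 2^α. -/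
open Cardinal

variable {V : Type*}

lemma isTree_of_parent {W : Type*} (p : W → W) (rk : W → ℕ) (r : W)
    (hr : p r = r) (hrk : ∀ x, x ≠ r → rk (p x) < rk x) :
    (SimpleGraph.fromRel (fun x y => p x = y)).IsTree := by
  set G := SimpleGraph.fromRel (fun x y => p x = y) with hG
  have hadj : ∀ x y, G.Adj x y ↔ x ≠ y ∧ (p x = y ∨ p y = x) := by
    intro x y; simp [hG, SimpleGraph.fromRel_adj]
  constructor
  · -- Connected
    have key : ∀ n x, rk x ≤ n → G.Reachable x r := by
      intro n
      induction n with
      | zero =>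
        intro x hx
        by_cases hxr : x = r
        · cases hxr; exact SimpleGraph.Reachable.refl _
        · exact absurd (lt_of_lt_of_le (hrk x hxr) hx) (Nat.not_lt_zero _)
      | succ n ih =>
        intro x hx
        by_cases hxr : x = r
        · cases hxr; exact SimpleGraph.Reachable.refl _
        · have hlt := hrk x hxr
          have hne : x ≠ p x := fun h => by rw [← h] at hlt; exact lt_irrefl _ hlt
          have : G.Adj x (p x) := (hadj x (p x)).mpr ⟨hne, Or.inl rfl⟩
          exact this.reachable.trans (ih (p x) (by omega))
    rw [SimpleGraph.connected_iff_exists_forall_reachable]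
    exact ⟨r, fun x => (key (rk x) x le_rfl).symm⟩
  · -- Acyclic
    classical
    intro v c hc
    obtain ⟨u, hu_mem, hu_max⟩ := (c.support.toFinset).exists_max_image rk
      (by simp [c.support_ne_nil])
    rw [List.mem_toFinset] at hu_mem
    have hdc : (c.rotate u hu_mem).IsCycle := hc.rotate hu_mem
    obtain ⟨b, hab, q, hq⟩ := SimpleGraph.Walk.not_nil_iff.mp hdc.not_nil
    rw [hq, SimpleGraph.Walk.cons_isCycle_iff] at hdc
    have hqnil : ¬ q.reverse.Nil := SimpleGraph.Walk.not_nil_of_ne hab.ne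
    obtain ⟨y, hay, q2, hq2⟩ := SimpleGraph.Walk.not_nil_iff.mp hqnil
    have hyq : s(u, y) ∈ q.edges := by
      rw [← List.mem_reverse, ← SimpleGraph.Walk.edges_reverse, hq2]
      simp
    have hyb : y ≠ b := by
      rintro rfl
      exact hdc.2 hyq
    -- membership in c.support
    have hedges : ∀ e ∈ (c.rotate u hu_mem).edges, e ∈ c.edges := by
      intro e he
      exact (c.rotate_edges u hu_mem).mem_iff.mp he
    have hb_mem : b ∈ c.support :=
      SimpleGraph.Walk.snd_mem_support_of_mem_edges c
        (hedges s(u, b) (by rw [hq]; simp))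
    have hy_mem : y ∈ c.support :=
      SimpleGraph.Walk.snd_mem_support_of_mem_edges c
        (hedges s(u, y) (by rw [hq]; right; exact hyq))
    have key : ∀ z, G.Adj u z → z ∈ c.support → p u = z := by
      intro z hz hzs
      rcases ((hadj u z).mp hz).2 with h1 | h1
      · exact h1
      · exfalso
        by_cases hzr : z = r
        · rw [hzr, hr] at h1
          exact ((hadj u z).mp hz).1 (h1 ▸ hzr.symm)
        · have h2 := hrk z hzr
          rw [h1] at h2
          have := hu_max z (List.mem_toFinset.mpr hzs)
          omega
    have h1 := key b hab hb_mem
    have h2 := key y hay hy_mem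
    exact hyb (h2 ▸ h1)

open Classical in
noncomputable def auxParent {W : Type u} (e : W ≃ Option (W ⊕ W)) (S : Set W) (x : W) : W :=
  match e x with
  | none => e.symm none
  | some (Sum.inl _) => e.symm none
  | some (Sum.inr b) => if b ∈ S then e.symm (some (Sum.inl b)) else e.symm none

noncomputable def auxRank {W : Type u} (e : W ≃ Option (W ⊕ W)) (x : W) : ℕ :=
  match e x with
  | none => 0
  | some (Sum.inl _) => 1
  | some (Sum.inr _) => 2

universe u

/-- The complete graph of infinite order `α` has `2 ^ α` spanning trees. -/
theorem card_spanningTrees_completeGraph (α : Cardinal.{u}) (hα : ℵ₀ ≤ α)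
    (W : Type u) (hW : #W = α) :
    #{T : SimpleGraph W // T.IsTree} = 2 ^ α := by
  classical
  have hWinf : ℵ₀ ≤ #W := hW ▸ hα
  apply le_antisymm
  · -- upper bound
    have hinj : Function.Injective
        (fun (G : SimpleGraph W) => {p : W × W | G.Adj p.1 p.2}) := by
      intro G₁ G₂ h
      ext x y
      exact Set.ext_iff.mp h (x, y)
    calc #{T : SimpleGraph W // T.IsTree}
        ≤ #(SimpleGraph W) := mk_subtype_le _
      _ ≤ #(Set (W × W)) := mk_le_of_injective hinj
      _ = 2 ^ #(W × W) := mk_set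
      _ = 2 ^ (#W * #W) := by rw [mk_prod]; simp
      _ = 2 ^ α := by rw [mul_eq_self hWinf, hW]
  · -- lower bound
    obtain ⟨e⟩ : Nonempty (W ≃ Option (W ⊕ W)) := by
      rw [← Cardinal.eq, mk_option, mk_sum, lift_id, add_eq_self hWinf, add_one_eq hWinf]
    have hr : ∀ S : Set W, auxParent e S (e.symm none) = e.symm none := by
      intro S
      simp [auxParent]
    have hrk : ∀ (S : Set W) (x : W), x ≠ e.symm none →
        auxRank e (auxParent e S x) < auxRank e x := by
      intro S x hx
      rcases hex : e x with _ | (a | b)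
      · exact absurd (by rw [← hex, Equiv.symm_apply_apply]) hx
      · simp [auxParent, auxRank, hex]
      · by_cases hb : b ∈ S <;> simp [auxParent, auxRank, hex, hb]
    have htree : ∀ S : Set W,
        (SimpleGraph.fromRel (fun x y => auxParent e S x = y)).IsTree :=
      fun S => isTree_of_parent _ (auxRank e) (e.symm none) (hr S) (hrk S)
    have hadj_iff : ∀ (S : Set W) (b : W),
        (SimpleGraph.fromRel (fun x y => auxParent e S x = y)).Adj
          (e.symm (some (Sum.inr b))) (e.symm (some (Sum.inl b))) ↔ b ∈ S := by
      intro S b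
      rw [SimpleGraph.fromRel_adj]
      constructor
      · rintro ⟨hne, h | h⟩
        · by_cases hb : b ∈ S
          · exact hb
          · exfalso
            simp only [auxParent, Equiv.apply_symm_apply, hb, if_false] at h
            exact absurd (e.symm.injective h ▸ rfl : (none : Option (W ⊕ W)) = some (Sum.inl b)) (by simp)
        · exfalso
          simp only [auxParent, Equiv.apply_symm_apply] at h
          have := e.symm.injective h
          simp at this
      · intro hb
        refine ⟨fun h => ?_, Or.inl ?_⟩
        · have := e.symm.injective h
          simp at this
        · simp [auxParent, Equiv.apply_symm_apply, hb]
    have hinj2 : Function.Injective (fun S : Set W =>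
        (⟨SimpleGraph.fromRel (fun x y => auxParent e S x = y), htree S⟩ :
          {T : SimpleGraph W // T.IsTree})) := by
      intro S₁ S₂ h
      simp only [Subtype.mk.injEq] at h
      ext b
      rw [← hadj_iff S₁ b, ← hadj_iff S₂ b, h]
    calc (2 : Cardinal) ^ α = 2 ^ #W := by rw [hW]
      _ = #(Set W) := mk_set.symm
      _ ≤ #{T : SimpleGraph W // T.IsTree} := mk_le_of_injective hinj2
end

section
/- If G is the complete graph on a countably infinite vertex set, then the forest graph F(G) is disconnected. -/
open Cardinal

variable {V : Type*}

/-- star graph at `v` -/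
def starG (v : V) : SimpleGraph V where
  Adj a b := a ≠ b ∧ (a = v ∨ b = v)
  symm := ⟨by rintro a b ⟨h1, h2⟩; exact ⟨h1.symm, h2.symm⟩⟩
  loopless := ⟨fun a h => h.1 rfl⟩

lemma starG_acyclic (v : V) : (starG v).IsAcyclic := by
  intro u c hc
  have h3 := hc.three_le_length
  cases c with
  | nil => simp at h3
  | cons h1 q =>
    cases q with
    | nil => simp at h3
    | cons h2 r =>
      cases r with
      | nil => simp [SimpleGraph.Walk.length] at h3
      | cons h3' s =>
        have hnd := hc.edges_nodup
        simp only [SimpleGraph.Walk.edges_cons, List.nodup_cons, List.mem_cons] at hnd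
        rename_i x y z
        rcases h2.2 with hx | hy
        · -- x = v
          have hyv : y ≠ v := fun h => h2.1 (hx.trans h.symm)
          have hz : z = v := (h3'.2).resolve_left hyv
          exact hnd.2.1 (Or.inl (by rw [hx, hz, Sym2.eq_swap]))
        · -- y = v
          have hxv : x ≠ v := fun h => h2.1 (h.trans hy.symm)
          have hu : u = v := (h1.2).resolve_right hxv
          exact hnd.1 (Or.inl (by rw [hu, hy, Sym2.eq_swap]))

lemma starG_reachable (v a : V) : (starG v).Reachable a v := by
  by_cases h : a = v
  · exact h ▸ SimpleGraph.Reachable.refl a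
  · exact SimpleGraph.Adj.reachable ⟨h, Or.inr rfl⟩

lemma starG_connected (v : V) : (starG v).Connected := by
  haveI : Nonempty V := ⟨v⟩
  exact ⟨fun a b => (starG_reachable v a).trans (starG_reachable v b).symm⟩

/-- acyclic + connected implies maximal forest of ⊤ -/
lemma isMaximalForest_of_tree {F : SimpleGraph V} (hac : F.IsAcyclic) (hconn : F.Connected) :
    IsMaximalForest (⊤ : SimpleGraph V) F := by
  classical
  refine ⟨le_top, hac, fun F' _ hac' hle => ?_⟩
  ext a b
  constructor
  · intro hadj
    by_contra hFab
    obtain ⟨w⟩ := hconn.preconnected a b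
    have hab : a ≠ b := hadj.ne
    let p : F.Path a b := w.toPath
    have hedges : ∀ e ∈ (p : F.Walk a b).edges, e ∈ F'.edgeSet := fun e he =>
      SimpleGraph.edgeSet_mono hle ((p : F.Walk a b).edges_subset_edgeSet he)
    let p' : F'.Walk a b := (p : F.Walk a b).transfer F' hedges
    have hp' : p'.IsPath := p.2.transfer hedges
    have hrev : (p'.reverse).IsPath := hp'.reverse
    have hne : s(a, b) ∉ p'.reverse.edges := by
      intro hmem
      rw [SimpleGraph.Walk.edges_reverse, List.mem_reverse] at hmem
      have : s(a, b) ∈ (p : F.Walk a b).edges := by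
        rwa [SimpleGraph.Walk.edges_transfer] at hmem
      exact hFab ((p : F.Walk a b).edges_subset_edgeSet this)
    exact hac' _ (SimpleGraph.Path.cons_isCycle ⟨p'.reverse, hrev⟩ hadj hne)
  · exact fun h => hle h

lemma reachable_diff_finite {G : SimpleGraph V}
    {F₁ F₂ : {F : SimpleGraph V // IsMaximalForest G F}}
    (h : (forestGraph G).Reachable F₁ F₂) :
    (F₁.1.edgeSet \ F₂.1.edgeSet).Finite := by
  obtain ⟨w⟩ := h
  induction w with
  | nil => simp
  | cons hadj p ih =>
    rename_i A B C
    have h1 : (A.1.edgeSet \ B.1.edgeSet).Finite :=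
      Set.finite_of_encard_eq_coe (k := 1) (by exact_mod_cast hadj.1)
    refine ((h1.union ih).subset ?_)
    intro e he
    by_cases hB : e ∈ B.1.edgeSet
    · exact Or.inr ⟨hB, he.2⟩
    · exact Or.inl ⟨he.1, hB⟩


/-- The forest graph of the complete graph on a countably infinite vertex set is
disconnected. -/
theorem forestGraph_complete_countable_disconnected (W : Type*) (hW : #W = ℵ₀) :
    ¬ (forestGraph (⊤ : SimpleGraph W)).Connected := by
  have hinf : Infinite W := Cardinal.infinite_iff.mpr hW.ge
  obtain ⟨v₀, v₁, hne⟩ := exists_pair_ne W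
  have h0 : IsMaximalForest (⊤ : SimpleGraph W) (starG v₀) :=
    isMaximalForest_of_tree (starG_acyclic v₀) (starG_connected v₀)
  have h1 : IsMaximalForest (⊤ : SimpleGraph W) (starG v₁) :=
    isMaximalForest_of_tree (starG_acyclic v₁) (starG_connected v₁)
  intro hconn
  have hr := hconn.preconnected ⟨starG v₀, h0⟩ ⟨starG v₁, h1⟩
  have hfin := reachable_diff_finite hr
  have hinf2 : ((starG v₀).edgeSet \ (starG v₁).edgeSet).Infinite := by
    have hS : ({v₀, v₁}ᶜ : Set W).Infinite := (Set.toFinite _).infinite_compl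
    have himg : ((fun n => s(v₀, n)) '' ({v₀, v₁}ᶜ : Set W)).Infinite := by
      refine hS.image ?_
      intro a ha b hb hab
      simp only [Set.mem_compl_iff, Set.mem_insert_iff, Set.mem_singleton_iff, not_or] at ha hb
      rcases Sym2.eq_iff.mp hab with ⟨_, h⟩ | ⟨hb', ha'⟩
      · exact h
      · exact absurd ha' ha.1
    refine himg.mono ?_
    rintro e ⟨n, hn, rfl⟩
    simp only [Set.mem_compl_iff, Set.mem_insert_iff, Set.mem_singleton_iff, not_or] at hn
    constructor
    · show (starG v₀).Adj v₀ n
      exact ⟨Ne.symm hn.1, Or.inl rfl⟩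
    · intro hmem
      have hadj : (starG v₁).Adj v₀ n := hmem
      rcases hadj.2 with h | h
      · exact hne h
      · exact hn.2 h
  exact hinf2 hfin
end

section
/- If the complete graph K_n (n ≥ 2 finite) is a subgraph of a graph G, then the complete graph K_{⌊n²/4⌋} is a subgraph of the forest graph F(G). -/
open Cardinal

variable {V : Type*}

namespace ForestGraphAux

open SimpleGraph

/-! ### Generic walk/cycle helpers -/

lemma two_neighbors_of_cycle {H : SimpleGraph V} {x : V} {c : H.Walk x x} (hc : c.IsCycle) :
    ∃ y z, y ≠ z ∧ H.Adj x y ∧ H.Adj x z := by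
  have hlen := hc.three_le_length
  cases c with
  | nil => simp at hlen
  | @cons _ y _ h p =>
    rw [Walk.cons_isCycle_iff] at hc
    have hyx : x ≠ y := h.ne
    have hpr : p.reverse.IsPath := hc.1.reverse
    obtain ⟨z, h', q, hq⟩ := Walk.exists_eq_cons_of_ne hyx p.reverse
    refine ⟨y, z, fun hzy => ?_, h, h'⟩
    subst hzy
    rw [hq, Walk.cons_isPath_iff] at hpr
    have : q = Walk.nil := Walk.isPath_iff_eq_nil.mp hpr.1
    have h1 : p.reverse.length = 1 := by rw [hq, this]; simp
    rw [Walk.length_reverse] at h1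
    simp [h1] at hlen

/-! ### Zorn's lemma: existence of maximal forests -/

lemma walk_chain {S : Set (SimpleGraph V)} (hS : IsChain (· ≤ ·) S) {H₀ : SimpleGraph V}
    (h₀ : H₀ ∈ S) {u v : V} (p : (sSup S).Walk u v) :
    ∃ H ∈ S, ∀ e ∈ p.edges, e ∈ H.edgeSet := by
  induction p with
  | nil => exact ⟨H₀, h₀, by simp⟩
  | cons h p ih =>
    obtain ⟨H, hH, hHe⟩ := ih
    obtain ⟨K, hK, hKadj⟩ := sSup_adj.mp h
    rcases hS.total hH hK with hc | hc
    · refine ⟨K, hK, ?_⟩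
      intro e he
      rw [Walk.edges_cons, List.mem_cons] at he
      rcases he with rfl | he
      · exact hKadj
      · exact edgeSet_mono hc (hHe e he)
    · refine ⟨H, hH, ?_⟩
      intro e he
      rw [Walk.edges_cons, List.mem_cons] at he
      rcases he with rfl | he
      · exact edgeSet_mono hc hKadj
      · exact hHe e he

lemma isAcyclic_sSup_chain {S : Set (SimpleGraph V)} (hS : IsChain (· ≤ ·) S)
    (hne : S.Nonempty) (hac : ∀ H ∈ S, H.IsAcyclic) : (sSup S).IsAcyclic := by
  intro v c hc
  obtain ⟨H₀, h₀⟩ := hne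
  obtain ⟨H, hH, hHe⟩ := walk_chain hS h₀ c
  exact hac H hH (c.transfer H hHe) (hc.transfer hHe)

lemma exists_maximal_forest (G D : SimpleGraph V) (hDG : D ≤ G) (hD : D.IsAcyclic) :
    ∃ F, IsMaximalForest G F ∧ D ≤ F := by
  obtain ⟨F, hDF, hFmem, hmax⟩ := zorn_le_nonempty₀ {H : SimpleGraph V | H ≤ G ∧ H.IsAcyclic}
    (fun c hc hchain y hy =>
      ⟨sSup c, ⟨sSup_le (fun H hH => (hc hH).1),
        isAcyclic_sSup_chain hchain ⟨y, hy⟩ (fun H hH => (hc hH).2)⟩,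
        fun z hz => le_sSup hz⟩) D ⟨hDG, hD⟩
  exact ⟨F, ⟨hFmem.1, hFmem.2, fun F' h1 h2 h3 =>
    le_antisymm (hmax ⟨h1, h2⟩ h3) h3⟩, hDF⟩

/-! ### Acyclicity and maximality lemmas -/

lemma sdiff_fromEdgeSet_le {F : SimpleGraph V} {x y : V} (h : ¬F.Adj x y) :
    (F ⊔ edge x y) \ fromEdgeSet {s(x, y)} ≤ F := by
  intro u w hu
  simp only [sdiff_adj, sup_adj, fromEdgeSet_adj, Set.mem_singleton_iff, edge_adj] at hu
  obtain ⟨hl, hr⟩ := hu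
  rcases hl with h1 | ⟨h2, hne⟩
  · exact h1
  · exfalso
    apply hr
    constructor
    · rcases h2 with ⟨rfl, rfl⟩ | ⟨rfl, rfl⟩
      · rfl
      · exact Sym2.eq_swap
    · exact hne

lemma isAcyclic_sup_edge_s7 {F : SimpleGraph V} (hF : F.IsAcyclic) {x y : V} (hxy : x ≠ y)
    (hreach : ¬F.Reachable x y) : (F ⊔ edge x y).IsAcyclic := by
  have hnadj : ¬F.Adj x y := fun h => hreach h.reachable
  have hbr : (F ⊔ edge x y).IsBridge s(x, y) := by
    rw [isBridge_iff]
    refine fun hr => ?_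
    exact hreach (hr.mono (sdiff_fromEdgeSet_le hnadj))
  intro v c hc
  rw [isBridge_iff_forall_cycle_notMem (by simp [edge_adj, hxy])] at hbr
  by_cases he : s(x, y) ∈ c.edges
  · exact hbr c hc he
  · have hce : ∀ e ∈ c.edges, e ∈ F.edgeSet := by
      intro e hec
      have : e ∈ (F ⊔ edge x y).edgeSet := c.edges_subset_edgeSet hec
      rw [edgeSet_sup, edge_edgeSet_of_ne hxy] at this
      rcases this with h1 | h1
      · exact h1
      · exact absurd (h1 ▸ hec) he
    exact hF (c.transfer F hce) (hc.transfer hce)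

lemma reachable_of_forall_adj {H K : SimpleGraph V} (h : ∀ x y, H.Adj x y → K.Reachable x y)
    {u v : V} (huv : H.Reachable u v) : K.Reachable u v := by
  obtain ⟨p⟩ := huv
  induction p with
  | nil => exact Reachable.refl _
  | cons ha _ ih => exact (h _ _ ha).trans ih

lemma isMaximalForest_of_spanning {G F : SimpleGraph V} (hFG : F ≤ G) (hF : F.IsAcyclic)
    (hsp : ∀ x y, G.Adj x y → F.Reachable x y) : IsMaximalForest G F := by
  refine ⟨hFG, hF, fun F' hF'G hF'ac hFF' => ?_⟩
  refine le_antisymm (fun x y hadj => ?_) hFF'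
  by_contra hne
  have hre : F.Reachable x y := hsp x y (hF'G hadj)
  have h1 : F ≤ F' \ fromEdgeSet {s(x, y)} := by
    intro u w hu
    simp only [sdiff_adj, fromEdgeSet_adj, Set.mem_singleton_iff]
    refine ⟨hFF' hu, fun hc => ?_⟩
    obtain ⟨hc1, -⟩ := hc
    rw [Sym2.eq_iff] at hc1
    rcases hc1 with ⟨rfl, rfl⟩ | ⟨rfl, rfl⟩
    · exact hne hu
    · exact hne hu.symm
  have hbr := (isAcyclic_iff_forall_adj_isBridge.mp hF'ac) hadj
  rw [isBridge_iff] at hbr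
  exact hbr (hre.mono h1)

lemma spanning_of_isMaximalForest {G F : SimpleGraph V} (h : IsMaximalForest G F) :
    ∀ x y, G.Adj x y → F.Reachable x y := by
  obtain ⟨hFG, hF, hmax⟩ := h
  intro x y hadj
  by_contra hnr
  have hF' : (F ⊔ edge x y).IsAcyclic := isAcyclic_sup_edge_s7 hF hadj.ne hnr
  have hle : F ⊔ edge x y ≤ G := sup_le hFG (by
    intro u w hu
    rw [edge_adj] at hu
    rcases hu.1 with ⟨rfl, rfl⟩ | ⟨rfl, rfl⟩
    · exact hadj
    · exact hadj.symm)
  apply hnr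
  have hadj' : (F ⊔ edge x y).Adj x y := by simp [edge_adj, hadj.ne]
  rw [hmax _ hle hF' le_sup_left] at hadj'
  exact hadj'.reachable

/-! ### The double star -/

/-- double star: `a` joined to everything in `A` and to `b`; `b` joined to everything in `B`. -/
def doubleStar (A B : Finset V) (a b : V) : SimpleGraph V where
  Adj x y := x ≠ y ∧ ((x = a ∧ (y ∈ A ∨ y = b)) ∨ (y = a ∧ (x ∈ A ∨ x = b)) ∨
    (x = b ∧ y ∈ B) ∨ (y = b ∧ x ∈ B))
  symm := ⟨fun x y => by tauto⟩
  loopless := ⟨fun x h => h.1 rfl⟩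

variable {A B : Finset V} {a b : V}

lemma doubleStar_adj {x y : V} : (doubleStar A B a b).Adj x y ↔
    x ≠ y ∧ ((x = a ∧ (y ∈ A ∨ y = b)) ∨ (y = a ∧ (x ∈ A ∨ x = b)) ∨
    (x = b ∧ y ∈ B) ∨ (y = b ∧ x ∈ B)) := Iff.rfl

lemma doubleStar_nbr_unique (hD : Disjoint A B) {x y : V} (hxa : x ≠ a) (hxb : x ≠ b)
    (h : (doubleStar A B a b).Adj x y) : (y = a ∧ x ∈ A) ∨ (y = b ∧ x ∈ B) := by
  rw [doubleStar_adj] at h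
  rcases h.2 with ⟨rfl, -⟩ | ⟨rfl, hx⟩ | ⟨rfl, -⟩ | ⟨rfl, hx⟩
  · exact absurd rfl hxa
  · rcases hx with hx | hx
    · exact Or.inl ⟨rfl, hx⟩
    · exact absurd hx hxb
  · exact absurd rfl hxb
  · exact Or.inr ⟨rfl, hx⟩

lemma doubleStar_isAcyclic (hD : Disjoint A B) : (doubleStar A B a b).IsAcyclic := by
  intro v c hc
  classical
  have hnd : c.support.tail.Nodup := hc.support_nodup
  have hlen : 3 ≤ c.support.tail.length := by
    have := hc.three_le_length
    have h2 : c.support.length = c.length + 1 := c.length_support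
    have h3 : c.support.tail.length = c.support.length - 1 := c.support.length_tail
    omega
  have hx : ∃ x ∈ c.support.tail, x ≠ a ∧ x ≠ b := by
    by_contra h
    push_neg at h
    have hsub : c.support.tail.toFinset ⊆ {a, b} := by
      intro x hx
      rw [List.mem_toFinset] at hx
      rcases Classical.em (x = a) with rfl | hxa
      · simp
      · simp [h x hx hxa]
    have h2 := Finset.card_le_card hsub
    rw [List.toFinset_card_of_nodup hnd] at h2
    have h3 : ({a, b} : Finset V).card ≤ 2 := Finset.card_le_two
    omega
  obtain ⟨x, hxs, hxa, hxb⟩ := hx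
  have hxsup : x ∈ c.support := List.mem_of_mem_tail hxs
  obtain ⟨y, z, hyz, hy, hz⟩ := two_neighbors_of_cycle (hc.rotate hxsup)
  have hAB : ∀ {u : V}, u ∈ A → u ∉ B := fun h => Finset.disjoint_left.mp hD h
  rcases doubleStar_nbr_unique hD hxa hxb hy with ⟨rfl, hxA⟩ | ⟨rfl, hxB⟩ <;>
    rcases doubleStar_nbr_unique hD hxa hxb hz with ⟨rfl, hxA'⟩ | ⟨rfl, hxB'⟩
  · exact hyz rfl
  · exact hAB hxA hxB'
  · exact hAB hxA' hxB
  · exact hyz rfl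

lemma doubleStar_adj_ab (hab : a ≠ b) : (doubleStar A B a b).Adj a b :=
  ⟨hab, Or.inl ⟨rfl, Or.inr rfl⟩⟩

lemma doubleStar_adj_left {x : V} (hx : x ∈ A) (hxa : x ≠ a) : (doubleStar A B a b).Adj a x :=
  ⟨fun h => hxa h.symm, Or.inl ⟨rfl, Or.inl hx⟩⟩

lemma doubleStar_adj_right {x : V} (hx : x ∈ B) (hxb : x ≠ b) : (doubleStar A B a b).Adj b x :=
  ⟨fun h => hxb h.symm, Or.inr (Or.inr (Or.inl ⟨rfl, hx⟩))⟩

lemma doubleStar_reachable (hab : a ≠ b) {x y : V} (hx : x ∈ A ∨ x ∈ B) (hy : y ∈ A ∨ y ∈ B) :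
    (doubleStar A B a b).Reachable x y := by
  have key : ∀ z : V, (z ∈ A ∨ z ∈ B) → (doubleStar A B a b).Reachable z a := by
    intro z hz
    rcases hz with hz | hz
    · rcases Classical.em (z = a) with rfl | hza
      · exact Reachable.refl _
      · exact (doubleStar_adj_left hz hza).symm.reachable
    · rcases Classical.em (z = b) with rfl | hzb
      · exact (doubleStar_adj_ab hab).symm.reachable
      · exact ((doubleStar_adj_right hz hzb).symm.reachable).trans
          (doubleStar_adj_ab hab).symm.reachable
  exact (key x hx).trans (key y hy).symm

lemma doubleStar_cross (hD : Disjoint A B) {a' b' : V} (ha' : a' ∈ A) (hb' : b' ∈ B)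
    (h : (doubleStar A B a b).Adj a' b') (haA : a ∈ A) (hbB : b ∈ B) : a' = a ∧ b' = b := by
  have hAB : ∀ {u : V}, u ∈ A → u ∉ B := fun h => Finset.disjoint_left.mp hD h
  rcases h.2 with ⟨rfl, hy⟩ | ⟨rfl, hx⟩ | ⟨rfl, -⟩ | ⟨rfl, hx⟩
  · rcases hy with hy | rfl
    · exact absurd hy (hAB · hb')
    · exact ⟨rfl, rfl⟩
  · exact absurd haA (hAB · hb')
  · exact absurd hbB (hAB ha' ·)
  · exact absurd hx (hAB ha' ·)

lemma doubleStar_mem {x y : V} (h : (doubleStar A B a b).Adj x y) (haA : a ∈ A) (hbB : b ∈ B) :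
    (x ∈ A ∨ x ∈ B) ∧ (y ∈ A ∨ y ∈ B) := by
  rcases h.2 with ⟨rfl, hy | rfl⟩ | ⟨rfl, hx | rfl⟩ | ⟨rfl, hy⟩ | ⟨rfl, hx⟩ <;> tauto

/-! ### Arithmetic -/

lemma floor_sq_div_four (n : ℕ) : n ^ 2 / 4 = (n / 2) * (n - n / 2) := by
  have key : ∀ q : ℕ, (q * 4 + 1) / 4 = q := fun q => by omega
  obtain ⟨m, rfl | rfl⟩ := Nat.even_or_odd' n
  · have h1 : (2 * m) ^ 2 = (m * m) * 4 := by ring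
    have h2 : 2 * m / 2 = m := by omega
    have h3 : 2 * m - m = m := by omega
    rw [h1, Nat.mul_div_cancel _ (by norm_num), h2, h3]
  · have h1 : (2 * m + 1) ^ 2 = (m * (m + 1)) * 4 + 1 := by ring
    have h2 : (2 * m + 1) / 2 = m := by omega
    rw [h1, key, h2]
    have h3 : 2 * m + 1 - m = m + 1 := by omega
    rw [h3]

end ForestGraphAux

open ForestGraphAux SimpleGraph

/-- If `K_n` (finite `n ≥ 2`) is a subgraph of `G`, then `K_{⌊n²/4⌋}` is a
subgraph of the forest graph of `G`. -/
theorem clique_forestGraph (G : SimpleGraph V) (n : ℕ) (hn : 2 ≤ n)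
    (s : Finset V) (hs : G.IsNClique n s) :
    ∃ t : Finset {F : SimpleGraph V // IsMaximalForest G F},
      (forestGraph G).IsNClique (n ^ 2 / 4) t := by
  classical
  obtain ⟨hclique, hscard⟩ := hs
  have hGadj : ∀ x ∈ s, ∀ y ∈ s, x ≠ y → G.Adj x y := fun x hx y hy hxy => hclique hx hy hxy
  obtain ⟨A, hAs, hAcard⟩ := Finset.exists_subset_card_eq (show n / 2 ≤ s.card by omega)
  set B := s \ A with hBdef
  have hABdisj : Disjoint A B := Finset.disjoint_sdiff
  have hBcard : B.card = n - n / 2 := by rw [hBdef, Finset.card_sdiff_of_subset hAs, hscard, hAcard]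
  obtain ⟨a, haA⟩ := Finset.card_pos.mp (by omega : 0 < A.card)
  obtain ⟨b, hbB⟩ := Finset.card_pos.mp (by omega : 0 < B.card)
  have hAsub : ∀ x ∈ A, x ∈ s := fun x hx => hAs hx
  have hBsub : ∀ x ∈ B, x ∈ s := fun x hx => (Finset.mem_sdiff.mp hx).1
  have hAB : ∀ {u : V}, u ∈ A → u ∉ B := fun h => Finset.disjoint_left.mp hABdisj h
  have hABne : ∀ x ∈ A, ∀ y ∈ B, x ≠ y := fun x hx y hy h => hAB hx (h ▸ hy)
  have hab : a ≠ b := hABne a haA b hbB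
  set D := doubleStar A B a b with hDdef
  have hDG : D ≤ G := by
    intro x y hxy
    obtain ⟨h1, h2⟩ := doubleStar_mem hxy haA hbB
    exact hGadj x (h1.elim (hAsub x) (hBsub x)) y (h2.elim (hAsub y) (hBsub y)) hxy.1
  obtain ⟨F₀, hF₀max, hDF₀⟩ := exists_maximal_forest G D hDG (doubleStar_isAcyclic hABdisj)
  have hsp₀ := spanning_of_isMaximalForest hF₀max
  obtain ⟨hF₀G, hF₀ac, -⟩ := hF₀max
  have hF₀ab : F₀.Adj a b := hDF₀ (doubleStar_adj_ab hab)
  -- the only cross edge of F₀ between A and B is ab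
  have hcross : ∀ x ∈ A, ∀ y ∈ B, F₀.Adj x y → x = a ∧ y = b := by
    intro x hx y hy hadj
    by_cases hDxy : D.Adj x y
    · exact doubleStar_cross hABdisj hx hy hDxy haA hbB
    · exfalso
      have hbr := (isAcyclic_iff_forall_adj_isBridge.mp hF₀ac) hadj
      rw [isBridge_iff] at hbr
      apply hbr
      have hle : D ≤ F₀ \ fromEdgeSet {s(x, y)} := by
        intro u w hu
        simp only [sdiff_adj, fromEdgeSet_adj, Set.mem_singleton_iff]
        refine ⟨hDF₀ hu, fun hc => ?_⟩
        obtain ⟨hc1, -⟩ := hc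
        rw [Sym2.eq_iff] at hc1
        rcases hc1 with ⟨rfl, rfl⟩ | ⟨rfl, rfl⟩
        · exact hDxy hu
        · exact hDxy hu.symm
      exact (doubleStar_reachable hab (Or.inl hx) (Or.inr hy)).mono hle
  set F₁ := F₀ \ fromEdgeSet {s(a, b)} with hF₁def
  have hF₁le : F₁ ≤ F₀ := sdiff_le
  have hF₁ac : F₁.IsAcyclic := fun v c hc => hF₀ac (c.mapLe hF₁le) (hc.mapLe hF₁le)
  have hF₁adj : ∀ x y : V, F₀.Adj x y → s(x, y) ≠ s(a, b) → F₁.Adj x y := by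
    intro x y h1 h2
    rw [hF₁def, sdiff_adj]
    exact ⟨h1, fun hc => h2 hc.1⟩
  have hreach_aA : ∀ x ∈ A, F₁.Reachable a x := by
    intro x hx
    rcases Classical.em (x = a) with rfl | hxa
    · exact Reachable.refl _
    · refine (hF₁adj a x (hDF₀ (doubleStar_adj_left hx hxa)) ?_).reachable
      intro h
      rcases Sym2.eq_iff.mp h with ⟨-, rfl⟩ | ⟨rfl, -⟩
      · exact hAB hx hbB
      · exact hab rfl
  have hreach_bB : ∀ x ∈ B, F₁.Reachable b x := by
    intro x hx
    rcases Classical.em (x = b) with rfl | hxb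
    · exact Reachable.refl _
    · refine (hF₁adj b x (hDF₀ (doubleStar_adj_right hx hxb)) ?_).reachable
      intro h
      rcases Sym2.eq_iff.mp h with ⟨rfl, -⟩ | ⟨-, rfl⟩
      · exact hab rfl
      · exact hAB haA hx
  have hbridge_ab : ¬F₁.Reachable a b := by
    have hbr := (isAcyclic_iff_forall_adj_isBridge.mp hF₀ac) hF₀ab
    exact isBridge_iff.mp hbr
  -- the swapped forests
  have key : ∀ x ∈ A, ∀ y ∈ B, IsMaximalForest G (F₁ ⊔ edge x y) := by
    intro x hx y hy
    have hxy : x ≠ y := hABne x hx y hy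
    have hGxy : G.Adj x y := hGadj x (hAsub x hx) y (hBsub y hy) hxy
    have hnr : ¬F₁.Reachable x y := fun h =>
      hbridge_ab (((hreach_aA x hx).trans h).trans (hreach_bB y hy).symm)
    have hac : (F₁ ⊔ edge x y).IsAcyclic := isAcyclic_sup_edge_s7 hF₁ac hxy hnr
    have hleG : F₁ ⊔ edge x y ≤ G := sup_le (hF₁le.trans hF₀G) (by
      intro u w hu
      rw [edge_adj] at hu
      rcases hu.1 with ⟨rfl, rfl⟩ | ⟨rfl, rfl⟩
      · exact hGxy
      · exact hGxy.symm)
    refine isMaximalForest_of_spanning hleG hac (fun u w huw => ?_)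
    refine reachable_of_forall_adj (fun p q hpq => ?_) (hsp₀ u w huw)
    by_cases hpq_ab : s(p, q) = s(a, b)
    · have rab : (F₁ ⊔ edge x y).Reachable a b :=
        (((hreach_aA x hx).mono le_sup_left).trans
          (Adj.reachable (by simp [edge_adj, hxy] : (F₁ ⊔ edge x y).Adj x y))).trans
          ((hreach_bB y hy).mono le_sup_left).symm
      rcases Sym2.eq_iff.mp hpq_ab with ⟨rfl, rfl⟩ | ⟨rfl, rfl⟩
      · exact rab
      · exact rab.symm
    · exact ((hF₁adj p q hpq hpq_ab).reachable).mono le_sup_left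
  -- edge sets
  have hab_nondiag : ({s(a, b)} : Set (Sym2 V)) \ {e : Sym2 V | e.IsDiag} = {s(a, b)} := by
    ext e
    constructor
    · exact fun h => h.1
    · rintro rfl
      exact ⟨rfl, by simp [Sym2.isDiag_iff_proj_eq, hab]⟩
  have hedge : ∀ x ∈ A, ∀ y ∈ B, (F₁ ⊔ edge x y).edgeSet =
      (F₀.edgeSet \ {s(a, b)}) ∪ {s(x, y)} := by
    intro x hx y hy
    rw [edgeSet_sup, hF₁def, edgeSet_sdiff, edgeSet_fromEdgeSet, Sym2.diagSet_eq_setOfPred_isDiag, hab_nondiag,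
      edge_edgeSet_of_ne (hABne x hx y hy)]
  have hnotin : ∀ x ∈ A, ∀ y ∈ B, s(x, y) ∉ F₀.edgeSet \ {s(a, b)} := by
    intro x hx y hy ⟨hmem, hne⟩
    rw [mem_edgeSet] at hmem
    obtain ⟨rfl, rfl⟩ := hcross x hx y hy hmem
    exact hne rfl
  have hs2 : ∀ x ∈ A, ∀ y ∈ B, ∀ x' ∈ A, ∀ y' ∈ B, s(x, y) = s(x', y') → x = x' ∧ y = y' := by
    intro x hx y hy x' hx' y' hy' h
    rcases Sym2.eq_iff.mp h with h1 | ⟨rfl, rfl⟩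
    · exact h1
    · exact (hAB hx hy').elim
  have hdiff : ∀ x ∈ A, ∀ y ∈ B, ∀ x' ∈ A, ∀ y' ∈ B, s(x, y) ≠ s(x', y') →
      (F₁ ⊔ edge x y).edgeSet \ (F₁ ⊔ edge x' y').edgeSet = {s(x, y)} := by
    intro x hx y hy x' hx' y' hy' hne
    rw [hedge x hx y hy, hedge x' hx' y' hy']
    ext e
    simp only [Set.mem_diff, Set.mem_union, Set.mem_singleton_iff]
    constructor
    · rintro ⟨h1 | rfl, h2⟩
      · exact absurd (Or.inl h1) h2
      · rfl
    · rintro rfl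
      refine ⟨Or.inr rfl, ?_⟩
      rintro (h1 | h1)
      · exact hnotin x hx y hy h1
      · exact hne h1
  -- the clique in the forest graph
  set f : {p : V × V // p ∈ A ×ˢ B} → {F : SimpleGraph V // IsMaximalForest G F} :=
    fun p => ⟨F₁ ⊔ edge p.1.1 p.1.2,
      key p.1.1 (Finset.mem_product.mp p.2).1 p.1.2 (Finset.mem_product.mp p.2).2⟩ with hfdef
  have hfinj : Function.Injective f := by
    intro p q hpq
    have h1 : p.1.1 ∈ A := (Finset.mem_product.mp p.2).1
    have h2 : p.1.2 ∈ B := (Finset.mem_product.mp p.2).2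
    have h3 : q.1.1 ∈ A := (Finset.mem_product.mp q.2).1
    have h4 : q.1.2 ∈ B := (Finset.mem_product.mp q.2).2
    have hval : F₁ ⊔ edge p.1.1 p.1.2 = F₁ ⊔ edge q.1.1 q.1.2 := congrArg Subtype.val hpq
    by_contra hne
    have hsne : s(p.1.1, p.1.2) ≠ s(q.1.1, q.1.2) := by
      intro h
      obtain ⟨ha', hb'⟩ := hs2 _ h1 _ h2 _ h3 _ h4 h
      exact hne (Subtype.ext (Prod.ext ha' hb'))
    have hmem : s(p.1.1, p.1.2) ∈ (F₁ ⊔ edge p.1.1 p.1.2).edgeSet \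
        (F₁ ⊔ edge q.1.1 q.1.2).edgeSet := by
      rw [hdiff _ h1 _ h2 _ h3 _ h4 hsne]
      rfl
    rw [hval] at hmem
    exact hmem.2 hmem.1
  refine ⟨(A ×ˢ B).attach.image f, ?_, ?_⟩
  · rintro u hu v hv huv
    simp only [Finset.coe_image, Set.mem_image, Finset.mem_coe, Finset.mem_attach] at hu hv
    obtain ⟨p, -, rfl⟩ := hu
    obtain ⟨q, -, rfl⟩ := hv
    have h1 : p.1.1 ∈ A := (Finset.mem_product.mp p.2).1
    have h2 : p.1.2 ∈ B := (Finset.mem_product.mp p.2).2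
    have h3 : q.1.1 ∈ A := (Finset.mem_product.mp q.2).1
    have h4 : q.1.2 ∈ B := (Finset.mem_product.mp q.2).2
    have hpq : p ≠ q := fun h => huv (by rw [h])
    have hsne : s(p.1.1, p.1.2) ≠ s(q.1.1, q.1.2) := by
      intro h
      obtain ⟨ha', hb'⟩ := hs2 _ h1 _ h2 _ h3 _ h4 h
      exact hpq (Subtype.ext (Prod.ext ha' hb'))
    constructor
    · rw [show (f p).1 = F₁ ⊔ edge p.1.1 p.1.2 from rfl,
        show (f q).1 = F₁ ⊔ edge q.1.1 q.1.2 from rfl,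
        hdiff _ h1 _ h2 _ h3 _ h4 hsne]
      exact Set.encard_singleton _
    · rw [show (f p).1 = F₁ ⊔ edge p.1.1 p.1.2 from rfl,
        show (f q).1 = F₁ ⊔ edge q.1.1 q.1.2 from rfl,
        hdiff _ h3 _ h4 _ h1 _ h2 hsne.symm]
      exact Set.encard_singleton _
  · rw [Finset.card_image_of_injective _ hfinj, Finset.card_attach, Finset.card_product,
      hAcard, hBcard, floor_sq_div_four n]
end

section
/- If a graph G has a cycle of finite length n with n ≥ 3, then the forest graph F(G) contains K_n as a subgraph. -/
open Cardinal

variable {V : Type*}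

open SimpleGraph

section Aux
variable {V : Type*}

lemma bot_isAcyclic' : (⊥ : SimpleGraph V).IsAcyclic := by
  intro x w hw
  cases w with
  | nil => exact hw.ne_nil rfl
  | cons h _ => exact h

lemma chain_edges {S : Set (SimpleGraph V)} (hne : S.Nonempty)
    (hS : IsChain (· ≤ ·) S) (l : List (Sym2 V))
    (h : ∀ e ∈ l, ∃ F ∈ S, e ∈ F.edgeSet) : ∃ F ∈ S, ∀ e ∈ l, e ∈ F.edgeSet := by
  induction l with
  | nil => obtain ⟨F, hF⟩ := hne; exact ⟨F, hF, by simp⟩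
  | cons a l ih =>
    obtain ⟨F, hF, hFl⟩ := ih (fun e he => h e (List.mem_cons_of_mem _ he))
    obtain ⟨F', hF', ha⟩ := h a List.mem_cons_self
    rcases eq_or_ne F F' with rfl | hne'
    · exact ⟨F, hF, fun e he => by
        rcases List.mem_cons.1 he with rfl | he
        · exact ha
        · exact hFl e he⟩
    rcases hS hF hF' hne' with hle | hle
    · exact ⟨F', hF', fun e he => by
        rcases List.mem_cons.1 he with rfl | he
        · exact ha
        · exact edgeSet_mono hle (hFl e he)⟩
    · exact ⟨F, hF, fun e he => by
        rcases List.mem_cons.1 he with rfl | he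
        · exact edgeSet_mono hle ha
        · exact hFl e he⟩

lemma exists_maximal_forest (G F₀ : SimpleGraph V) (h0 : F₀ ≤ G) (ha : F₀.IsAcyclic) :
    ∃ F, IsMaximalForest G F ∧ F₀ ≤ F := by
  have key : ∀ c ⊆ {F : SimpleGraph V | F ≤ G ∧ F.IsAcyclic}, IsChain (· ≤ ·) c →
      ∀ y ∈ c, ∃ ub ∈ {F : SimpleGraph V | F ≤ G ∧ F.IsAcyclic}, ∀ z ∈ c, z ≤ ub := by
    intro c hcs hchain y hy
    refine ⟨sSup c, ⟨sSup_le fun F hF => (hcs hF).1, ?_⟩, fun z hz => le_sSup hz⟩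
    intro x w hw
    have hedges : ∀ e ∈ w.edges, ∃ F ∈ c, e ∈ F.edgeSet := by
      intro e he
      have := w.edges_subset_edgeSet he
      induction e with
      | h a b =>
        rw [SimpleGraph.mem_edgeSet, sSup_adj] at this
        obtain ⟨F, hF, hadj⟩ := this
        exact ⟨F, hF, hadj⟩
    obtain ⟨F, hF, hall⟩ := chain_edges ⟨y, hy⟩ hchain w.edges hedges
    exact absurd (hw.transfer hall) ((hcs hF).2 _)
  obtain ⟨F, hF0, hFmem, hFmax⟩ :=
    zorn_le_nonempty₀ {F : SimpleGraph V | F ≤ G ∧ F.IsAcyclic} key F₀ ⟨h0, ha⟩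
  exact ⟨F, ⟨hFmem.1, hFmem.2, fun F' h1 h2 h3 => le_antisymm (hFmax ⟨h1, h2⟩ h3) h3⟩, hF0⟩

lemma exists_adj_mem_edges {G : SimpleGraph V} {a c : V} (r : G.Walk a c) (h : a ≠ c) :
    ∃ z, G.Adj a z ∧ s(a, z) ∈ r.edges := by
  cases r with
  | nil => exact absurd rfl h
  | cons h' r' => exact ⟨_, h', by simp⟩

lemma isAcyclic_fromEdgeSet_path {G : SimpleGraph V} {a b : V} (p : G.Walk a b)
    (hp : p.IsPath) : (SimpleGraph.fromEdgeSet {e | e ∈ p.edges}).IsAcyclic := by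
  classical
  induction p with
  | nil =>
    rename_i u
    have hbot : SimpleGraph.fromEdgeSet {e : Sym2 V | e ∈ (SimpleGraph.Walk.nil : G.Walk u u).edges} = ⊥ := by
      ext x y; simp
    rw [hbot]
    exact bot_isAcyclic'
  | @cons a b' c h p ih =>
    rw [SimpleGraph.Walk.cons_isPath_iff] at hp
    intro x w hw
    have hadj_only : ∀ z, (SimpleGraph.fromEdgeSet {e | e ∈ (SimpleGraph.Walk.cons h p).edges}).Adj a z → z = b' := by
      intro z hz
      rw [fromEdgeSet_adj] at hz
      obtain ⟨hz1, hz2⟩ := hz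
      simp only [SimpleGraph.Walk.edges_cons, List.mem_cons, Set.mem_setOf_eq] at hz1
      rcases hz1 with h1 | h1
      · rcases Sym2.eq_iff.1 h1 with ⟨_, rfl⟩ | ⟨rfl, rfl⟩
        · rfl
        · exact absurd rfl hz2
      · exact absurd (SimpleGraph.Walk.fst_mem_support_of_mem_edges p h1) hp.2
    by_cases hmem : s(a, b') ∈ w.edges
    · -- rotate so that the cycle starts at a
      have haw : a ∈ w.support := w.fst_mem_support_of_mem_edges hmem
      have hw' := hw.rotate haw
      obtain ⟨y, w₂, hadj₁, hww⟩ : ∃ (y : V) (w₂ : _root_.SimpleGraph.Walk _ y a)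
          (hadj₁ : (SimpleGraph.fromEdgeSet {e | e ∈ (SimpleGraph.Walk.cons h p).edges}).Adj a y),
          w.rotate a haw = SimpleGraph.Walk.cons hadj₁ w₂ := by
        cases hww : w.rotate a haw with
        | nil => rw [hww] at hw'; exact absurd rfl hw'.ne_nil
        | cons hadj₁ w₂ => exact ⟨_, w₂, hadj₁, rfl⟩
      have hy := hadj_only _ hadj₁
      subst hy
      rw [hww] at hw'
      have hnodup := hw'.edges_nodup
      rw [SimpleGraph.Walk.edges_cons] at hnodup
      have hne : a ≠ y := hadj₁.ne
      obtain ⟨z, hz, hzmem⟩ := exists_adj_mem_edges w₂.reverse hne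
      have hzb := hadj_only _ hz
      subst hzb
      rw [SimpleGraph.Walk.edges_reverse, List.mem_reverse] at hzmem
      exact (List.nodup_cons.1 hnodup).1 hzmem
    · -- transfer to the smaller graph
      have hsub : ∀ e ∈ w.edges, e ∈ (SimpleGraph.fromEdgeSet {e | e ∈ p.edges}).edgeSet := by
        intro e he
        have h1 := w.edges_subset_edgeSet he
        rw [SimpleGraph.edgeSet_fromEdgeSet] at h1
        obtain ⟨h1, h2⟩ := h1
        simp only [SimpleGraph.Walk.edges_cons, List.mem_cons, Set.mem_setOf_eq] at h1
        rcases h1 with rfl | h1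
        · exact absurd he hmem
        · rw [SimpleGraph.edgeSet_fromEdgeSet]
          exact ⟨h1, h2⟩
      exact absurd (hw.transfer hsub) (ih hp.1 _)

lemma single_edge_le {G : SimpleGraph V} {u w : V} (h : G.Adj u w) :
    SimpleGraph.fromEdgeSet {s(u, w)} ≤ G := by
  intro a b hab
  rw [fromEdgeSet_adj, Set.mem_singleton_iff] at hab
  obtain ⟨h1, _⟩ := hab
  rcases Sym2.eq_iff.1 h1 with ⟨rfl, rfl⟩ | ⟨rfl, rfl⟩
  · exact h
  · exact h.symm

lemma maximal_forest_iff {G F : SimpleGraph V} (hle : F ≤ G) (hac : F.IsAcyclic) :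
    (∀ F' : SimpleGraph V, F' ≤ G → F'.IsAcyclic → F ≤ F' → F' = F) ↔
      ∀ ⦃u w : V⦄, G.Adj u w → F.Reachable u w := by
  classical
  constructor
  · intro hmax u w hadj
    by_cases hFadj : F.Adj u w
    · exact hFadj.reachable
    have hmemF : s(u, w) ∉ F.edgeSet := hFadj
    set F' := F ⊔ SimpleGraph.fromEdgeSet {s(u, w)} with hF'def
    have hF'G : F' ≤ G := sup_le hle (single_edge_le hadj)
    have hFF' : F ≤ F' := le_sup_left
    have hF'adj : F'.Adj u w := by
      apply (SimpleGraph.sup_adj _ _ _ _).2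
      right
      rw [fromEdgeSet_adj]
      exact ⟨rfl, hadj.ne⟩
    have hF'ne : F' ≠ F := fun hE => hFadj (hE ▸ hF'adj)
    have hF'nac : ¬F'.IsAcyclic := fun hF'ac => hF'ne (hmax F' hF'G hF'ac hFF')
    rw [SimpleGraph.IsAcyclic] at hF'nac
    push_neg at hF'nac
    obtain ⟨x, p, hp⟩ := hF'nac
    by_cases hmem : s(u, w) ∈ p.edges
    · have hreach : (F' \ SimpleGraph.fromEdgeSet {s(u, w)}).Reachable u w :=
        (SimpleGraph.adj_and_reachable_delete_edges_iff_exists_cycle.2 ⟨x, p, hp, hmem⟩).2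
      refine hreach.mono ?_
      intro a b hab
      rw [SimpleGraph.sdiff_adj] at hab
      obtain ⟨hab1, hab2⟩ := hab
      rcases (SimpleGraph.sup_adj _ _ _ _).1 hab1 with h1 | h1
      · exact h1
      · exact absurd h1 hab2
    · exfalso
      have hsub : ∀ e ∈ p.edges, e ∈ F.edgeSet := by
        intro e he
        have h1 := p.edges_subset_edgeSet he
        rw [hF'def, SimpleGraph.edgeSet_sup] at h1
        rcases h1 with h1 | h1
        · exact h1
        · rw [SimpleGraph.edgeSet_fromEdgeSet] at h1
          obtain ⟨h1, -⟩ := h1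
          rw [Set.mem_singleton_iff] at h1
          exact absurd (h1 ▸ he) hmem
      exact absurd (hp.transfer hsub) (hac _)
  · intro hreach F' hF'G hF'ac hFF'
    by_contra hne
    have hnle : ¬F' ≤ F := fun hle2 => hne (le_antisymm hle2 hFF')
    rw [← SimpleGraph.edgeSet_subset_edgeSet, Set.not_subset] at hnle
    obtain ⟨e, heF', heF⟩ := hnle
    induction e with
    | h u w =>
      rw [SimpleGraph.mem_edgeSet] at heF'
      have hR : F.Reachable u w := hreach (hF'G heF')
      obtain ⟨r⟩ := hR
      have hrp : (r.toPath : F.Walk u w).IsPath := r.toPath.2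
      set rp : F.Walk u w := ↑r.toPath with hrpdef
      have hrsub : ∀ e ∈ rp.edges, e ∈ F'.edgeSet :=
        fun e he => edgeSet_mono hFF' (rp.edges_subset_edgeSet he)
      have hrp' : (rp.transfer F' hrsub).IsPath := hrp.transfer hrsub
      have hmem' : s(w, u) ∉ (rp.transfer F' hrsub).edges := by
        rw [SimpleGraph.Walk.edges_transfer]
        intro hmem
        rw [Sym2.eq_swap] at hmem
        exact heF (rp.edges_subset_edgeSet hmem)
      have hcyc := SimpleGraph.Path.cons_isCycle ⟨rp.transfer F' hrsub, hrp'⟩ heF'.symm hmem'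
      exact absurd hcyc (hF'ac _)

lemma reachable_deleteEdge_of_reachable {G : SimpleGraph V} {x₀ y₀ : V}
    (hr : (G.deleteEdges {s(x₀, y₀)}).Reachable x₀ y₀) {x y : V} (h : G.Reachable x y) :
    (G.deleteEdges {s(x₀, y₀)}).Reachable x y := by
  obtain ⟨w⟩ := h
  induction w with
  | nil => exact SimpleGraph.Reachable.refl _
  | @cons a c d h' p ih =>
    refine SimpleGraph.Reachable.trans ?_ ih
    by_cases he : s(a, c) = s(x₀, y₀)
    · rcases Sym2.eq_iff.1 he with ⟨rfl, rfl⟩ | ⟨rfl, rfl⟩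
      · exact hr
      · exact hr.symm
    · exact SimpleGraph.Adj.reachable (by rw [SimpleGraph.deleteEdges_adj]; exact ⟨h', by simpa using he⟩)

lemma master {G : SimpleGraph V} {v b : V} (hadj : G.Adj v b) (q : G.Walk b v)
    (hq : q.IsPath) (he₁ : s(v, b) ∉ q.edges)
    {F₁ : SimpleGraph V} (hF₁ : IsMaximalForest G F₁)
    (hPF₁ : SimpleGraph.fromEdgeSet {e | e ∈ q.edges} ≤ F₁)
    (e : Sym2 V) (he : e ∈ (SimpleGraph.Walk.cons hadj q).edges) :
    IsMaximalForest G ((F₁ ⊔ SimpleGraph.fromEdgeSet {s(v, b)}).deleteEdges {e}) := by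
  classical
  induction e using Sym2.ind with
  | _ x₀ y₀ =>
  set e : Sym2 V := s(x₀, y₀) with hedef
  obtain ⟨hF₁G, hF₁ac, hF₁max⟩ := hF₁
  have hqF₁ : ∀ f ∈ q.edges, f ∈ F₁.edgeSet := by
    intro f hf
    apply edgeSet_mono hPF₁
    rw [SimpleGraph.edgeSet_fromEdgeSet]
    exact ⟨hf, SimpleGraph.not_isDiag_of_mem_edgeSet G (q.edges_subset_edgeSet hf)⟩
  have hccyc : (SimpleGraph.Walk.cons hadj q).IsCycle :=
    (SimpleGraph.Walk.cons_isCycle_iff q hadj).2 ⟨hq, he₁⟩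
  set H := F₁ ⊔ SimpleGraph.fromEdgeSet {s(v, b)} with hHdef
  have hHG : H ≤ G := sup_le hF₁G (single_edge_le hadj)
  have hcH : ∀ f ∈ (SimpleGraph.Walk.cons hadj q).edges, f ∈ H.edgeSet := by
    intro f hf
    rw [hHdef, SimpleGraph.edgeSet_sup]
    rw [SimpleGraph.Walk.edges_cons, List.mem_cons] at hf
    rcases hf with rfl | hf
    · right
      rw [SimpleGraph.edgeSet_fromEdgeSet]
      exact ⟨rfl, by simpa using hadj.ne⟩
    · exact Or.inl (hqF₁ f hf)
  set cH := (SimpleGraph.Walk.cons hadj q).transfer H hcH with hcHdef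
  have hcHcyc : cH.IsCycle := hccyc.transfer hcH
  have hcHedges : cH.edges = (SimpleGraph.Walk.cons hadj q).edges :=
    SimpleGraph.Walk.edges_transfer _ hcH
  set Fe := H.deleteEdges {e} with hFedef
  have hFeH : Fe ≤ H := SimpleGraph.deleteEdges_le _
  have hFeG : Fe ≤ G := hFeH.trans hHG
  have hFeEdge : Fe.edgeSet = H.edgeSet \ {e} := SimpleGraph.edgeSet_deleteEdges _
  have hHF₁ : ∀ f ∈ H.edgeSet, f ≠ s(v, b) → f ∈ F₁.edgeSet := by
    intro f hf hne
    rw [hHdef, SimpleGraph.edgeSet_sup] at hf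
    rcases hf with hf | hf
    · exact hf
    · rw [SimpleGraph.edgeSet_fromEdgeSet] at hf
      exact absurd hf.1 hne
  -- acyclicity of Fe
  have hFeac : Fe.IsAcyclic := by
    intro x w hw
    by_cases h1 : s(v, b) ∈ w.edges
    · -- e ≠ s(v,b) since s(v,b) survives deletion
      have hene : e ≠ s(v, b) := by
        intro hcontra
        have := w.edges_subset_edgeSet h1
        rw [hFeEdge] at this
        exact this.2 hcontra.symm
      have hreach : (Fe \ SimpleGraph.fromEdgeSet {s(v, b)}).Reachable v b :=
        (SimpleGraph.adj_and_reachable_delete_edges_iff_exists_cycle.2 ⟨x, w, hw, h1⟩).2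
      have hle' : (Fe \ SimpleGraph.fromEdgeSet {s(v, b)}) ≤ F₁.deleteEdges {e} := by
        intro a b' hab
        rw [SimpleGraph.sdiff_adj] at hab
        obtain ⟨hab1, hab2⟩ := hab
        rw [hFedef, SimpleGraph.deleteEdges_adj] at hab1
        obtain ⟨hab1, hab3⟩ := hab1
        rw [SimpleGraph.deleteEdges_adj]
        have habne : s(a, b') ≠ s(v, b) := by
          intro hcontra
          exact hab2 (by rw [fromEdgeSet_adj]; exact ⟨hcontra, hab1.ne⟩)
        exact ⟨hHF₁ _ hab1 habne, hab3⟩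
      have hreach2 : (F₁.deleteEdges {e}).Reachable v b := hreach.mono hle'
      obtain ⟨r0⟩ := hreach2
      set r : (F₁.deleteEdges {e}).Walk v b := ↑r0.toPath with hrdef
      have hrpath : r.IsPath := r0.toPath.2
      have hrsub : ∀ f ∈ r.edges, f ∈ F₁.edgeSet := by
        intro f hf
        have := r.edges_subset_edgeSet hf
        rw [SimpleGraph.edgeSet_deleteEdges] at this
        exact this.1
      have hrne : e ∉ r.edges := by
        intro hf
        have := r.edges_subset_edgeSet hf
        rw [SimpleGraph.edgeSet_deleteEdges] at this
        exact this.2 rfl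
      set r' := r.transfer F₁ hrsub with hr'def
      have hr'path : r'.IsPath := hrpath.transfer hrsub
      have hr'edges : r'.edges = r.edges := SimpleGraph.Walk.edges_transfer _ hrsub
      set q' := q.transfer F₁ hqF₁ with hq'def
      have hq'path : q'.reverse.IsPath := (hq.transfer hqF₁).reverse
      have hq'edges : q'.edges = q.edges := SimpleGraph.Walk.edges_transfer _ hqF₁
      have heq' : e ∈ q'.reverse.edges := by
        rw [SimpleGraph.Walk.edges_reverse, List.mem_reverse, hq'edges]
        rw [SimpleGraph.Walk.edges_cons, List.mem_cons] at he
        rcases he with hcontra | he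
        · exact absurd hcontra hene
        · exact he
      have huniq := (SimpleGraph.isAcyclic_iff_path_unique.1 hF₁ac)
        ⟨r', hr'path⟩ ⟨q'.reverse, hq'path⟩
      have : e ∈ r'.edges := by
        rw [Subtype.mk_eq_mk] at huniq
        rw [huniq]
        exact heq'
      rw [hr'edges] at this
      exact hrne this
    · -- transfer to F₁
      have hsub : ∀ f ∈ w.edges, f ∈ F₁.edgeSet := by
        intro f hf
        have h2 := w.edges_subset_edgeSet hf
        rw [hFeEdge] at h2
        refine hHF₁ _ h2.1 ?_
        rintro rfl
        exact h1 hf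
      exact absurd (hw.transfer hsub) (hF₁ac _)
  refine ⟨hFeG, hFeac, ?_⟩
  rw [maximal_forest_iff hFeG hFeac]
  intro u w huw
  have hF₁reach : F₁.Reachable u w := (maximal_forest_iff hF₁G hF₁ac).1 hF₁max huw
  have hHreach : H.Reachable u w := hF₁reach.mono le_sup_left
  have hbase : Fe.Reachable x₀ y₀ := by
    have hmem : e ∈ cH.edges := by rw [hcHedges]; exact he
    have := (SimpleGraph.adj_and_reachable_delete_edges_iff_exists_cycle.2
      ⟨_, cH, hcHcyc, hmem⟩).2
    exact this
  exact reachable_deleteEdge_of_reachable hbase hHreach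


end Aux

/-- If `G` has a cycle of finite length `n ≥ 3`, then the forest graph of `G`
contains `K_n`. -/
theorem cycle_clique_forestGraph (G : SimpleGraph V) (n : ℕ) (hn : 3 ≤ n)
    (v : V) (c : G.Walk v v) (hc : c.IsCycle) (hl : c.length = n) :
    ∃ t : Finset {F : SimpleGraph V // IsMaximalForest G F},
      (forestGraph G).IsNClique n t := by
  classical
  cases c with
  | nil => rw [SimpleGraph.Walk.length_nil] at hl; omega
  | @cons _ b _ hadj q =>
    rw [SimpleGraph.Walk.cons_isCycle_iff] at hc
    obtain ⟨hq, he₁⟩ := hc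
    have hqG : SimpleGraph.fromEdgeSet {e | e ∈ q.edges} ≤ G := by
      intro a b' hab
      rw [SimpleGraph.fromEdgeSet_adj] at hab
      exact (SimpleGraph.mem_edgeSet G).1 (q.edges_subset_edgeSet hab.1)
    obtain ⟨F₁, hF₁, hPF₁⟩ :=
      exists_maximal_forest G _ hqG (isAcyclic_fromEdgeSet_path q hq)
    set H := F₁ ⊔ SimpleGraph.fromEdgeSet {s(v, b)} with hHdef
    have hqF₁ : ∀ f ∈ q.edges, f ∈ F₁.edgeSet := by
      intro f hf
      apply SimpleGraph.edgeSet_mono hPF₁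
      rw [SimpleGraph.edgeSet_fromEdgeSet]
      exact ⟨hf, SimpleGraph.not_isDiag_of_mem_edgeSet G (q.edges_subset_edgeSet hf)⟩
    have hcH : ∀ f ∈ (SimpleGraph.Walk.cons hadj q).edges, f ∈ H.edgeSet := by
      intro f hf
      rw [hHdef, SimpleGraph.edgeSet_sup]
      rw [SimpleGraph.Walk.edges_cons, List.mem_cons] at hf
      rcases hf with rfl | hf
      · right
        rw [SimpleGraph.edgeSet_fromEdgeSet]
        exact ⟨rfl, by simpa using hadj.ne⟩
      · exact Or.inl (hqF₁ f hf)
    set EC := (SimpleGraph.Walk.cons hadj q).edges with hECdef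
    have hEC : ∀ e ∈ EC.toFinset, IsMaximalForest G (H.deleteEdges {e}) := by
      intro e hmem
      exact master hadj q hq he₁ hF₁ hPF₁ e (List.mem_toFinset.1 hmem)
    set f : {e // e ∈ EC.toFinset} → {F : SimpleGraph V // IsMaximalForest G F} :=
      fun p => ⟨H.deleteEdges {p.1}, hEC p.1 p.2⟩ with hfdef
    have hdiff : ∀ e ∈ EC.toFinset, ∀ e' ∈ EC.toFinset, e ≠ e' →
        (H.deleteEdges {e}).edgeSet \ (H.deleteEdges {e'}).edgeSet = {e'} := by
      intro e he e' he' hne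
      have he'H : e' ∈ H.edgeSet := hcH e' (List.mem_toFinset.1 he')
      ext g
      simp only [SimpleGraph.edgeSet_deleteEdges, Set.mem_diff, Set.mem_singleton_iff,
        Set.mem_setOf_eq, not_and, not_not]
      constructor
      · rintro ⟨⟨hg1, hg2⟩, hg3⟩
        exact hg3 hg1
      · rintro rfl
        exact ⟨⟨he'H, fun hcontra => hne hcontra.symm⟩, fun _ => rfl⟩
    have hinj : Function.Injective f := by
      intro p p' hpp'
      rw [hfdef, Subtype.mk_eq_mk] at hpp'
      ext1
      by_contra hne
      have h1 := hdiff p.1 p.2 p'.1 p'.2 hne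
      rw [hpp'] at h1
      simp only [Set.diff_self] at h1
      exact (Set.singleton_ne_empty p'.1).symm h1
    refine ⟨Finset.image f EC.toFinset.attach, ?_, ?_⟩
    · intro x hx y hy hxy
      simp only [Finset.coe_image, Set.mem_image, Finset.mem_coe, Finset.mem_attach,
        true_and] at hx hy
      obtain ⟨⟨e, he⟩, -, rfl⟩ := hx
      obtain ⟨⟨e', he'⟩, -, rfl⟩ := hy
      have hee' : e ≠ e' := by
        rintro rfl
        exact hxy rfl
      show Set.encard (_ \ _) = 1 ∧ Set.encard (_ \ _) = 1
      constructor
      · rw [hfdef]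
        simp only
        rw [hdiff e he e' he' hee']
        exact Set.encard_singleton _
      · rw [hfdef]
        simp only
        rw [hdiff e' he' e he hee'.symm]
        exact Set.encard_singleton _
    · have hnodup : EC.Nodup :=
        ((SimpleGraph.Walk.cons_isCycle_iff q hadj).2 ⟨hq, he₁⟩).isTrail.edges_nodup
      rw [Finset.card_image_of_injective _ hinj, Finset.card_attach,
        List.toFinset_card_of_nodup hnodup, hECdef, SimpleGraph.Walk.length_edges, hl]
end

section
/- If a graph G contains two edge-disjoint triangles, then the second iterated forest graph F(F(G)) contains K_9 as a subgraph. -/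
open Cardinal

variable {V : Type*}

namespace K9aux
open SimpleGraph

variable {α : Type*}

lemma not_acyclic_of_cycle_edges {F K : SimpleGraph α} {u : α} {p : K.Walk u u}
    (hp : p.IsCycle) (h : ∀ e ∈ p.edges, e ∈ F.edgeSet) : ¬ F.IsAcyclic := fun hF =>
  hF (p.transfer F h) (hp.transfer h)

lemma reachable_of_sup {A B : SimpleGraph α}
    (h : ∀ x y, B.Adj x y → A.Reachable x y) :
    ∀ {a b : α}, (A ⊔ B).Reachable a b → A.Reachable a b := by
  intro a b hab
  obtain ⟨w⟩ := hab
  induction w with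
  | nil => exact Reachable.refl _
  | cons h' _ ih =>
    rcases (sup_adj _ _ _ _).mp h' with h'' | h''
    · exact (h''.reachable).trans ih
    · exact (h _ _ h'').trans ih

lemma not_reachable_of_notmem {A : SimpleGraph α} {a b : α}
    (hb : ∀ e ∈ A.edgeSet, b ∉ e) (hab : a ≠ b) : ¬ A.Reachable a b := by
  intro h
  obtain ⟨w⟩ := h.symm
  cases w with
  | nil => exact hab rfl
  | cons h' w => exact hb _ ((SimpleGraph.mem_edgeSet A).mpr h') (Sym2.mem_mk_left _ _)

lemma edgeSet_fromEdgeSet_of_subset {K : SimpleGraph α} {s : Set (Sym2 α)}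
    (h : s ⊆ K.edgeSet) : (fromEdgeSet s).edgeSet = s := by
  rw [edgeSet_fromEdgeSet]
  rw [sdiff_eq_self_iff_disjoint]
  rw [Set.disjoint_left]
  intro e hd hs
  exact (K.not_isDiag_of_mem_edgeSet (h hs)) hd

lemma fromEdgeSet_le_of_subset {K : SimpleGraph α} {s : Set (Sym2 α)}
    (h : s ⊆ K.edgeSet) : fromEdgeSet s ≤ K := by
  have := fromEdgeSet_mono h
  rwa [fromEdgeSet_edgeSet] at this

lemma acyclic_sup_edge {A : SimpleGraph α} {a b : α} (hA : A.IsAcyclic)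
    (h : ¬ A.Reachable a b) : (A ⊔ fromEdgeSet {s(a,b)}).IsAcyclic := by
  have hab : a ≠ b := fun he => h (he ▸ Reachable.refl a)
  intro u p hp
  by_cases hmem : s(a,b) ∈ p.edges
  · have h2 := (adj_and_reachable_delete_edges_iff_exists_cycle.mpr ⟨u, p, hp, hmem⟩).2
    apply h
    refine h2.mono ?_
    rw [← edgeSet_subset_edgeSet, deleteEdges, edgeSet_sdiff, edgeSet_sup, edgeSet_fromEdgeSet]
    intro e he
    rcases he with ⟨he1 | he1, he2⟩
    · exact he1
    · exact absurd he1 (fun hh => he2 ⟨hh.1, fun hd => (A ⊔ fromEdgeSet {s(a,b)}).not_isDiag_of_mem_edgeSet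
        (by rw [edgeSet_sup, edgeSet_fromEdgeSet]; exact Or.inr hh) hd⟩)
  · refine not_acyclic_of_cycle_edges hp (fun e he => ?_) hA
    have := p.edges_subset_edgeSet he
    rw [edgeSet_sup, edgeSet_fromEdgeSet] at this
    rcases this with h1 | h1
    · exact h1
    · exact absurd (h1.1 : e ∈ ({s(a,b)} : Set _)) (by rintro rfl; exact hmem he)

lemma isMaximalForest_of_spanning {H F : SimpleGraph α} (hle : F ≤ H) (hac : F.IsAcyclic)
    (hsp : ∀ x y, H.Adj x y → F.Reachable x y) : IsMaximalForest H F := by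
  classical
  refine ⟨hle, hac, fun F' hF'le hF'ac hFF' => ?_⟩
  refine le_antisymm (fun x y hxy => ?_) hFF'
  by_contra hF
  obtain ⟨w⟩ := hsp x y (hF'le hxy)
  have hsub : ∀ e ∈ w.toPath.1.edges, e ∈ F'.edgeSet := fun e he =>
    edgeSet_subset_edgeSet.mpr hFF' (w.toPath.1.edges_subset_edgeSet he)
  have hpath : ((w.toPath.1).transfer F' hsub).IsPath := (w.toPath.2).transfer hsub
  have hne : s(y, x) ∉ ((w.toPath.1).transfer F' hsub).edges := by
    rw [Walk.edges_transfer]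
    intro hmem
    have := w.toPath.1.edges_subset_edgeSet hmem
    rw [Sym2.eq_swap] at this
    exact hF ((mem_edgeSet F).mp this)
  exact hF'ac _ (Path.cons_isCycle ⟨_, hpath⟩ ((hxy : F'.Adj x y).symm) hne)

lemma spanning_of_isMaximalForest {H F : SimpleGraph α} (h : IsMaximalForest H F)
    {x y : α} (hxy : H.Adj x y) : F.Reachable x y := by
  by_contra hr
  have hac := acyclic_sup_edge h.2.1 hr
  have hle : F ⊔ fromEdgeSet {s(x,y)} ≤ H :=
    sup_le h.1 (fromEdgeSet_le_of_subset (by simpa using hxy))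
  have heq := h.2.2 _ hle hac le_sup_left
  have : (F ⊔ fromEdgeSet {s(x,y)}).Adj x y := by
    rw [sup_adj]; exact Or.inr ((fromEdgeSet_adj _).mpr ⟨rfl, hxy.ne⟩)
  rw [heq] at this
  exact hr this.reachable

lemma chain_edges {c : Set (SimpleGraph α)} (hc : IsChain (· ≤ ·) c) {F₀ : SimpleGraph α}
    (hF₀ : F₀ ∈ c) (l : List (Sym2 α)) (h : ∀ e ∈ l, ∃ F ∈ c, e ∈ F.edgeSet) :
    ∃ F ∈ c, ∀ e ∈ l, e ∈ F.edgeSet := by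
  induction l with
  | nil => exact ⟨F₀, hF₀, by simp⟩
  | cons e l ih =>
    obtain ⟨F₁, h₁, hall⟩ := ih (fun f hf => h f (List.mem_cons_of_mem _ hf))
    obtain ⟨F₂, h₂, he₂⟩ := h e List.mem_cons_self
    rcases hc.total h₁ h₂ with h12 | h21
    · exact ⟨F₂, h₂, fun f hf => by
        rcases List.mem_cons.mp hf with rfl | hf
        · exact he₂
        · exact edgeSet_subset_edgeSet.mpr h12 (hall f hf)⟩
    · exact ⟨F₁, h₁, fun f hf => by
        rcases List.mem_cons.mp hf with rfl | hf
        · exact edgeSet_subset_edgeSet.mpr h21 he₂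
        · exact hall f hf⟩

lemma exists_maximalForest_ge {H P : SimpleGraph α} (hP : P ≤ H) (hac : P.IsAcyclic) :
    ∃ M, IsMaximalForest H M ∧ P ≤ M := by
  obtain ⟨M, hPM, hMmem, hMmax⟩ := zorn_le_nonempty₀
    {F : SimpleGraph α | F ≤ H ∧ F.IsAcyclic ∧ P ≤ F}
    (fun c hcsub hchain y hy => by
      refine ⟨sSup c, ⟨sSup_le (fun F hF => (hcsub hF).1), ?_, le_trans (hcsub hy).2.2 (le_sSup hy)⟩,
        fun z hz => le_sSup hz⟩
      intro u p hp
      have hmem : ∀ e ∈ p.edges, ∃ F ∈ c, e ∈ F.edgeSet := by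
        intro e he
        have := p.edges_subset_edgeSet he
        induction e with
        | h a b =>
          rw [mem_edgeSet, sSup_adj] at this
          obtain ⟨F, hF, hadj⟩ := this
          exact ⟨F, hF, (mem_edgeSet F).mpr hadj⟩
      obtain ⟨F, hF, hall⟩ := chain_edges hchain hy p.edges hmem
      exact not_acyclic_of_cycle_edges hp hall (hcsub hF).2.1)
    P ⟨le_refl P |>.trans hP, hac, le_refl P⟩
  exact ⟨M, ⟨hMmem.1, hMmem.2.1, fun F' hF'le hF'ac hMF' =>
    le_antisymm (hMmax ⟨hF'le, hF'ac, hMmem.2.2.trans hMF'⟩ hMF') hMF'⟩, hPM⟩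

lemma acyclic_sup_new {A : SimpleGraph α} {a b : α} (hA : A.IsAcyclic)
    (hb : ∀ e ∈ A.edgeSet, b ∉ e) (hab : a ≠ b) :
    (A ⊔ fromEdgeSet {s(a,b)}).IsAcyclic :=
  acyclic_sup_edge hA (not_reachable_of_notmem hb hab)

lemma bot_acyclic : (⊥ : SimpleGraph α).IsAcyclic := by
  intro u p hp
  cases p with
  | nil => exact hp.ne_nil rfl
  | cons h _ => exact h

lemma mem_support_of_mem_edges' {K : SimpleGraph α} {x y : α} (q : K.Walk x y) {e : Sym2 α}
    (he : e ∈ q.edges) {u : α} (hu : u ∈ e) : u ∈ q.support := by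
  obtain ⟨w, rfl⟩ := Sym2.mem_iff_exists.mp hu
  exact q.fst_mem_support_of_mem_edges he

lemma pathGraph_acyclic {K : SimpleGraph α} {u v : α} (p : K.Walk u v) (hp : p.IsPath) :
    (fromEdgeSet {e | e ∈ p.edges}).IsAcyclic := by
  induction p with
  | nil =>
    simp only [Walk.edges_nil, List.not_mem_nil, Set.setOf_false, fromEdgeSet_empty]
    exact bot_acyclic
  | @cons a w b h q ih =>
    rw [Walk.cons_isPath_iff] at hp
    have heq : (fromEdgeSet {e | e ∈ (Walk.cons h q).edges})
        = fromEdgeSet {e | e ∈ q.edges} ⊔ fromEdgeSet {s(w, a)} := by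
      rw [← fromEdgeSet_union]
      congr 1
      ext e
      simp only [Walk.edges_cons, List.mem_cons, Set.mem_setOf_eq, Set.mem_union,
        Set.mem_singleton_iff, Sym2.eq_swap]
      tauto
    rw [heq]
    refine acyclic_sup_new (ih hp.1) (fun e he hu => ?_) h.ne'
    rw [edgeSet_fromEdgeSet] at he
    exact hp.2 (mem_support_of_mem_edges' q he.1 hu)

/-- An acyclic graph containing an edge `s(a,b)` loses `a`–`b` reachability
when that edge is deleted. -/
lemma not_reachable_del {F : SimpleGraph α} (hF : F.IsAcyclic) {a b : α} (hadj : F.Adj a b) :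
    ¬ (fromEdgeSet (F.edgeSet \ {s(a,b)})).Reachable a b := by
  classical
  intro h
  obtain ⟨w⟩ := h.symm
  set M' := fromEdgeSet (F.edgeSet \ {s(a,b)}) with hM'
  have hsubF : M' ≤ F := fromEdgeSet_le_of_subset Set.diff_subset
  have hsub : ∀ e ∈ w.toPath.1.edges, e ∈ F.edgeSet := fun e he =>
    edgeSet_subset_edgeSet.mpr hsubF (w.toPath.1.edges_subset_edgeSet he)
  have hpath : ((w.toPath.1).transfer F hsub).IsPath := (w.toPath.2).transfer hsub
  have hne : s(a, b) ∉ ((w.toPath.1).transfer F hsub).edges := by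
    rw [Walk.edges_transfer]
    intro hmem
    have := w.toPath.1.edges_subset_edgeSet hmem
    rw [hM', edgeSet_fromEdgeSet_of_subset Set.diff_subset] at this
    exact this.2 rfl
  exact hF _ (Path.cons_isCycle ⟨_, hpath⟩ hadj hne)

/-- The key exchange lemma. -/
lemma exch {H M : SimpleGraph α} (hM : IsMaximalForest H M)
    {n : α} {c : H.Walk n n} (hc : c.IsCycle) {e₀ : Sym2 α}
    (hsub : ∀ f ∈ c.edges, f ≠ e₀ → f ∈ M.edgeSet) (he₀H : e₀ ∈ H.edgeSet)
    {e : Sym2 α} (he : e ∈ c.edges) :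
    IsMaximalForest H (fromEdgeSet ((M.edgeSet ∪ {e₀}) \ {e})) := by
  classical
  have hUsub : M.edgeSet ∪ {e₀} ⊆ H.edgeSet := by
    rintro f (hf | hf)
    · exact edgeSet_subset_edgeSet.mpr hM.1 hf
    · exact hf ▸ he₀H
  have he0M : e₀ ∉ M.edgeSet := by
    intro hmem
    refine not_acyclic_of_cycle_edges hc (fun f hf => ?_) hM.2.1
    by_cases hfe : f = e₀
    · exact hfe ▸ hmem
    · exact hsub f hf hfe
  by_cases hee : e = e₀
  · subst hee
    have : (M.edgeSet ∪ {e}) \ {e} = M.edgeSet := by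
      ext f
      simp only [Set.mem_diff, Set.mem_union, Set.mem_singleton_iff]
      constructor
      · rintro ⟨hf | hf, hf2⟩
        · exact hf
        · exact absurd hf hf2
      · intro hf
        exact ⟨Or.inl hf, fun hfe => he0M (hfe ▸ hf)⟩
    rw [this, fromEdgeSet_edgeSet]
    exact hM
  -- now e ≠ e₀, so e ∈ M
  have heM : e ∈ M.edgeSet := hsub e he hee
  set K : SimpleGraph α := fromEdgeSet (M.edgeSet ∪ {e₀}) with hK
  have hKedge : K.edgeSet = M.edgeSet ∪ {e₀} := edgeSet_fromEdgeSet_of_subset hUsub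
  set N : SimpleGraph α := fromEdgeSet ((M.edgeSet ∪ {e₀}) \ {e}) with hN
  have hNedge : N.edgeSet = (M.edgeSet ∪ {e₀}) \ {e} :=
    edgeSet_fromEdgeSet_of_subset ((Set.diff_subset).trans hUsub)
  have hNH : N ≤ H := fromEdgeSet_le_of_subset ((Set.diff_subset).trans hUsub)
  -- transfer c into K
  have hcK : ∀ f ∈ c.edges, f ∈ K.edgeSet := by
    intro f hf
    rw [hKedge]
    by_cases hfe : f = e₀
    · exact Or.inr hfe
    · exact Or.inl (hsub f hf hfe)
  -- decompose e
  induction e with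
  | h a b =>
    have hadjM : M.Adj a b := (mem_edgeSet M).mp heM
    -- reachability of a b in N, from the cycle c (transferred to K)
    have hNab : N.Reachable a b := by
      have hiff := (adj_and_reachable_delete_edges_iff_exists_cycle (G := K)).mpr
        ⟨n, c.transfer K hcK, hc.transfer hcK, by rw [Walk.edges_transfer]; exact he⟩
      have h2 := hiff.2
      have : K \ fromEdgeSet {s(a,b)} = N := by
        rw [← edgeSet_inj, edgeSet_sdiff, hKedge, hNedge, edgeSet_fromEdgeSet]
        ext f
        simp only [Set.mem_diff, Set.mem_singleton_iff, Set.mem_setOf_eq]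
        constructor
        · rintro ⟨h1, h2⟩
          refine ⟨h1, fun hfe => h2 ⟨hfe, fun hd => ?_⟩⟩
          exact H.not_isDiag_of_mem_edgeSet (hUsub (hfe ▸ h1)) (hfe ▸ hd)
        · rintro ⟨h1, h2⟩
          exact ⟨h1, fun hmem => h2 hmem.1⟩
      rwa [deleteEdges, this] at h2
    -- N is acyclic
    have hNac : N.IsAcyclic := by
      intro z p hp
      by_cases hmem : e₀ ∈ p.edges
      · -- delete e₀ from the cycle p: reachability of e₀'s endpoints in M - e
        induction e₀ with
        | h u' v' =>
          have hiff := (adj_and_reachable_delete_edges_iff_exists_cycle (G := N)).mpr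
            ⟨z, p, hp, hmem⟩
          have h2 := hiff.2
          set M' : SimpleGraph α := fromEdgeSet (M.edgeSet \ {s(a,b)}) with hM'
          have hM'edge : M'.edgeSet = M.edgeSet \ {s(a,b)} :=
            edgeSet_fromEdgeSet_of_subset ((Set.diff_subset).trans
              (edgeSet_subset_edgeSet.mpr hM.1))
          have hNdel : N \ fromEdgeSet {s(u',v')} = M' := by
            rw [← edgeSet_inj, edgeSet_sdiff, hNedge, hM'edge, edgeSet_fromEdgeSet]
            ext f
            simp only [Set.mem_diff, Set.mem_union, Set.mem_singleton_iff, Set.mem_setOf_eq]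
            constructor
            · rintro ⟨⟨h1 | h1, h3⟩, h4⟩
              · exact ⟨h1, h3⟩
              · exfalso
                exact h4 ⟨h1, fun hd => H.not_isDiag_of_mem_edgeSet (hUsub (Or.inr h1)) hd⟩
            · rintro ⟨h1, h3⟩
              exact ⟨⟨Or.inl h1, h3⟩, fun hmem2 => he0M (hmem2.1 ▸ h1)⟩
          rw [deleteEdges, hNdel] at h2
          -- N = M' ⊔ edge e₀, so Reachable a b in N gives Reachable a b in M'
          have hNsup : N = M' ⊔ fromEdgeSet {s(u',v')} := by
            rw [← edgeSet_inj, hNedge, edgeSet_sup, hM'edge, edgeSet_fromEdgeSet]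
            ext f
            simp only [Set.mem_diff, Set.mem_union, Set.mem_singleton_iff, Set.mem_setOf_eq]
            constructor
            · rintro ⟨h1 | h1, h3⟩
              · exact Or.inl ⟨h1, h3⟩
              · exact Or.inr ⟨h1, fun hd => H.not_isDiag_of_mem_edgeSet (hUsub (Or.inr (h1 : f = s(u',v')) )) hd⟩
            · rintro (⟨h1, h3⟩ | ⟨h1, _⟩)
              · exact ⟨Or.inl h1, h3⟩
              · refine ⟨Or.inr h1, fun hfe => hee ?_⟩
                rw [← hfe, h1]
            
          have hM'ab : M'.Reachable a b := by
            have := hNsup ▸ hNab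
            refine reachable_of_sup (fun x y hxy => ?_) this
            rw [fromEdgeSet_adj] at hxy
            have hxy1 := hxy.1
            rw [Set.mem_singleton_iff, Sym2.eq_iff] at hxy1
            rcases hxy1 with ⟨rfl, rfl⟩ | ⟨rfl, rfl⟩
            · exact h2
            · exact h2.symm
          exact not_reachable_del hM.2.1 hadjM hM'ab
      · refine not_acyclic_of_cycle_edges hp (fun f hf => ?_) hM.2.1
        have := p.edges_subset_edgeSet hf
        rw [hNedge] at this
        rcases this.1 with h1 | h1
        · exact h1
        · exact absurd (h1 : f = e₀) (fun hfe => hmem (hfe ▸ hf))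
    -- maximality via spanning
    refine isMaximalForest_of_spanning hNH hNac (fun x y hxy => ?_)
    have hMr : M.Reachable x y := spanning_of_isMaximalForest hM hxy
    have hMle : M ≤ N ⊔ fromEdgeSet {s(a,b)} := by
      rw [← edgeSet_subset_edgeSet, edgeSet_sup, hNedge, edgeSet_fromEdgeSet]
      intro f hf
      by_cases hfe : f = s(a,b)
      · exact Or.inr ⟨hfe, fun hd => M.not_isDiag_of_mem_edgeSet hf hd⟩
      · exact Or.inl ⟨Or.inl hf, hfe⟩
    refine reachable_of_sup (fun x' y' hxy' => ?_) ((hMr.mono hMle))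
    rw [fromEdgeSet_adj] at hxy'
    have hxy1 := hxy'.1
    rw [Set.mem_singleton_iff, Sym2.eq_iff] at hxy1
    rcases hxy1 with ⟨rfl, rfl⟩ | ⟨rfl, rfl⟩
    · exact hNab
    · exact hNab.symm


lemma diff_diff_pair {β : Type*} {U : Set β} {x y z : β} (hz : z ∈ U) (hzx : z ≠ x) (hzy : z ≠ y) :
    (U \ {x, y}) \ (U \ {z, y}) = {z} := by
  ext w
  simp only [Set.mem_diff, Set.mem_insert_iff, Set.mem_singleton_iff]
  constructor
  · rintro ⟨⟨h1, h2⟩, h3⟩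
    push_neg at h2 h3
    rcases h3 h1 with h | h
    · exact h
    · exact absurd h h2.2
  · rintro rfl
    exact ⟨⟨hz, by push_neg; exact ⟨hzx, hzy⟩⟩, fun h => h.2 (Or.inl rfl)⟩

lemma diff_diff_pair' {β : Type*} {U : Set β} {x y z : β} (hz : z ∈ U) (hzx : z ≠ x) (hzy : z ≠ y) :
    (U \ {x, y}) \ (U \ {x, z}) = {z} := by
  ext w
  simp only [Set.mem_diff, Set.mem_insert_iff, Set.mem_singleton_iff]
  constructor
  · rintro ⟨⟨h1, h2⟩, h3⟩
    push_neg at h2 h3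
    rcases h3 h1 with h | h
    · exact absurd h h2.1
    · exact h
  · rintro rfl
    exact ⟨⟨hz, by push_neg; exact ⟨hzx, hzy⟩⟩, fun h => h.2 (Or.inr rfl)⟩

lemma diff_diff_single {β : Type*} {U : Set β} {x z : β} (hz : z ∈ U) (hzx : z ≠ x) :
    (U \ {x}) \ (U \ {z}) = {z} := by
  ext w
  simp only [Set.mem_diff, Set.mem_singleton_iff]
  constructor
  · rintro ⟨⟨h1, h2⟩, h3⟩
    push_neg at h3
    exact h3 h1
  · rintro rfl
    exact ⟨⟨hz, hzx⟩, fun h => h.2 rfl⟩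

lemma forestGraph_adj_of {G : SimpleGraph α} {F₁ F₂ : {F : SimpleGraph α // IsMaximalForest G F}}
    {x y : Sym2 α} (h₁ : F₁.1.edgeSet \ F₂.1.edgeSet = {x})
    (h₂ : F₂.1.edgeSet \ F₁.1.edgeSet = {y}) :
    (forestGraph G).Adj F₁ F₂ :=
  ⟨by rw [h₁]; exact Set.encard_singleton x, by rw [h₂]; exact Set.encard_singleton y⟩

lemma walk_length3 {K : SimpleGraph α} {v : α} (c : K.Walk v v) (h3 : c.length = 3) :
    ∃ (x y : α) (h1 : K.Adj v x) (h2 : K.Adj x y) (hy : K.Adj y v),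
      c = Walk.cons h1 (Walk.cons h2 (Walk.cons hy Walk.nil)) := by
  cases c with
  | nil => simp at h3
  | cons h q =>
    cases q with
    | nil => simp at h3
    | cons h' q' =>
      cases q' with
      | nil => simp at h3
      | cons h'' q'' =>
        cases q'' with
        | nil => exact ⟨_, _, h, h', h'', rfl⟩
        | cons h''' q''' => simp [Walk.length_cons] at h3


lemma clique_of_cycle {β : Type*} {K : SimpleGraph β} {u₀ : β} (C : K.Walk u₀ u₀)
    (hC : C.IsCycle) : ∃ t : Finset {F : SimpleGraph β // IsMaximalForest K F},
      (forestGraph K).IsNClique C.edges.length t := by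
  classical
  cases C with
  | nil => exact absurd rfl hC.ne_nil
  | @cons _ v _ h0 p =>
    obtain ⟨hp, he0p⟩ := (Walk.cons_isCycle_iff p h0).mp hC
    obtain ⟨M, hM, hseedM⟩ := exists_maximalForest_ge
      (fromEdgeSet_le_of_subset
        (fun e he => p.edges_subset_edgeSet he : {e | e ∈ p.edges} ⊆ K.edgeSet))
      (pathGraph_acyclic p hp)
    set e₀ : Sym2 β := s(u₀, v) with he₀def
    have he₀H : e₀ ∈ K.edgeSet := h0
    have hCedges : (Walk.cons h0 p).edges = e₀ :: p.edges := rfl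
    have hsubC : ∀ f ∈ (Walk.cons h0 p).edges, f ≠ e₀ → f ∈ M.edgeSet := by
      intro f hf hfe
      rw [hCedges, List.mem_cons] at hf
      rcases hf with rfl | hf
      · exact absurd rfl hfe
      · refine edgeSet_subset_edgeSet.mpr hseedM ?_
        rw [edgeSet_fromEdgeSet_of_subset
          (fun e he => p.edges_subset_edgeSet he : {e | e ∈ p.edges} ⊆ K.edgeSet)]
        exact hf
    have hUM : ∀ f ∈ (Walk.cons h0 p).edges, f ∈ M.edgeSet ∪ {e₀} := by
      intro f hf
      by_cases hfe : f = e₀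
      · exact Or.inr hfe
      · exact Or.inl (hsubC f hf hfe)
    have hUsub : M.edgeSet ∪ {e₀} ⊆ K.edgeSet := by
      rintro f (hf | hf)
      · exact edgeSet_subset_edgeSet.mpr hM.1 hf
      · exact hf ▸ he₀H
    have he₀C : e₀ ∈ (Walk.cons h0 p).edges := by
      rw [hCedges]; exact List.mem_cons_self
    set fn : Sym2 β → {F : SimpleGraph β // IsMaximalForest K F} := fun e =>
      if h : e ∈ (Walk.cons h0 p).edges
      then ⟨_, exch hM hC hsubC he₀H h⟩
      else ⟨_, exch hM hC hsubC he₀H he₀C⟩ with hfn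
    have hfnedge : ∀ e, e ∈ (Walk.cons h0 p).edges →
        (fn e).1.edgeSet = (M.edgeSet ∪ {e₀}) \ {e} := by
      intro e he
      rw [hfn]
      simp only [he, dif_pos]
      exact edgeSet_fromEdgeSet_of_subset ((Set.diff_subset).trans hUsub)
    refine ⟨((Walk.cons h0 p).edges.toFinset).image fn, ?_, ?_⟩
    · intro x hx y hy hne
      simp only [Finset.coe_image, Set.mem_image, Finset.mem_coe, List.mem_toFinset] at hx hy
      obtain ⟨e, he, rfl⟩ := hx
      obtain ⟨f, hf, rfl⟩ := hy
      have hef : e ≠ f := fun h => hne (by rw [h])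
      exact forestGraph_adj_of
        (by rw [hfnedge e he, hfnedge f hf]; exact diff_diff_single (hUM f hf) hef.symm)
        (by rw [hfnedge e he, hfnedge f hf]; exact diff_diff_single (hUM e he) hef)
    · rw [Finset.card_image_of_injOn, List.card_toFinset,
        ((Walk.isCycle_def _).mp hC).1.edges_nodup.dedup]
      intro e he f hf heq
      rw [Finset.mem_coe, List.mem_toFinset] at he hf
      by_contra hef
      have h1 := congrArg (fun F => F.1.edgeSet) heq
      rw [hfnedge e he, hfnedge f hf] at h1
      have hmem : f ∈ (M.edgeSet ∪ {e₀}) \ {e} := ⟨hUM f hf, fun h => hef (by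
        rw [Set.mem_singleton_iff] at h; exact h.symm ▸ rfl)⟩
      rw [h1] at hmem
      exact hmem.2 rfl



set_option maxHeartbeats 2000000 in
lemma main (G : SimpleGraph α) (v₁ v₂ : α)
    (c₁ : G.Walk v₁ v₁) (c₂ : G.Walk v₂ v₂)
    (h₁ : c₁.IsCycle) (hl₁ : c₁.length = 3)
    (h₂ : c₂.IsCycle) (hl₂ : c₂.length = 3)
    (hdisj : ∀ e : Sym2 α, e ∈ c₁.edges → e ∉ c₂.edges) :
    ∃ t, (forestGraph (forestGraph G)).IsNClique 9 t := by
  classical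
  obtain ⟨x, y, a1, a2, a3, rfl⟩ := walk_length3 c₁ hl₁
  obtain ⟨z, w, b1, b2, b3, rfl⟩ := walk_length3 c₂ hl₂
  have hd1 : x ≠ y ∧ x ≠ v₁ ∧ y ≠ v₁ := by
    have := h₁.support_nodup
    simp [Walk.support_cons] at this
    tauto
  have hd2 : z ≠ w ∧ z ≠ v₂ ∧ w ≠ v₂ := by
    have := h₂.support_nodup
    simp [Walk.support_cons] at this
    tauto
  obtain ⟨hxy, hxv, hyv⟩ := hd1
  obtain ⟨hzw, hzv, hwv⟩ := hd2
  have hv1x : v₁ ≠ x := a1.ne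
  have hv2z : v₂ ≠ z := b1.ne
  have hc1e : ∀ f, f ∈ (Walk.cons a1 (Walk.cons a2 (Walk.cons a3 Walk.nil))).edges ↔
      f = s(v₁,x) ∨ f = s(x,y) ∨ f = s(y,v₁) := by
    intro f; simp [Walk.edges_cons]
  have hc2e : ∀ f, f ∈ (Walk.cons b1 (Walk.cons b2 (Walk.cons b3 Walk.nil))).edges ↔
      f = s(v₂,z) ∨ f = s(z,w) ∨ f = s(w,v₂) := by
    intro f; simp [Walk.edges_cons]
  have hpair1 : ∀ t1 t2 : α, (t1 = v₁ ∨ t1 = x ∨ t1 = y) → (t2 = v₁ ∨ t2 = x ∨ t2 = y) →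
      t1 ≠ t2 → (s(t1,t2) = s(v₁,x) ∨ s(t1,t2) = s(x,y) ∨ s(t1,t2) = s(y,v₁)) := by
    intro t1 t2 ht1 ht2 hne
    rcases ht1 with rfl | rfl | rfl <;> rcases ht2 with rfl | rfl | rfl <;>
      first
        | exact absurd rfl hne
        | exact Or.inl rfl
        | exact Or.inl Sym2.eq_swap
        | exact Or.inr (Or.inl rfl)
        | exact Or.inr (Or.inl Sym2.eq_swap)
        | exact Or.inr (Or.inr rfl)
        | exact Or.inr (Or.inr Sym2.eq_swap)
  have hpair2 : ∀ t1 t2 : α, (t1 = v₂ ∨ t1 = z ∨ t1 = w) → (t2 = v₂ ∨ t2 = z ∨ t2 = w) →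
      t1 ≠ t2 → (s(t1,t2) = s(v₂,z) ∨ s(t1,t2) = s(z,w) ∨ s(t1,t2) = s(w,v₂)) := by
    intro t1 t2 ht1 ht2 hne
    rcases ht1 with rfl | rfl | rfl <;> rcases ht2 with rfl | rfl | rfl <;>
      first
        | exact absurd rfl hne
        | exact Or.inl rfl
        | exact Or.inl Sym2.eq_swap
        | exact Or.inr (Or.inl rfl)
        | exact Or.inr (Or.inl Sym2.eq_swap)
        | exact Or.inr (Or.inr rfl)
        | exact Or.inr (Or.inr Sym2.eq_swap)
  have hshared : ∀ t1 t2 : α, (t1 = v₂ ∨ t1 = z ∨ t1 = w) → (t2 = v₂ ∨ t2 = z ∨ t2 = w) →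
      t1 ≠ t2 → (t1 = v₁ ∨ t1 = x ∨ t1 = y) → (t2 = v₁ ∨ t2 = x ∨ t2 = y) → False := by
    intro t1 t2 ha hb hne hc hd
    exact hdisj _ ((hc1e _).mpr (hpair1 _ _ hc hd hne)) ((hc2e _).mpr (hpair2 _ _ ha hb hne))
  have key : ∃ p q r : α, p ≠ q ∧ q ≠ r ∧ p ≠ r ∧
      ¬(q = v₁ ∨ q = x ∨ q = y) ∧ ¬(r = v₁ ∨ r = x ∨ r = y) ∧
      (∀ f, f ∈ (Walk.cons b1 (Walk.cons b2 (Walk.cons b3 Walk.nil))).edges ↔ f = s(p,q) ∨ f = s(q,r) ∨ f = s(r,p)) := by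
    by_cases hz : z = v₁ ∨ z = x ∨ z = y
    · refine ⟨z, v₂, w, hzv, fun h => hwv h.symm, hzw,
        fun h => hshared v₂ z (Or.inl rfl) (Or.inr (Or.inl rfl)) (fun hh => hzv hh.symm) h hz,
        fun h => hshared w z (Or.inr (Or.inr rfl)) (Or.inr (Or.inl rfl)) (fun hh => hzw hh.symm) h hz,
        fun f => ?_⟩
      rw [hc2e f]
      constructor
      · rintro (rfl | rfl | rfl) <;>
          first
            | exact Or.inl rfl
            | exact Or.inl Sym2.eq_swap
            | exact Or.inr (Or.inl rfl)
            | exact Or.inr (Or.inl Sym2.eq_swap)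
            | exact Or.inr (Or.inr rfl)
            | exact Or.inr (Or.inr Sym2.eq_swap)
      · rintro (rfl | rfl | rfl) <;>
          first
            | exact Or.inl rfl
            | exact Or.inl Sym2.eq_swap
            | exact Or.inr (Or.inl rfl)
            | exact Or.inr (Or.inl Sym2.eq_swap)
            | exact Or.inr (Or.inr rfl)
            | exact Or.inr (Or.inr Sym2.eq_swap)
    · by_cases hv2 : v₂ = v₁ ∨ v₂ = x ∨ v₂ = y
      · refine ⟨v₂, z, w, hv2z, hzw, fun h => hwv h.symm, hz,
          fun h => hshared w v₂ (Or.inr (Or.inr rfl)) (Or.inl rfl) hwv h hv2,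
          fun f => by rw [hc2e f]⟩
      · by_cases hw : w = v₁ ∨ w = x ∨ w = y
        · refine ⟨w, v₂, z, hwv, hv2z, fun h => hzw h.symm, hv2, hz, fun f => ?_⟩
          rw [hc2e f]
          constructor
          · rintro (rfl | rfl | rfl) <;>
              first
                | exact Or.inl rfl
                | exact Or.inl Sym2.eq_swap
                | exact Or.inr (Or.inl rfl)
                | exact Or.inr (Or.inl Sym2.eq_swap)
                | exact Or.inr (Or.inr rfl)
                | exact Or.inr (Or.inr Sym2.eq_swap)
          · rintro (rfl | rfl | rfl) <;>
              first
                | exact Or.inl rfl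
                | exact Or.inl Sym2.eq_swap
                | exact Or.inr (Or.inl rfl)
                | exact Or.inr (Or.inl Sym2.eq_swap)
                | exact Or.inr (Or.inr rfl)
                | exact Or.inr (Or.inr Sym2.eq_swap)
        · exact ⟨v₂, z, w, hv2z, hzw, fun h => hwv h.symm, hz, hw, fun f => by rw [hc2e f]⟩
  obtain ⟨p, q, r, hpq, hqr, hpr, hqS, hrS, hBe⟩ := key
  push_neg at hqS hrS
  obtain ⟨hqv1, hqx, hqy⟩ := hqS
  obtain ⟨hrv1, hrx, hry⟩ := hrS
  have hA0G : s(v₁,x) ∈ G.edgeSet := a1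
  have hA1G : s(x,y) ∈ G.edgeSet := a2
  have hA2G : s(y,v₁) ∈ G.edgeSet := a3
  have hB0G : s(p,q) ∈ G.edgeSet := Walk.edges_subset_edgeSet _ ((hBe _).mpr (Or.inl rfl))
  have hB1G : s(q,r) ∈ G.edgeSet := Walk.edges_subset_edgeSet _ ((hBe _).mpr (Or.inr (Or.inl rfl)))
  have hB2G : s(r,p) ∈ G.edgeSet := Walk.edges_subset_edgeSet _ ((hBe _).mpr (Or.inr (Or.inr rfl)))
  have hABne : ∀ f g : Sym2 α, (f = s(v₁,x) ∨ f = s(x,y) ∨ f = s(y,v₁)) →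
      (g = s(p,q) ∨ g = s(q,r) ∨ g = s(r,p)) → f ≠ g := by
    intro f g hf hg heq
    exact hdisj f ((hc1e f).mpr hf) (by rw [heq]; exact (hBe g).mpr hg)
  have hA01 : s(v₁,x) ≠ s(x,y) := by
    intro h
    rcases Sym2.eq_iff.mp h with ⟨h1, h2⟩ | ⟨h1, h2⟩
    · exact hv1x h1
    · exact hyv h1.symm
  have hA02 : s(v₁,x) ≠ s(y,v₁) := by
    intro h
    rcases Sym2.eq_iff.mp h with ⟨h1, h2⟩ | ⟨h1, h2⟩
    · exact hyv h1.symm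
    · exact hxy h2
  have hA12 : s(x,y) ≠ s(y,v₁) := by
    intro h
    rcases Sym2.eq_iff.mp h with ⟨h1, h2⟩ | ⟨h1, h2⟩
    · exact hxy h1
    · exact hxv h1
  have hB01 : s(p,q) ≠ s(q,r) := by
    intro h
    rcases Sym2.eq_iff.mp h with ⟨h1, h2⟩ | ⟨h1, h2⟩
    · exact hpq h1
    · exact hpr h1
  have hB02 : s(p,q) ≠ s(r,p) := by
    intro h
    rcases Sym2.eq_iff.mp h with ⟨h1, h2⟩ | ⟨h1, h2⟩
    · exact hpr h1
    · exact hqr h2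
  have hB12 : s(q,r) ≠ s(r,p) := by
    intro h
    rcases Sym2.eq_iff.mp h with ⟨h1, h2⟩ | ⟨h1, h2⟩
    · exact hqr h1
    · exact hpq h1.symm
  -- the seed forest: two paths
  have hnm : ∀ (c d bb : α), bb ≠ c → bb ≠ d →
      ∀ e ∈ (fromEdgeSet {s(c,d)} : SimpleGraph α).edgeSet, bb ∉ e := by
    intro c d bb hbc hbd e he hb
    rw [edgeSet_fromEdgeSet] at he
    have he' : e = s(c,d) := he.1
    subst he'
    rcases Sym2.mem_iff.mp hb with h | h
    · exact hbc h
    · exact hbd h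
  have hA0ac : (fromEdgeSet {s(v₁,x)} : SimpleGraph α).IsAcyclic := by
    have h := acyclic_sup_new (A := (⊥ : SimpleGraph α)) bot_acyclic
      (by simp [edgeSet_bot]) hv1x
    rwa [bot_sup_eq] at h
  have hA1ac : (fromEdgeSet {s(v₁,x)} ⊔ fromEdgeSet {s(x,y)} : SimpleGraph α).IsAcyclic :=
    acyclic_sup_new hA0ac (fun e he hy' => hnm v₁ x y hyv (fun h => hxy h.symm) e he hy') hxy
  have hA2ac : ((fromEdgeSet {s(v₁,x)} ⊔ fromEdgeSet {s(x,y)}) ⊔ fromEdgeSet {s(p,q)} : SimpleGraph α).IsAcyclic := by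
    refine acyclic_sup_new hA1ac (fun e he hq' => ?_) hpq
    rw [edgeSet_sup] at he
    rcases he with he | he
    · exact hnm v₁ x q hqv1 hqx e he hq'
    · exact hnm x y q hqx hqy e he hq'
  have hA3ac : (((fromEdgeSet {s(v₁,x)} ⊔ fromEdgeSet {s(x,y)}) ⊔ fromEdgeSet {s(p,q)}) ⊔ fromEdgeSet {s(q,r)} : SimpleGraph α).IsAcyclic := by
    refine acyclic_sup_new hA2ac (fun e he hr' => ?_) hqr
    rw [edgeSet_sup, edgeSet_sup] at he
    rcases he with (he | he) | he
    · exact hnm v₁ x r hrv1 hrx e he hr'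
    · exact hnm x y r hrx hry e he hr'
    · exact hnm p q r (fun h => hpr h.symm) (fun h => hqr h.symm) e he hr'
  have hQle : ((fromEdgeSet {s(v₁,x)} ⊔ fromEdgeSet {s(x,y)}) ⊔ fromEdgeSet {s(p,q)}) ⊔ fromEdgeSet {s(q,r)} ≤ G :=
    sup_le (sup_le (sup_le
      (fromEdgeSet_le_of_subset (Set.singleton_subset_iff.mpr hA0G))
      (fromEdgeSet_le_of_subset (Set.singleton_subset_iff.mpr hA1G)))
      (fromEdgeSet_le_of_subset (Set.singleton_subset_iff.mpr hB0G)))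
      (fromEdgeSet_le_of_subset (Set.singleton_subset_iff.mpr hB1G))
  obtain ⟨T, hT, hQT⟩ := exists_maximalForest_ge hQle hA3ac
  have hmemQ : ∀ f : Sym2 α, f = s(v₁,x) ∨ f = s(x,y) ∨ f = s(p,q) ∨ f = s(q,r) →
      f ∈ (((fromEdgeSet {s(v₁,x)} ⊔ fromEdgeSet {s(x,y)}) ⊔ fromEdgeSet {s(p,q)}) ⊔ fromEdgeSet {s(q,r)}).edgeSet := by
    intro f hf
    rw [edgeSet_sup, edgeSet_sup, edgeSet_sup,
      edgeSet_fromEdgeSet_of_subset (Set.singleton_subset_iff.mpr hA0G),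
      edgeSet_fromEdgeSet_of_subset (Set.singleton_subset_iff.mpr hA1G),
      edgeSet_fromEdgeSet_of_subset (Set.singleton_subset_iff.mpr hB0G),
      edgeSet_fromEdgeSet_of_subset (Set.singleton_subset_iff.mpr hB1G)]
    rcases hf with rfl | rfl | rfl | rfl
    · exact Or.inl (Or.inl (Or.inl rfl))
    · exact Or.inl (Or.inl (Or.inr rfl))
    · exact Or.inl (Or.inr rfl)
    · exact Or.inr rfl
  have hA0T : s(v₁,x) ∈ T.edgeSet := edgeSet_subset_edgeSet.mpr hQT (hmemQ _ (Or.inl rfl))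
  have hA1T : s(x,y) ∈ T.edgeSet := edgeSet_subset_edgeSet.mpr hQT (hmemQ _ (Or.inr (Or.inl rfl)))
  have hB0T : s(p,q) ∈ T.edgeSet := edgeSet_subset_edgeSet.mpr hQT (hmemQ _ (Or.inr (Or.inr (Or.inl rfl))))
  have hB1T : s(q,r) ∈ T.edgeSet := edgeSet_subset_edgeSet.mpr hQT (hmemQ _ (Or.inr (Or.inr (Or.inr rfl))))
  have hUsubG : T.edgeSet ∪ {s(y,v₁), s(r,p)} ⊆ G.edgeSet := by
    rintro f (hf | hf)
    · exact edgeSet_subset_edgeSet.mpr hT.1 hf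
    · rcases Set.mem_insert_iff.mp hf with rfl | hf'
      · exact hA2G
      · rw [Set.mem_singleton_iff] at hf'
        subst hf'
        exact hB2G
  have hmf : ∀ fa : Sym2 α, (fa = s(v₁,x) ∨ fa = s(x,y) ∨ fa = s(y,v₁)) →
      ∀ fb : Sym2 α, (fb = s(p,q) ∨ fb = s(q,r) ∨ fb = s(r,p)) →
      IsMaximalForest G (fromEdgeSet ((T.edgeSet ∪ {s(y,v₁), s(r,p)}) \ {fa, fb})) := by
    intro fa hfa fb hfb
    have hfac1 : fa ∈ (Walk.cons a1 (Walk.cons a2 (Walk.cons a3 Walk.nil))).edges := (hc1e fa).mpr hfa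
    have hfbc2 : fb ∈ (Walk.cons b1 (Walk.cons b2 (Walk.cons b3 Walk.nil))).edges := (hBe fb).mpr hfb
    have hsub1 : ∀ f ∈ (Walk.cons a1 (Walk.cons a2 (Walk.cons a3 Walk.nil))).edges, f ≠ s(y,v₁) → f ∈ T.edgeSet := by
      intro f hf hne
      rcases (hc1e f).mp hf with rfl | rfl | rfl
      · exact hA0T
      · exact hA1T
      · exact absurd rfl hne
    have hM1 := exch hT h₁ hsub1 hA2G hfac1
    have hsubTA : (T.edgeSet ∪ {s(y,v₁)}) ⊆ G.edgeSet := by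
      rintro f (hf | hf)
      · exact edgeSet_subset_edgeSet.mpr hT.1 hf
      · exact hf ▸ hA2G
    have hM1edge : (fromEdgeSet ((T.edgeSet ∪ {s(y,v₁)}) \ {fa})).edgeSet
        = (T.edgeSet ∪ {s(y,v₁)}) \ {fa} :=
      edgeSet_fromEdgeSet_of_subset (Set.diff_subset.trans hsubTA)
    have hsub2 : ∀ f ∈ (Walk.cons b1 (Walk.cons b2 (Walk.cons b3 Walk.nil))).edges, f ≠ s(r,p) →
        f ∈ (fromEdgeSet ((T.edgeSet ∪ {s(y,v₁)}) \ {fa})).edgeSet := by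
      intro f hf hne
      rw [hM1edge]
      have hfB : f = s(p,q) ∨ f = s(q,r) ∨ f = s(r,p) := (hBe f).mp hf
      have hfT : f ∈ T.edgeSet := by
        rcases hfB with rfl | rfl | rfl
        · exact hB0T
        · exact hB1T
        · exact absurd rfl hne
      exact ⟨Or.inl hfT, fun h => (hABne fa f hfa hfB) h.symm⟩
    have hM2 := exch hM1 h₂ hsub2 hB2G hfbc2
    have hfaEB2 : fa ≠ s(r,p) := hABne fa (s(r,p)) hfa (Or.inr (Or.inr rfl))
    have hseteq : ((fromEdgeSet ((T.edgeSet ∪ {s(y,v₁)}) \ {fa})).edgeSet ∪ {s(r,p)}) \ {fb}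
        = (T.edgeSet ∪ {s(y,v₁), s(r,p)}) \ {fa, fb} := by
      rw [hM1edge]
      ext f
      simp only [Set.mem_diff, Set.mem_union, Set.mem_insert_iff, Set.mem_singleton_iff]
      have himp : f = s(r,p) → f = fa → False := fun h1 h2 => hfaEB2 (by rw [← h2, h1])
      constructor
      · rintro ⟨⟨hf1, hf2⟩ | hf1, hf3⟩
        · refine ⟨?_, ?_⟩
          · rcases hf1 with h | h
            · exact Or.inl h
            · exact Or.inr (Or.inl h)
          · rintro (h | h)
            · exact hf2 h
            · exact hf3 h
        · exact ⟨Or.inr (Or.inr hf1), by push_neg; exact ⟨fun hh => himp hf1 hh, hf3⟩⟩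
      · rintro ⟨hf1, hf2⟩
        push_neg at hf2
        rcases hf1 with hf1 | hf1 | hf1
        · exact ⟨Or.inl ⟨Or.inl hf1, hf2.1⟩, hf2.2⟩
        · exact ⟨Or.inl ⟨Or.inr hf1, hf2.1⟩, hf2.2⟩
        · exact ⟨Or.inr hf1, hf2.2⟩
    rw [hseteq] at hM2
    exact hM2
  have hUmemA : ∀ fa : Sym2 α, (fa = s(v₁,x) ∨ fa = s(x,y) ∨ fa = s(y,v₁)) →
      fa ∈ T.edgeSet ∪ {s(y,v₁), s(r,p)} := by
    rintro fa (rfl | rfl | rfl)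
    · exact Or.inl hA0T
    · exact Or.inl hA1T
    · exact Or.inr (Or.inl rfl)
  have hUmemB : ∀ fb : Sym2 α, (fb = s(p,q) ∨ fb = s(q,r) ∨ fb = s(r,p)) →
      fb ∈ T.edgeSet ∪ {s(y,v₁), s(r,p)} := by
    rintro fb (rfl | rfl | rfl)
    · exact Or.inl hB0T
    · exact Or.inl hB1T
    · exact Or.inr (Or.inr rfl)
  have hWedge : ∀ fa fb : Sym2 α,
      (fromEdgeSet ((T.edgeSet ∪ {s(y,v₁), s(r,p)}) \ {fa, fb})).edgeSet
        = (T.edgeSet ∪ {s(y,v₁), s(r,p)}) \ {fa, fb} :=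
    fun fa fb => edgeSet_fromEdgeSet_of_subset (Set.diff_subset.trans hUsubG)
  have hrow : ∀ (fa : Sym2 α) (hfa : fa = s(v₁,x) ∨ fa = s(x,y) ∨ fa = s(y,v₁))
      (fa' : Sym2 α) (hfa' : fa' = s(v₁,x) ∨ fa' = s(x,y) ∨ fa' = s(y,v₁))
      (fb : Sym2 α) (hfb : fb = s(p,q) ∨ fb = s(q,r) ∨ fb = s(r,p)),
      fa ≠ fa' →
      (forestGraph G).Adj ⟨_, hmf fa hfa fb hfb⟩ ⟨_, hmf fa' hfa' fb hfb⟩ := by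
    intro fa hfa fa' hfa' fb hfb hne
    refine forestGraph_adj_of (x := fa') (y := fa) ?_ ?_
    · dsimp only
      rw [hWedge, hWedge]
      exact diff_diff_pair (hUmemA fa' hfa') (Ne.symm hne) (hABne fa' fb hfa' hfb)
    · dsimp only
      rw [hWedge, hWedge]
      exact diff_diff_pair (hUmemA fa hfa) hne (hABne fa fb hfa hfb)
  have hcol : ∀ (fa : Sym2 α) (hfa : fa = s(v₁,x) ∨ fa = s(x,y) ∨ fa = s(y,v₁))
      (fb : Sym2 α) (hfb : fb = s(p,q) ∨ fb = s(q,r) ∨ fb = s(r,p))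
      (fb' : Sym2 α) (hfb' : fb' = s(p,q) ∨ fb' = s(q,r) ∨ fb' = s(r,p)),
      fb ≠ fb' →
      (forestGraph G).Adj ⟨_, hmf fa hfa fb hfb⟩ ⟨_, hmf fa hfa fb' hfb'⟩ := by
    intro fa hfa fb hfb fb' hfb' hne
    refine forestGraph_adj_of (x := fb') (y := fb) ?_ ?_
    · dsimp only
      rw [hWedge, hWedge]
      exact diff_diff_pair' (hUmemB fb' hfb') (Ne.symm (hABne fa fb' hfa hfb')) (Ne.symm hne)
    · dsimp only
      rw [hWedge, hWedge]
      exact diff_diff_pair' (hUmemB fb hfb) (Ne.symm (hABne fa fb hfa hfb)) hne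
  have hd_row : ∀ (fa : Sym2 α) (hfa : fa = s(v₁,x) ∨ fa = s(x,y) ∨ fa = s(y,v₁))
      (fa' : Sym2 α) (hfa' : fa' = s(v₁,x) ∨ fa' = s(x,y) ∨ fa' = s(y,v₁))
      (fb : Sym2 α) (hfb : fb = s(p,q) ∨ fb = s(q,r) ∨ fb = s(r,p))
      (fb' : Sym2 α) (hfb' : fb' = s(p,q) ∨ fb' = s(q,r) ∨ fb' = s(r,p)),
      fa ≠ fa' →
      (⟨fromEdgeSet ((T.edgeSet ∪ {s(y,v₁), s(r,p)}) \ {fa, fb}), hmf fa hfa fb hfb⟩ :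
        {F : SimpleGraph α // IsMaximalForest G F}) ≠
      ⟨fromEdgeSet ((T.edgeSet ∪ {s(y,v₁), s(r,p)}) \ {fa', fb'}), hmf fa' hfa' fb' hfb'⟩ := by
    intro fa hfa fa' hfa' fb hfb fb' hfb' hne heq
    have h1 := congrArg (fun (F : {F : SimpleGraph α // IsMaximalForest G F}) => F.1.edgeSet) heq
    dsimp only at h1
    rw [hWedge, hWedge] at h1
    have hmem : fa' ∈ (T.edgeSet ∪ {s(y,v₁), s(r,p)}) \ {fa, fb} := by
      refine ⟨hUmemA fa' hfa', fun hh => ?_⟩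
      rcases Set.mem_insert_iff.mp hh with hh' | hh'
      · exact hne.symm hh'
      · exact (hABne fa' fb hfa' hfb) (Set.mem_singleton_iff.mp hh')
    rw [h1] at hmem
    exact hmem.2 (Set.mem_insert _ _)
  have hd_col : ∀ (fa : Sym2 α) (hfa : fa = s(v₁,x) ∨ fa = s(x,y) ∨ fa = s(y,v₁))
      (fa' : Sym2 α) (hfa' : fa' = s(v₁,x) ∨ fa' = s(x,y) ∨ fa' = s(y,v₁))
      (fb : Sym2 α) (hfb : fb = s(p,q) ∨ fb = s(q,r) ∨ fb = s(r,p))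
      (fb' : Sym2 α) (hfb' : fb' = s(p,q) ∨ fb' = s(q,r) ∨ fb' = s(r,p)),
      fb ≠ fb' →
      (⟨fromEdgeSet ((T.edgeSet ∪ {s(y,v₁), s(r,p)}) \ {fa, fb}), hmf fa hfa fb hfb⟩ :
        {F : SimpleGraph α // IsMaximalForest G F}) ≠
      ⟨fromEdgeSet ((T.edgeSet ∪ {s(y,v₁), s(r,p)}) \ {fa', fb'}), hmf fa' hfa' fb' hfb'⟩ := by
    intro fa hfa fa' hfa' fb hfb fb' hfb' hne heq
    have h1 := congrArg (fun (F : {F : SimpleGraph α // IsMaximalForest G F}) => F.1.edgeSet) heq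
    dsimp only at h1
    rw [hWedge, hWedge] at h1
    have hmem : fb' ∈ (T.edgeSet ∪ {s(y,v₁), s(r,p)}) \ {fa, fb} := by
      refine ⟨hUmemB fb' hfb', fun hh => ?_⟩
      rcases Set.mem_insert_iff.mp hh with hh' | hh'
      · exact (Ne.symm (hABne fa fb' hfa hfb')) hh'
      · exact hne.symm (Set.mem_singleton_iff.mp hh')
    rw [h1] at hmem
    exact hmem.2 (Set.mem_insert_iff.mpr (Or.inr rfl))
  have hp8 : ((Walk.cons (hcol s(v₁,x) (Or.inl rfl) s(q,r) (Or.inr (Or.inl rfl)) s(r,p) (Or.inr (Or.inr rfl)) hB12) (Walk.cons (hrow s(v₁,x) (Or.inl rfl) s(x,y) (Or.inr (Or.inl rfl)) s(r,p) (Or.inr (Or.inr rfl)) hA01) (Walk.cons (hcol s(x,y) (Or.inr (Or.inl rfl)) s(r,p) (Or.inr (Or.inr rfl)) s(p,q) (Or.inl rfl) hB02.symm) (Walk.cons (hcol s(x,y) (Or.inr (Or.inl rfl)) s(p,q) (Or.inl rfl) s(q,r) (Or.inr (Or.inl rfl)) hB01) (Walk.cons (hrow s(x,y) (Or.inr (Or.inl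 rfl)) s(y,v₁) (Or.inr (Or.inr rfl)) s(q,r) (Or.inr (Or.inl rfl)) hA12) (Walk.cons (hcol s(y,v₁) (Or.inr (Or.inr rfl)) s(q,r) (Or.inr (Or.inl rfl)) s(r,p) (Or.inr (Or.inr rfl)) hB12) (Walk.cons (hcol s(y,v₁) (Or.inr (Or.inr rfl)) s(r,p) (Or.inr (Or.inr rfl)) s(p,q) (Or.inl rfl) hB02.symm) (Walk.cons (hrow s(y,v₁) (Or.inr (Or.inr rfl)) s(v₁,x) (Or.inl rfl) s(p,q) (Or.inl rfl) hA02.symm) Walk.nil))))))))).IsPath := by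
    rw [Walk.isPath_def]
    simp only [Walk.support_cons, Walk.support_nil]
    refine List.nodup_cons.mpr ⟨?_, ?_⟩
    · simp only [List.mem_cons, List.not_mem_nil, or_false]
      push_neg
      exact ⟨(hd_col s(v₁,x) (Or.inl rfl) s(v₁,x) (Or.inl rfl) s(q,r) (Or.inr (Or.inl rfl)) s(r,p) (Or.inr (Or.inr rfl)) hB12), (hd_row s(v₁,x) (Or.inl rfl) s(x,y) (Or.inr (Or.inl rfl)) s(q,r) (Or.inr (Or.inl rfl)) s(r,p) (Or.inr (Or.inr rfl)) hA01), (hd_row s(v₁,x) (Or.inl rfl) s(x,y) (Or.inr (Or.inl rfl)) s(q,r) (Or.inr (Or.inl rfl)) s(p,q) (Or.inl rfl) hA01), (hd_row s(v₁,x) (Or.inl rfl) s(x,y) (Or.inr (Or.inl rfl)) s(q,r) (Or.inr (Or.inl rfl)) s(q,r) (Or.inr (Or.inl rfl)) hA01), (hd_row s(v₁,x) (Or.inl rfl) s(y,v₁) (Or.inr (Or.inr rfl)) s(q,r) (Or.inr (Or.inl rfl)) s(q,r) (Or.inr (Or.inl rfl)) hA02), (hd_row s(v₁,x) (Or.inl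 rfl) s(y,v₁) (Or.inr (Or.inr rfl)) s(q,r) (Or.inr (Or.inl rfl)) s(r,p) (Or.inr (Or.inr rfl)) hA02), (hd_row s(v₁,x) (Or.inl rfl) s(y,v₁) (Or.inr (Or.inr rfl)) s(q,r) (Or.inr (Or.inl rfl)) s(p,q) (Or.inl rfl) hA02), (hd_col s(v₁,x) (Or.inl rfl) s(v₁,x) (Or.inl rfl) s(q,r) (Or.inr (Or.inl rfl)) s(p,q) (Or.inl rfl) hB01.symm)⟩
    refine List.nodup_cons.mpr ⟨?_, ?_⟩
    · simp only [List.mem_cons, List.not_mem_nil, or_false]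
      push_neg
      exact ⟨(hd_row s(v₁,x) (Or.inl rfl) s(x,y) (Or.inr (Or.inl rfl)) s(r,p) (Or.inr (Or.inr rfl)) s(r,p) (Or.inr (Or.inr rfl)) hA01), (hd_row s(v₁,x) (Or.inl rfl) s(x,y) (Or.inr (Or.inl rfl)) s(r,p) (Or.inr (Or.inr rfl)) s(p,q) (Or.inl rfl) hA01), (hd_row s(v₁,x) (Or.inl rfl) s(x,y) (Or.inr (Or.inl rfl)) s(r,p) (Or.inr (Or.inr rfl)) s(q,r) (Or.inr (Or.inl rfl)) hA01), (hd_row s(v₁,x) (Or.inl rfl) s(y,v₁) (Or.inr (Or.inr rfl)) s(r,p) (Or.inr (Or.inr rfl)) s(q,r) (Or.inr (Or.inl rfl)) hA02), (hd_row s(v₁,x) (Or.inl rfl) s(y,v₁) (Or.inr (Or.inr rfl)) s(r,p) (Or.inr (Or.inr rfl)) s(r,p) (Or.inr (Or.inr rfl)) hA02), (hd_row s(v₁,x) (Or.inl rfl) s(y,v₁) (Or.inr (Or.inr rfl)) s(r,p) (Or.inr (Or.inr rfl)) s(p,q) (Or.inl rfl) hA02), (hd_col s(v₁,x) (Or.inl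 rfl) s(v₁,x) (Or.inl rfl) s(r,p) (Or.inr (Or.inr rfl)) s(p,q) (Or.inl rfl) hB02.symm)⟩
    refine List.nodup_cons.mpr ⟨?_, ?_⟩
    · simp only [List.mem_cons, List.not_mem_nil, or_false]
      push_neg
      exact ⟨(hd_col s(x,y) (Or.inr (Or.inl rfl)) s(x,y) (Or.inr (Or.inl rfl)) s(r,p) (Or.inr (Or.inr rfl)) s(p,q) (Or.inl rfl) hB02.symm), (hd_col s(x,y) (Or.inr (Or.inl rfl)) s(x,y) (Or.inr (Or.inl rfl)) s(r,p) (Or.inr (Or.inr rfl)) s(q,r) (Or.inr (Or.inl rfl)) hB12.symm), (hd_row s(x,y) (Or.inr (Or.inl rfl)) s(y,v₁) (Or.inr (Or.inr rfl)) s(r,p) (Or.inr (Or.inr rfl)) s(q,r) (Or.inr (Or.inl rfl)) hA12), (hd_row s(x,y) (Or.inr (Or.inl rfl)) s(y,v₁) (Or.inr (Or.inr rfl)) s(r,p) (Or.inr (Or.inr rfl)) s(r,p) (Or.inr (Or.inr rfl)) hA12), (hd_row s(x,y) (Or.inr (Or.inl rfl)) s(y,v₁) (Or.inr (Or.inr rfl))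 s(r,p) (Or.inr (Or.inr rfl)) s(p,q) (Or.inl rfl) hA12), (hd_row s(x,y) (Or.inr (Or.inl rfl)) s(v₁,x) (Or.inl rfl) s(r,p) (Or.inr (Or.inr rfl)) s(p,q) (Or.inl rfl) hA01.symm)⟩
    refine List.nodup_cons.mpr ⟨?_, ?_⟩
    · simp only [List.mem_cons, List.not_mem_nil, or_false]
      push_neg
      exact ⟨(hd_col s(x,y) (Or.inr (Or.inl rfl)) s(x,y) (Or.inr (Or.inl rfl)) s(p,q) (Or.inl rfl) s(q,r) (Or.inr (Or.inl rfl)) hB01), (hd_row s(x,y) (Or.inr (Or.inl rfl)) s(y,v₁) (Or.inr (Or.inr rfl)) s(p,q) (Or.inl rfl) s(q,r) (Or.inr (Or.inl rfl)) hA12), (hd_row s(x,y) (Or.inr (Or.inl rfl)) s(y,v₁) (Or.inr (Or.inr rfl)) s(p,q) (Or.inl rfl) s(r,p) (Or.inr (Or.inr rfl)) hA12), (hd_row s(x,y) (Or.inr (Or.inl rfl)) s(y,v₁) (Or.inr (Or.inr rfl)) s(p,q) (Or.inl rfl) s(p,q) (Or.inl rfl) hA12), (hd_row s(x,y) (Or.inr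 (Or.inl rfl)) s(v₁,x) (Or.inl rfl) s(p,q) (Or.inl rfl) s(p,q) (Or.inl rfl) hA01.symm)⟩
    refine List.nodup_cons.mpr ⟨?_, ?_⟩
    · simp only [List.mem_cons, List.not_mem_nil, or_false]
      push_neg
      exact ⟨(hd_row s(x,y) (Or.inr (Or.inl rfl)) s(y,v₁) (Or.inr (Or.inr rfl)) s(q,r) (Or.inr (Or.inl rfl)) s(q,r) (Or.inr (Or.inl rfl)) hA12), (hd_row s(x,y) (Or.inr (Or.inl rfl)) s(y,v₁) (Or.inr (Or.inr rfl)) s(q,r) (Or.inr (Or.inl rfl)) s(r,p) (Or.inr (Or.inr rfl)) hA12), (hd_row s(x,y) (Or.inr (Or.inl rfl)) s(y,v₁) (Or.inr (Or.inr rfl)) s(q,r) (Or.inr (Or.inl rfl)) s(p,q) (Or.inl rfl) hA12), (hd_row s(x,y) (Or.inr (Or.inl rfl)) s(v₁,x) (Or.inl rfl) s(q,r) (Or.inr (Or.inl rfl)) s(p,q) (Or.inl rfl) hA01.symm)⟩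
    refine List.nodup_cons.mpr ⟨?_, ?_⟩
    · simp only [List.mem_cons, List.not_mem_nil, or_false]
      push_neg
      exact ⟨(hd_col s(y,v₁) (Or.inr (Or.inr rfl)) s(y,v₁) (Or.inr (Or.inr rfl)) s(q,r) (Or.inr (Or.inl rfl)) s(r,p) (Or.inr (Or.inr rfl)) hB12), (hd_col s(y,v₁) (Or.inr (Or.inr rfl)) s(y,v₁) (Or.inr (Or.inr rfl)) s(q,r) (Or.inr (Or.inl rfl)) s(p,q) (Or.inl rfl) hB01.symm), (hd_row s(y,v₁) (Or.inr (Or.inr rfl)) s(v₁,x) (Or.inl rfl) s(q,r) (Or.inr (Or.inl rfl)) s(p,q) (Or.inl rfl) hA02.symm)⟩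
    refine List.nodup_cons.mpr ⟨?_, ?_⟩
    · simp only [List.mem_cons, List.not_mem_nil, or_false]
      push_neg
      exact ⟨(hd_col s(y,v₁) (Or.inr (Or.inr rfl)) s(y,v₁) (Or.inr (Or.inr rfl)) s(r,p) (Or.inr (Or.inr rfl)) s(p,q) (Or.inl rfl) hB02.symm), (hd_row s(y,v₁) (Or.inr (Or.inr rfl)) s(v₁,x) (Or.inl rfl) s(r,p) (Or.inr (Or.inr rfl)) s(p,q) (Or.inl rfl) hA02.symm)⟩
    refine List.nodup_cons.mpr ⟨?_, ?_⟩
    · simp only [List.mem_cons, List.not_mem_nil, or_false]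
      push_neg
      exact (hd_row s(y,v₁) (Or.inr (Or.inr rfl)) s(v₁,x) (Or.inl rfl) s(p,q) (Or.inl rfl) s(p,q) (Or.inl rfl) hA02.symm)
    exact List.nodup_singleton _
  have he0 : s((⟨fromEdgeSet ((T.edgeSet ∪ {s(y,v₁), s(r,p)}) \ {s(v₁,x), s(p,q)}), hmf s(v₁,x) (Or.inl rfl) s(p,q) (Or.inl rfl)⟩ : {F : SimpleGraph α // IsMaximalForest G F}), (⟨fromEdgeSet ((T.edgeSet ∪ {s(y,v₁), s(r,p)}) \ {s(v₁,x), s(q,r)}), hmf s(v₁,x) (Or.inl rfl) s(q,r) (Or.inr (Or.inl rfl))⟩ : {F : SimpleGraph α // IsMaximalForest G F})) ∉ ((Walk.cons (hcol s(v₁,x) (Or.inl rfl) s(q,r) (Or.inr (Or.inl rfl)) s(r,p) (Or.inr (Or.inr rfl)) hB12) (Walk.cons (hrow s(v₁,x) (Or.inl rfl) s(x,y) (Or.inr (Or.inl rfl)) s(r,p) (Or.inr (Or.inr rfl)) hA01) (Walk.cons (hcol s(x,y) (Or.inr (Or.inl rfl)) s(r,p) (Or.inr (Or.inr rfl)) s(p,q)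 (Or.inl rfl) hB02.symm) (Walk.cons (hcol s(x,y) (Or.inr (Or.inl rfl)) s(p,q) (Or.inl rfl) s(q,r) (Or.inr (Or.inl rfl)) hB01) (Walk.cons (hrow s(x,y) (Or.inr (Or.inl rfl)) s(y,v₁) (Or.inr (Or.inr rfl)) s(q,r) (Or.inr (Or.inl rfl)) hA12) (Walk.cons (hcol s(y,v₁) (Or.inr (Or.inr rfl)) s(q,r) (Or.inr (Or.inl rfl)) s(r,p) (Or.inr (Or.inr rfl)) hB12) (Walk.cons (hcol s(y,v₁) (Or.inr (Or.inr rfl)) s(r,p) (Or.inr (Or.inr rfl)) s(p,q) (Or.inl rfl) hB02.symm) (Walk.cons (hrow s(y,v₁) (Or.inr (Or.inr rfl)) s(v₁,x) (Or.inl rfl) s(p,q) (Or.inl rfl) hA02.symm) Walk.nil))))))))).edges := by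
    simp only [Walk.edges_cons, Walk.edges_nil, List.mem_cons, List.not_mem_nil, or_false]
    push_neg
    exact ⟨(fun h => by
      rcases Sym2.eq_iff.mp h with ⟨h1, h2⟩ | ⟨h1, h2⟩
      · exact absurd h1 (hd_col s(v₁,x) (Or.inl rfl) s(v₁,x) (Or.inl rfl) s(p,q) (Or.inl rfl) s(q,r) (Or.inr (Or.inl rfl)) hB01)
      · exact absurd h1 (hd_col s(v₁,x) (Or.inl rfl) s(v₁,x) (Or.inl rfl) s(p,q) (Or.inl rfl) s(r,p) (Or.inr (Or.inr rfl)) hB02)),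
      (fun h => by
      rcases Sym2.eq_iff.mp h with ⟨h1, h2⟩ | ⟨h1, h2⟩
      · exact absurd h1 (hd_col s(v₁,x) (Or.inl rfl) s(v₁,x) (Or.inl rfl) s(p,q) (Or.inl rfl) s(r,p) (Or.inr (Or.inr rfl)) hB02)
      · exact absurd h1 (hd_row s(v₁,x) (Or.inl rfl) s(x,y) (Or.inr (Or.inl rfl)) s(p,q) (Or.inl rfl) s(r,p) (Or.inr (Or.inr rfl)) hA01)),
      (fun h => by
      rcases Sym2.eq_iff.mp h with ⟨h1, h2⟩ | ⟨h1, h2⟩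
      · exact absurd h1 (hd_row s(v₁,x) (Or.inl rfl) s(x,y) (Or.inr (Or.inl rfl)) s(p,q) (Or.inl rfl) s(r,p) (Or.inr (Or.inr rfl)) hA01)
      · exact absurd h1 (hd_row s(v₁,x) (Or.inl rfl) s(x,y) (Or.inr (Or.inl rfl)) s(p,q) (Or.inl rfl) s(p,q) (Or.inl rfl) hA01)),
      (fun h => by
      rcases Sym2.eq_iff.mp h with ⟨h1, h2⟩ | ⟨h1, h2⟩
      · exact absurd h1 (hd_row s(v₁,x) (Or.inl rfl) s(x,y) (Or.inr (Or.inl rfl)) s(p,q) (Or.inl rfl) s(p,q) (Or.inl rfl) hA01)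
      · exact absurd h1 (hd_row s(v₁,x) (Or.inl rfl) s(x,y) (Or.inr (Or.inl rfl)) s(p,q) (Or.inl rfl) s(q,r) (Or.inr (Or.inl rfl)) hA01)),
      (fun h => by
      rcases Sym2.eq_iff.mp h with ⟨h1, h2⟩ | ⟨h1, h2⟩
      · exact absurd h1 (hd_row s(v₁,x) (Or.inl rfl) s(x,y) (Or.inr (Or.inl rfl)) s(p,q) (Or.inl rfl) s(q,r) (Or.inr (Or.inl rfl)) hA01)
      · exact absurd h1 (hd_row s(v₁,x) (Or.inl rfl) s(y,v₁) (Or.inr (Or.inr rfl)) s(p,q) (Or.inl rfl) s(q,r) (Or.inr (Or.inl rfl)) hA02)),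
      (fun h => by
      rcases Sym2.eq_iff.mp h with ⟨h1, h2⟩ | ⟨h1, h2⟩
      · exact absurd h1 (hd_row s(v₁,x) (Or.inl rfl) s(y,v₁) (Or.inr (Or.inr rfl)) s(p,q) (Or.inl rfl) s(q,r) (Or.inr (Or.inl rfl)) hA02)
      · exact absurd h1 (hd_row s(v₁,x) (Or.inl rfl) s(y,v₁) (Or.inr (Or.inr rfl)) s(p,q) (Or.inl rfl) s(r,p) (Or.inr (Or.inr rfl)) hA02)),
      (fun h => by
      rcases Sym2.eq_iff.mp h with ⟨h1, h2⟩ | ⟨h1, h2⟩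
      · exact absurd h1 (hd_row s(v₁,x) (Or.inl rfl) s(y,v₁) (Or.inr (Or.inr rfl)) s(p,q) (Or.inl rfl) s(r,p) (Or.inr (Or.inr rfl)) hA02)
      · exact absurd h1 (hd_row s(v₁,x) (Or.inl rfl) s(y,v₁) (Or.inr (Or.inr rfl)) s(p,q) (Or.inl rfl) s(p,q) (Or.inl rfl) hA02)),
      (fun h => by
      rcases Sym2.eq_iff.mp h with ⟨h1, h2⟩ | ⟨h1, h2⟩
      · exact absurd h1 (hd_row s(v₁,x) (Or.inl rfl) s(y,v₁) (Or.inr (Or.inr rfl)) s(p,q) (Or.inl rfl) s(p,q) (Or.inl rfl) hA02)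
      · exact absurd h2 (hd_row s(v₁,x) (Or.inl rfl) s(y,v₁) (Or.inr (Or.inr rfl)) s(q,r) (Or.inr (Or.inl rfl)) s(p,q) (Or.inl rfl) hA02))⟩
  have hCyc : (Walk.cons (hcol s(v₁,x) (Or.inl rfl) s(p,q) (Or.inl rfl) s(q,r) (Or.inr (Or.inl rfl)) hB01) (Walk.cons (hcol s(v₁,x) (Or.inl rfl) s(q,r) (Or.inr (Or.inl rfl)) s(r,p) (Or.inr (Or.inr rfl)) hB12) (Walk.cons (hrow s(v₁,x) (Or.inl rfl) s(x,y) (Or.inr (Or.inl rfl)) s(r,p) (Or.inr (Or.inr rfl)) hA01) (Walk.cons (hcol s(x,y) (Or.inr (Or.inl rfl)) s(r,p) (Or.inr (Or.inr rfl)) s(p,q) (Or.inl rfl) hB02.symm) (Walk.cons (hcol s(x,y) (Or.inr (Or.inl rfl)) s(p,q) (Or.inl rfl) s(q,r) (Or.inr (Or.inl rfl)) hB01) (Walk.cons (hrow s(x,y) (Or.inr (Or.inl rfl)) s(y,v₁) (Or.inr (Or.inr rfl)) s(q,r) (Or.inr (Or.inl rfl)) hA12) (Walk.cons (hcol s(y,v₁)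 (Or.inr (Or.inr rfl)) s(q,r) (Or.inr (Or.inl rfl)) s(r,p) (Or.inr (Or.inr rfl)) hB12) (Walk.cons (hcol s(y,v₁) (Or.inr (Or.inr rfl)) s(r,p) (Or.inr (Or.inr rfl)) s(p,q) (Or.inl rfl) hB02.symm) (Walk.cons (hrow s(y,v₁) (Or.inr (Or.inr rfl)) s(v₁,x) (Or.inl rfl) s(p,q) (Or.inl rfl) hA02.symm) Walk.nil))))))))).IsCycle :=
    Path.cons_isCycle ⟨(Walk.cons (hcol s(v₁,x) (Or.inl rfl) s(q,r) (Or.inr (Or.inl rfl)) s(r,p) (Or.inr (Or.inr rfl)) hB12) (Walk.cons (hrow s(v₁,x) (Or.inl rfl) s(x,y) (Or.inr (Or.inl rfl)) s(r,p) (Or.inr (Or.inr rfl)) hA01) (Walk.cons (hcol s(x,y) (Or.inr (Or.inl rfl)) s(r,p) (Or.inr (Or.inr rfl)) s(p,q) (Or.inl rfl) hB02.symm) (Walk.cons (hcol s(x,y) (Or.inr (Or.inl rfl)) s(p,q) (Or.inl rfl) s(q,r) (Or.inr (Or.inl rfl)) hB01) (Walk.cons (hrow s(x,y) (Or.inr (Or.inl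 rfl)) s(y,v₁) (Or.inr (Or.inr rfl)) s(q,r) (Or.inr (Or.inl rfl)) hA12) (Walk.cons (hcol s(y,v₁) (Or.inr (Or.inr rfl)) s(q,r) (Or.inr (Or.inl rfl)) s(r,p) (Or.inr (Or.inr rfl)) hB12) (Walk.cons (hcol s(y,v₁) (Or.inr (Or.inr rfl)) s(r,p) (Or.inr (Or.inr rfl)) s(p,q) (Or.inl rfl) hB02.symm) (Walk.cons (hrow s(y,v₁) (Or.inr (Or.inr rfl)) s(v₁,x) (Or.inl rfl) s(p,q) (Or.inl rfl) hA02.symm) Walk.nil)))))))), hp8⟩ (hcol s(v₁,x) (Or.inl rfl) s(p,q) (Or.inl rfl) s(q,r) (Or.inr (Or.inl rfl)) hB01) he0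
  obtain ⟨t, ht⟩ := clique_of_cycle (Walk.cons (hcol s(v₁,x) (Or.inl rfl) s(p,q) (Or.inl rfl) s(q,r) (Or.inr (Or.inl rfl)) hB01) (Walk.cons (hcol s(v₁,x) (Or.inl rfl) s(q,r) (Or.inr (Or.inl rfl)) s(r,p) (Or.inr (Or.inr rfl)) hB12) (Walk.cons (hrow s(v₁,x) (Or.inl rfl) s(x,y) (Or.inr (Or.inl rfl)) s(r,p) (Or.inr (Or.inr rfl)) hA01) (Walk.cons (hcol s(x,y) (Or.inr (Or.inl rfl)) s(r,p) (Or.inr (Or.inr rfl)) s(p,q) (Or.inl rfl) hB02.symm) (Walk.cons (hcol s(x,y) (Or.inr (Or.inl rfl)) s(p,q) (Or.inl rfl) s(q,r) (Or.inr (Or.inl rfl)) hB01) (Walk.cons (hrow s(x,y) (Or.inr (Or.inl rfl)) s(y,v₁) (Or.inr (Or.inr rfl)) s(q,r) (Or.inr (Or.inl rfl)) hA12) (Walk.cons (hcol s(y,v₁) (Or.inr (Or.inr rfl)) s(q,r) (Or.inr (Or.inl rfl)) s(r,p) (Or.inr (Or.inr rfl)) hB12) (Walk.cons (hcol s(y,v₁)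 (Or.inr (Or.inr rfl)) s(r,p) (Or.inr (Or.inr rfl)) s(p,q) (Or.inl rfl) hB02.symm) (Walk.cons (hrow s(y,v₁) (Or.inr (Or.inr rfl)) s(v₁,x) (Or.inl rfl) s(p,q) (Or.inl rfl) hA02.symm) Walk.nil))))))))) hCyc
  have hlen : (Walk.cons (hcol s(v₁,x) (Or.inl rfl) s(p,q) (Or.inl rfl) s(q,r) (Or.inr (Or.inl rfl)) hB01) (Walk.cons (hcol s(v₁,x) (Or.inl rfl) s(q,r) (Or.inr (Or.inl rfl)) s(r,p) (Or.inr (Or.inr rfl)) hB12) (Walk.cons (hrow s(v₁,x) (Or.inl rfl) s(x,y) (Or.inr (Or.inl rfl)) s(r,p) (Or.inr (Or.inr rfl)) hA01) (Walk.cons (hcol s(x,y) (Or.inr (Or.inl rfl)) s(r,p) (Or.inr (Or.inr rfl)) s(p,q) (Or.inl rfl) hB02.symm) (Walk.cons (hcol s(x,y) (Or.inr (Or.inl rfl)) s(p,q) (Or.inl rfl) s(q,r) (Or.inr (Or.inl rfl)) hB01) (Walk.cons (hrow s(x,y) (Or.inr (Or.inl rfl)) s(y,v₁) (Or.inr (Or.inr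 rfl)) s(q,r) (Or.inr (Or.inl rfl)) hA12) (Walk.cons (hcol s(y,v₁) (Or.inr (Or.inr rfl)) s(q,r) (Or.inr (Or.inl rfl)) s(r,p) (Or.inr (Or.inr rfl)) hB12) (Walk.cons (hcol s(y,v₁) (Or.inr (Or.inr rfl)) s(r,p) (Or.inr (Or.inr rfl)) s(p,q) (Or.inl rfl) hB02.symm) (Walk.cons (hrow s(y,v₁) (Or.inr (Or.inr rfl)) s(v₁,x) (Or.inl rfl) s(p,q) (Or.inl rfl) hA02.symm) Walk.nil))))))))).edges.length = 9 := by
    rw [Walk.length_edges]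
    simp [Walk.length_cons, Walk.length_nil]
  rw [hlen] at ht
  exact ⟨t, ht⟩

end K9aux

/-- If `G` contains two edge-disjoint triangles, then `F(F(G))` contains `K₉`. -/
theorem two_triangles_K9 (G : SimpleGraph V) (v₁ v₂ : V)
    (c₁ : G.Walk v₁ v₁) (c₂ : G.Walk v₂ v₂)
    (h₁ : c₁.IsCycle) (hl₁ : c₁.length = 3)
    (h₂ : c₂.IsCycle) (hl₂ : c₂.length = 3)
    (hdisj : ∀ e : Sym2 V, e ∈ c₁.edges → e ∉ c₂.edges) :
    ∃ t, (forestGraph (forestGraph G)).IsNClique 9 t := by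
  exact K9aux.main G v₁ v₂ c₁ c₂ h₁ hl₁ h₂ hl₂ hdisj
end

section
/- If a graph G has infinitely many cycles, with |𝔠(G)| = β an infinite cardinal, then the cyclomatic number of G equals β; that is, for any maximal forest F of G, |E(G) \ E(F)| = β. -/
open Cardinal

variable {V : Type*}

universe u

open SimpleGraph

section Aux
variable {W : Type u}

lemma path_end_nbrs {G : SimpleGraph W} : ∀ {u v : W} (p : G.Walk u v), p.IsPath → u ≠ v →
    ∃ y, s(v, y) ∈ p.edges ∧ {x | s(v, x) ∈ p.edges} = {y} := by
  intro u v p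
  induction p with
  | nil => intro _ h; exact absurd rfl h
  | @cons u a v h q ih =>
    intro hp huv
    have hq : q.IsPath := hp.of_cons
    by_cases hav : a = v
    · subst hav
      have hqnil : q = Walk.nil := Walk.isPath_iff_eq_nil.mp hq
      subst hqnil
      refine ⟨u, by simp [Sym2.eq_swap], ?_⟩
      ext x
      simp only [Walk.edges_cons, Walk.edges_nil, List.mem_singleton, Set.mem_setOf_eq,
        Set.mem_singleton_iff, List.not_mem_nil, or_false]
      rw [Sym2.eq_iff]
      constructor
      · rintro (⟨h1, h2⟩ | ⟨h1, h2⟩)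
        · exact absurd h1.symm huv
        · exact h2
      · rintro rfl; right; exact ⟨rfl, rfl⟩
    · obtain ⟨y, hy, hset⟩ := ih hq hav
      have hvu : v ≠ u := by
        rintro rfl
        have h2 : v ∉ q.support ∧ q.support.Nodup := by
          have := hp.support_nodup
          rwa [Walk.support_cons, List.nodup_cons] at this
        exact h2.1 q.end_mem_support
      refine ⟨y, by simp [hy], ?_⟩
      ext x
      simp only [Walk.edges_cons, List.mem_cons, Set.mem_setOf_eq, Set.mem_singleton_iff]
      constructor
      · rintro (hx | hx)
        · rw [Sym2.eq_iff] at hx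
          rcases hx with ⟨h1, h2⟩ | ⟨h1, h2⟩
          · exact absurd h1 hvu
          · exact absurd h1.symm hav
        · have : x ∈ {x | s(v, x) ∈ q.edges} := hx
          rw [hset] at this
          exact this
      · intro hx
        right
        have : x ∈ {x | s(v, x) ∈ q.edges} := by rw [hset]; exact hx
        exact this

lemma cycle_start_nbrs {G : SimpleGraph W} {v : W} (c : G.Walk v v) (hc : c.IsCycle) :
    ∃ y z, y ≠ z ∧ {x | s(v, x) ∈ c.edges} = {y, z} := by
  cases c with
  | nil => exact absurd rfl hc.ne_nil
  | @cons _ a _ h q =>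
    rw [Walk.cons_isCycle_iff] at hc
    obtain ⟨y, hy, hset⟩ := path_end_nbrs q hc.1 h.ne'
    refine ⟨a, y, ?_, ?_⟩
    · rintro rfl; exact hc.2 hy
    · ext x
      simp only [Walk.edges_cons, List.mem_cons, Set.mem_setOf_eq, Set.mem_insert_iff,
        Set.mem_singleton_iff]
      constructor
      · rintro (hx | hx)
        · rw [Sym2.eq_iff] at hx
          rcases hx with ⟨h1, h2⟩ | ⟨h1, h2⟩
          · exact Or.inl h2
          · exact absurd h1 h.ne
        · right
          have : x ∈ {x | s(v, x) ∈ q.edges} := hx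
          rwa [hset] at this
      · rintro (rfl | rfl)
        · exact Or.inl rfl
        · right
          have : x ∈ {x | s(v, x) ∈ q.edges} := by rw [hset]; rfl
          exact this

lemma cycle_nbrs [DecidableEq W] {G : SimpleGraph W} {v : W} (c : G.Walk v v) (hc : c.IsCycle) (w : W) :
    {x | s(w, x) ∈ c.edges} = ∅ ∨ ∃ y z, y ≠ z ∧ {x | s(w, x) ∈ c.edges} = {y, z} := by
  by_cases hw : w ∈ c.support
  · right
    obtain ⟨y, z, hyz, hs⟩ := cycle_start_nbrs (c.rotate w hw) (hc.rotate hw)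
    refine ⟨y, z, hyz, ?_⟩
    rw [← hs]
    ext x
    simp only [Set.mem_setOf_eq, (c.rotate_edges w hw).mem_iff]
  · left
    ext x
    simp only [Set.mem_setOf_eq, Set.mem_empty_iff_false, iff_false]
    intro hx
    exact hw (c.fst_mem_support_of_mem_edges hx)

lemma exists_leaf [DecidableEq W] {H : SimpleGraph W} (hac : H.IsAcyclic)
    (hfin : H.edgeSet.Finite) {a b : W} (hab : H.Adj a b) :
    ∃ w y, {x | H.Adj w x} = {y} := by
  classical
  set N : Set ℕ := {n | ∃ (x y : W) (p : H.Walk x y), p.IsPath ∧ p.length = n} with hN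
  have hbdd : BddAbove N := by
    refine ⟨hfin.toFinset.card, ?_⟩
    rintro n ⟨x, y, p, hp, rfl⟩
    have h1 : p.edges.toFinset.card = p.edges.length := List.toFinset_card_of_nodup hp.isTrail.edges_nodup
    rw [← Walk.length_edges, ← h1]
    apply Finset.card_le_card
    intro e he
    rw [List.mem_toFinset] at he
    rw [Set.Finite.mem_toFinset]
    exact p.edges_subset_edgeSet he
  have h1N : 1 ∈ N := ⟨a, b, Walk.cons hab Walk.nil, by simp [hab.ne], by simp⟩
  have hne : N.Nonempty := ⟨1, h1N⟩
  have hmem : sSup N ∈ N := Nat.sSup_mem hne hbdd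
  obtain ⟨x, y, p, hp, hlen⟩ := hmem
  have h1le : 1 ≤ sSup N := le_csSup hbdd h1N
  have hxy : x ≠ y := by
    rintro rfl
    rw [Walk.isPath_iff_eq_nil] at hp
    subst hp
    simp at hlen
    omega
  obtain ⟨y0, hy0, hset⟩ := path_end_nbrs p hp hxy
  refine ⟨y, y0, ?_⟩
  ext u
  simp only [Set.mem_setOf_eq, Set.mem_singleton_iff]
  constructor
  · intro hadj
    by_cases hu : u ∈ p.support
    · -- build a would-be cycle; acyclicity forces the edge to be in p
      have hr : (p.dropUntil u hu).IsPath := hp.dropUntil hu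
      have hnc := hac (Walk.cons hadj (p.dropUntil u hu))
      rw [Walk.cons_isCycle_iff] at hnc
      push_neg at hnc
      have hmem : s(y, u) ∈ (p.dropUntil u hu).edges := hnc hr
      have : s(y, u) ∈ p.edges := Walk.edges_dropUntil_subset p hu hmem
      have : u ∈ {x | s(y, x) ∈ p.edges} := this
      rwa [hset] at this
    · exfalso
      have hu' : u ∉ p.reverse.support := by rwa [Walk.support_reverse, List.mem_reverse]
      have hp' : (Walk.cons hadj.symm p.reverse).IsPath := (hp.reverse).cons hu'
      have : p.length + 1 ∈ N := ⟨u, x, Walk.cons hadj.symm p.reverse, hp', by simp⟩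
      have := le_csSup hbdd this
      omega
  · rintro rfl
    exact (H.mem_edgeSet).mp (p.edges_subset_edgeSet hy0)

lemma not_singleton_symmDiff {α : Type*} {X Y : Set α}
    (hX : X = ∅ ∨ ∃ a b, a ≠ b ∧ X = {a, b}) (hY : Y = ∅ ∨ ∃ a b, a ≠ b ∧ Y = {a, b})
    (y : α) : (X \ Y ∪ Y \ X) ≠ {y} := by
  have hXf : X.Finite := by
    rcases hX with rfl | ⟨a, b, _, rfl⟩
    · exact Set.finite_empty
    · exact (Set.finite_singleton b).insert a
  have hYf : Y.Finite := by
    rcases hY with rfl | ⟨a, b, _, rfl⟩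
    · exact Set.finite_empty
    · exact (Set.finite_singleton b).insert a
  have hXe : Even X.ncard := by
    rcases hX with rfl | ⟨a, b, hab, rfl⟩
    · simp
    · rw [Set.ncard_pair hab]; exact even_two
  have hYe : Even Y.ncard := by
    rcases hY with rfl | ⟨a, b, hab, rfl⟩
    · simp
    · rw [Set.ncard_pair hab]; exact even_two
  intro hsing
  have d1 : Disjoint (X \ Y) (X ∩ Y) := by
    rw [Set.disjoint_iff_inter_eq_empty]
    ext z; simp; tauto
  have d2 : Disjoint (Y \ X) (Y ∩ X) := by
    rw [Set.disjoint_iff_inter_eq_empty]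
    ext z; simp; tauto
  have d3 : Disjoint (X \ Y) (Y \ X) := by
    rw [Set.disjoint_iff_inter_eq_empty]
    ext z; simp; tauto
  have h1 : (X \ Y).ncard + (X ∩ Y).ncard = X.ncard := by
    rw [← Set.ncard_union_eq d1 (hXf.diff) (hXf.inter_of_left _), Set.diff_union_inter]
  have h2 : (Y \ X).ncard + (Y ∩ X).ncard = Y.ncard := by
    rw [← Set.ncard_union_eq d2 (hYf.diff) (hYf.inter_of_left _), Set.diff_union_inter]
  have h3 : (X ∩ Y).ncard = (Y ∩ X).ncard := by rw [Set.inter_comm]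
  have h4 : (X \ Y ∪ Y \ X).ncard = (X \ Y).ncard + (Y \ X).ncard :=
    Set.ncard_union_eq d3 (hXf.diff) (hYf.diff)
  have h5 : (X \ Y ∪ Y \ X).ncard = 1 := by rw [hsing, Set.ncard_singleton]
  obtain ⟨m, hm⟩ := hXe
  obtain ⟨n, hn⟩ := hYe
  omega

lemma cycle_eq_of_inter_eq {G F : SimpleGraph W} (hF : IsMaximalForest G F)
    {s s' : Set (Sym2 W)} (hs : s ∈ cycleSet G) (hs' : s' ∈ cycleSet G)
    (hinter : s ∩ (G.edgeSet \ F.edgeSet) = s' ∩ (G.edgeSet \ F.edgeSet)) : s = s' := by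
  classical
  by_contra hne
  obtain ⟨v, c, hc, rfl⟩ := hs
  obtain ⟨v', c', hc', rfl⟩ := hs'
  set A : Set (Sym2 W) := {e | e ∈ c.edges} with hA
  set B : Set (Sym2 W) := {e | e ∈ c'.edges} with hB
  set D : Set (Sym2 W) := A \ B ∪ B \ A with hD
  have hAG : A ⊆ G.edgeSet := fun e he => c.edges_subset_edgeSet he
  have hBG : B ⊆ G.edgeSet := fun e he => c'.edges_subset_edgeSet he
  have hDF : D ⊆ F.edgeSet := by
    rintro e (⟨he1, he2⟩ | ⟨he1, he2⟩)
    · by_contra heF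
      have : e ∈ A ∩ (G.edgeSet \ F.edgeSet) := ⟨he1, hAG he1, heF⟩
      rw [hinter] at this
      exact he2 this.1
    · by_contra heF
      have : e ∈ B ∩ (G.edgeSet \ F.edgeSet) := ⟨he1, hBG he1, heF⟩
      rw [← hinter] at this
      exact he2 this.1
  have hDne : D.Nonempty := by
    rw [Set.nonempty_iff_ne_empty]
    intro hD0
    apply hne
    have h1 : A \ B = ∅ ∧ B \ A = ∅ := by
      constructor <;> [skip; skip] <;>
        · rw [← Set.subset_empty_iff, ← hD0, hD]
          first
          | exact Set.subset_union_left
          | exact Set.subset_union_right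
    exact Set.Subset.antisymm (Set.diff_eq_empty.mp h1.1) (Set.diff_eq_empty.mp h1.2)
  have hDfin : D.Finite :=
    ((List.finite_toSet c.edges).diff).union ((List.finite_toSet c'.edges).diff)
  have hHle : fromEdgeSet D ≤ F := by
    intro x y hxy
    rw [fromEdgeSet_adj] at hxy
    exact (mem_edgeSet F).mp (hDF hxy.1)
  have hHac : (fromEdgeSet D).IsAcyclic := by
    intro u w hw
    have hsub : ∀ e ∈ w.edges, e ∈ F.edgeSet := fun e he =>
      edgeSet_mono hHle (w.edges_subset_edgeSet he)
    exact hF.2.1 (w.transfer F hsub) (hw.transfer hsub)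
  have hHfin : (fromEdgeSet D).edgeSet.Finite := by
    rw [edgeSet_fromEdgeSet]
    exact hDfin.diff
  obtain ⟨e0, he0⟩ := hDne
  have he0F : e0 ∈ F.edgeSet := hDF he0
  obtain ⟨a, b, hab⟩ : ∃ a b, (fromEdgeSet D).Adj a b := by
    revert he0 he0F
    refine Sym2.ind (fun a b he0 he0F => ?_) e0
    have hnd : a ≠ b := fun h => (F.not_isDiag_of_mem_edgeSet he0F) (by rw [h]; exact rfl)
    exact ⟨a, b, (fromEdgeSet_adj _).mpr ⟨he0, hnd⟩⟩
  obtain ⟨w, y, hwy⟩ := exists_leaf hHac hHfin hab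
  have hD0 : {x | (fromEdgeSet D).Adj w x} = {x | s(w, x) ∈ D} := by
    ext x
    simp only [Set.mem_setOf_eq, fromEdgeSet_adj, and_iff_left_iff_imp]
    intro hx hwx
    exact (F.not_isDiag_of_mem_edgeSet (hDF hx)) (by rw [hwx]; exact rfl)
  have hsplit : {x | s(w, x) ∈ D} =
      ({x | s(w, x) ∈ c.edges} \ {x | s(w, x) ∈ c'.edges}) ∪
      ({x | s(w, x) ∈ c'.edges} \ {x | s(w, x) ∈ c.edges}) := by
    ext x
    simp only [hD, Set.mem_union, Set.mem_diff, Set.mem_setOf_eq, hA, hB]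
  exact not_singleton_symmDiff (cycle_nbrs c hc w) (cycle_nbrs c' hc' w) y
    (by rw [← hsplit, ← hD0, hwy])

lemma exists_fund_cycle {G F : SimpleGraph W} (hF : IsMaximalForest G F) {e : Sym2 W}
    (heG : e ∈ G.edgeSet) (heF : e ∉ F.edgeSet) :
    ∃ s ∈ cycleSet G, e ∈ s ∧ ∀ e' ∈ s, e' ∉ F.edgeSet → e' = e := by
  classical
  set F' := F ⊔ fromEdgeSet {e} with hF'def
  have hle : F' ≤ G := by
    apply sup_le hF.1
    intro x y hxy
    rw [fromEdgeSet_adj, Set.mem_singleton_iff] at hxy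
    exact (mem_edgeSet G).mp (hxy.1 ▸ heG)
  have hnediag : ¬ e.IsDiag := G.not_isDiag_of_mem_edgeSet heG
  have heF' : e ∈ F'.edgeSet := by
    rw [hF'def, edgeSet_sup, edgeSet_fromEdgeSet]
    exact Or.inr ⟨rfl, hnediag⟩
  have hF'ne : F' ≠ F := fun h => heF (h ▸ heF')
  have hnac : ¬ F'.IsAcyclic := fun hac => hF'ne (hF.2.2 F' hle hac le_sup_left)
  rw [IsAcyclic] at hnac
  push_neg at hnac
  obtain ⟨v, c, hc⟩ := hnac
  have hec : e ∈ c.edges := by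
    by_contra hec
    have hsub : ∀ e' ∈ c.edges, e' ∈ F.edgeSet := by
      intro e' he'
      have h1 := c.edges_subset_edgeSet he'
      rw [hF'def, edgeSet_sup, edgeSet_fromEdgeSet] at h1
      rcases h1 with h1 | ⟨h1, -⟩
      · exact h1
      · rw [Set.mem_singleton_iff] at h1
        exact absurd (h1 ▸ he') hec
    exact hF.2.1 (c.transfer F hsub) (hc.transfer hsub)
  have hsubG : ∀ e' ∈ c.edges, e' ∈ G.edgeSet := fun e' he' =>
    edgeSet_mono hle (c.edges_subset_edgeSet he')
  refine ⟨{e' | e' ∈ (c.transfer G hsubG).edges},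
    ⟨v, c.transfer G hsubG, hc.transfer hsubG, rfl⟩, ?_, ?_⟩
  · show e ∈ (c.transfer G hsubG).edges
    rw [Walk.edges_transfer]
    exact hec
  · intro e' he' he'F
    have he'c : e' ∈ c.edges := by rwa [Walk.edges_transfer] at he'
    have h1 := c.edges_subset_edgeSet he'c
    rw [hF'def, edgeSet_sup, edgeSet_fromEdgeSet] at h1
    rcases h1 with h1 | ⟨h1, -⟩
    · exact absurd h1 he'F
    · rwa [Set.mem_singleton_iff] at h1

end Aux

/-- If `G` has infinitely many cycles, `β` of them, then the cyclomatic number of `G`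
is `β`: for any maximal forest `F`, the number of edges of `G` outside `F` is `β`. -/
theorem cyclomatic_number {W : Type u} (G : SimpleGraph W) (β : Cardinal.{u}) (hβ : ℵ₀ ≤ β)
    (hc : #(cycleSet G) = β) (F : SimpleGraph W) (hF : IsMaximalForest G F) :
    #(G.edgeSet \ F.edgeSet : Set (Sym2 W)) = β := by
  classical
  set S : Set (Sym2 W) := G.edgeSet \ F.edgeSet with hS
  have hfin : ∀ s : cycleSet G, (((↑) : ↥S → Sym2 W) ⁻¹' (s : Set (Sym2 W))).Finite := by
    rintro ⟨s, v, c, hcyc, rfl⟩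
    exact (List.finite_toSet c.edges).preimage (Subtype.coe_injective.injOn)
  have hinj1 : #(cycleSet G) ≤ #(Finset ↥S) := by
    apply mk_le_of_injective (f := fun s => (hfin s).toFinset)
    intro s t hst
    rw [Set.Finite.toFinset_inj] at hst
    apply Subtype.ext
    apply cycle_eq_of_inter_eq hF s.2 t.2
    ext e
    constructor
    · rintro ⟨he1, he2⟩
      have : (⟨e, he2⟩ : ↥S) ∈ (((↑) : ↥S → Sym2 W) ⁻¹' (s : Set (Sym2 W))) := he1
      rw [hst] at this
      exact ⟨this, he2⟩
    · rintro ⟨he1, he2⟩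
      have : (⟨e, he2⟩ : ↥S) ∈ (((↑) : ↥S → Sym2 W) ⁻¹' (t : Set (Sym2 W))) := he1
      rw [← hst] at this
      exact ⟨this, he2⟩
  have hSinf : Infinite ↥S := by
    by_contra h
    have : Finite ↥S := not_infinite_iff_finite.mp h
    have : Fintype ↥S := Fintype.ofFinite _
    have h2 : #(Finset ↥S) < ℵ₀ := lt_aleph0_of_finite _
    rw [hc] at hinj1
    exact absurd ((hβ.trans hinj1).trans_lt h2) (by simp)
  have h1 : β ≤ #↥S := by
    calc β = #(cycleSet G) := hc.symm
    _ ≤ #(Finset ↥S) := hinj1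
    _ = #↥S := mk_finset_of_infinite _
  have h2 : #↥S ≤ β := by
    have hex : ∀ e : ↥S, ∃ s : ↥(cycleSet G),
        (e : Sym2 W) ∈ (s : Set (Sym2 W)) ∧
        ∀ e' ∈ (s : Set (Sym2 W)), e' ∉ F.edgeSet → e' = (e : Sym2 W) := by
      intro e
      obtain ⟨s, hs, hmem, huniq⟩ := exists_fund_cycle hF e.2.1 e.2.2
      exact ⟨⟨s, hs⟩, hmem, huniq⟩
    choose f hf1 hf2 using hex
    have hinj : Function.Injective f := by
      intro e e' heq
      have hmem : (e' : Sym2 W) ∈ (f e : Set (Sym2 W)) := heq ▸ hf1 e'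
      exact (Subtype.ext (hf2 e (e' : Sym2 W) hmem e'.2.2)).symm
    rw [← hc]
    exact mk_le_of_injective hinj
  exact le_antisymm h2 h1
end
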